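/- arXiv:1204.2201 — 10 statements merged into one kernel-verified Lean document; each statement's English description precedes it below -/
import Mathlib

section
/- Let p, q, r, v and ⊞ be five pairwise distinct letters and let e = p⊞rvrvr⊞q. (1) In any equality-free 2-partition of e in which the length-1 string ⊞ is not a selected string, either the length-1 string r is a selected string, or both length-1 strings p and q are selected strings. (2) There exist equality-free 2-partitions P₁ and P₂ of e, neither of which selects ⊞ as a length-1 string, such that P₁ selects the length-1 string r but selects neither p nor q as length-1 strings, and P₂ selects the length-1 strings p and q but does not select r as a length-1 string. -/
/-- `P` is a `K`-partition of the string `w`: a sequence of nonempty strings of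
length at most `K` whose concatenation is `w`. -/
def IsPartition {α : Type*} (K : ℕ) (w : List α) (P : List (List α)) : Prop :=
  P.flatten = w ∧ ∀ p ∈ P, p ≠ [] ∧ p.length ≤ K

/-- A partition is equality-free if no two selected strings at distinct
occurrences are equal. -/
def EqFree {α : Type*} (P : List (List α)) : Prop := P.Pairwise (· ≠ ·)

/-- All 2-partitions of a word. -/
def parts {α : Type*} : List α → List (List (List α))
  | [] => [[]]
  | [a] => [[[a]]]
  | a :: b :: l =>
      ((parts (b :: l)).map ([a] :: ·)) ++ ((parts l).map ([a, b] :: ·))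

lemma shape {α : Type*} (h : List α) (hne : h ≠ []) (hlen : h.length ≤ 2) :
    (∃ x, h = [x]) ∨ ∃ x y, h = [x, y] := by
  match h with
  | [x] => exact Or.inl ⟨x, rfl⟩
  | [x, y] => exact Or.inr ⟨x, y, rfl⟩
  | x :: y :: z :: t => simp at hlen

lemma mem_parts {α : Type*} : ∀ (w : List α) (P), IsPartition 2 w P → P ∈ parts w := by
  intro w
  induction w using parts.induct with
  | case1 =>
    rintro (_ | ⟨h, t⟩) ⟨hf, hm⟩
    · simp [parts]
    · exfalso
      have := (hm h (by simp)).1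
      simp at hf
      exact this hf.1
  | case2 a =>
    rintro (_ | ⟨h, t⟩) ⟨hf, hm⟩
    · simp at hf
    · rcases shape h (hm h (by simp)).1 (hm h (by simp)).2 with ⟨x, rfl⟩ | ⟨x, y, rfl⟩
      · simp at hf
        obtain ⟨rfl, hf⟩ := hf
        have : t = [] := by
          cases t with
          | nil => rfl
          | cons h' t' =>
            exfalso
            have := (hm h' (by simp)).1
            simp at hf
            exact this hf.1
        subst this
        simp [parts]
      · simp at hf
  | case3 a b l ih1 ih2 =>
    rintro (_ | ⟨h, t⟩) ⟨hf, hm⟩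
    · simp at hf
    · rcases shape h (hm h (by simp)).1 (hm h (by simp)).2 with ⟨x, rfl⟩ | ⟨x, y, rfl⟩
      · simp at hf
        obtain ⟨rfl, hf⟩ := hf
        have ht : t ∈ parts (b :: l) := ih1 t ⟨hf, fun p hp => hm p (by simp [hp])⟩
        simp only [parts, List.mem_append, List.mem_map]
        exact Or.inl ⟨t, ht, rfl⟩
      · simp at hf
        obtain ⟨rfl, rfl, hf⟩ := hf
        have ht : t ∈ parts l := ih2 t ⟨hf, fun p hp => hm p (by simp [hp])⟩
        simp only [parts, List.mem_append, List.mem_map]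
        exact Or.inr ⟨t, ht, rfl⟩

theorem stmt_1 {α : Type*} (p q r v plus : α)
    (hpq : p ≠ q) (hpr : p ≠ r) (hpv : p ≠ v) (hpp : p ≠ plus)
    (hqr : q ≠ r) (hqv : q ≠ v) (hqp : q ≠ plus)
    (hrv : r ≠ v) (hrp : r ≠ plus) (hvp : v ≠ plus) :
    (∀ P : List (List α), IsPartition 2 [p, plus, r, v, r, v, r, plus, q] P →
      EqFree P → [plus] ∉ P → ([r] ∈ P ∨ ([p] ∈ P ∧ [q] ∈ P))) ∧
    (∃ P₁ : List (List α), IsPartition 2 [p, plus, r, v, r, v, r, plus, q] P₁ ∧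
      EqFree P₁ ∧ [plus] ∉ P₁ ∧ [r] ∈ P₁ ∧ [p] ∉ P₁ ∧ [q] ∉ P₁) ∧
    (∃ P₂ : List (List α), IsPartition 2 [p, plus, r, v, r, v, r, plus, q] P₂ ∧
      EqFree P₂ ∧ [plus] ∉ P₂ ∧ [p] ∈ P₂ ∧ [q] ∈ P₂ ∧ [r] ∉ P₂) := by
  refine ⟨?_, ?_, ?_⟩
  · intro P hP hEF hplus
    have hm := mem_parts _ _ hP
    simp only [parts, List.map_cons, List.map_nil, List.map_append, List.mem_append,
      List.map_map] at hm
    simp only [List.mem_cons, List.mem_singleton, List.not_mem_nil, or_false] at hm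
    clear hP
    casesm* _ ∨ _ <;> subst_vars <;>
      first
      | (exfalso; apply hplus; simp; done)
      | (refine absurd hEF ?_; simp [EqFree]; done)
      | (simp; done)
  · exact ⟨[[p, plus], [r, v], [r], [v, r], [plus, q]],
      by and_intros <;> simp_all [IsPartition, EqFree, Ne.symm hpq, Ne.symm hpr, Ne.symm hpv,
        Ne.symm hpp, Ne.symm hqr, Ne.symm hqv, Ne.symm hqp, Ne.symm hrv, Ne.symm hrp,
        Ne.symm hvp]⟩
  · exact ⟨[[p], [plus, r], [v, r], [v], [r, plus], [q]],
      by and_intros <;> simp_all [IsPartition, EqFree, Ne.symm hpq, Ne.symm hpr, Ne.symm hpv,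
        Ne.symm hpp, Ne.symm hqr, Ne.symm hqv, Ne.symm hqp, Ne.symm hrv, Ne.symm hrp,
        Ne.symm hvp]⟩
end

section
/- Let φ be a 3SAT(3) instance with clauses c₁,…,c_m and variables x₁,…,x_n. Let Σ consist of pairwise distinct letters x̂_v (one per variable x_v), ĉ_i^j (one per literal occurrence c_i^j), and two further letters ⊟ and ⊞. Let 𝒲 be the multiset consisting of: the clause string ĉ_i^1⊟ĉ_i^2 for each two-literal clause c_i and ĉ_i^1⊟ĉ_i^2⊟ĉ_i^3 for each three-literal clause c_i; for each variable x_v, where c_i^p and c_j^q are its two positive occurrences and c_k^r its negated occurrence, the enforcer string ĉ_i^p ⊞ ĉ_k^r x̂_v ĉ_k^r x̂_v ĉ_k^r ⊞ ĉ_j^q; and the two length-1 forbidden strings ⊟ and ⊞. Then φ is satisfiable if and only if 𝒲 has an equality-free 2-partition. -/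
/-- A `K`-partition of a finite multiset (list) of strings: a choice of a
`K`-partition of each string. -/
def IsMultiPartition {α : Type*} (K : ℕ) (ws : List (List α))
    (Ps : List (List (List α))) : Prop :=
  List.Forall₂ (IsPartition K) ws Ps

/-- The alphabet: one letter `var v` per variable, one letter `lit i j` per
literal occurrence (the `j`-th literal of clause `i`), and the delimiters
`⊟` (minus) and `⊞` (plus). All letters are pairwise distinct by construction. -/
inductive SPLetter (n m : ℕ) where
  | var : Fin n → SPLetter n m
  | lit : Fin m → ℕ → SPLetter n m
  | minus : SPLetter n m
  | plus : SPLetter n m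

/-- All 2-partitions of a string. -/
def allParts {α : Type*} : List α → List (List (List α))
  | [] => [[]]
  | a :: l =>
    ((allParts l).map ([a] :: ·)) ++
      (match l with
       | [] => []
       | b :: l' => (allParts l').map ([a, b] :: ·))

theorem mem_allParts {α : Type*} : ∀ (P : List (List α)) (w : List α),
    IsPartition 2 w P → P ∈ allParts w
  | [], w, h => by
      obtain ⟨h1, _⟩ := h
      simp at h1; subst h1; simp [allParts]
  | p :: P, w, h => by
      obtain ⟨h1, h2⟩ := h
      obtain ⟨hne, hlen⟩ := h2 p (by simp)
      have hP : IsPartition 2 P.flatten P := ⟨rfl, fun q hq => h2 q (by simp [hq])⟩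
      have ih := mem_allParts P P.flatten hP
      subst h1
      match p, hne, hlen with
      | [a], _, _ =>
        show [a] :: P ∈ allParts (a :: P.flatten)
        rw [allParts.eq_def]
        exact List.mem_append_left _ (List.mem_map.mpr ⟨P, ih, rfl⟩)
      | [a, b], _, _ =>
        show [a, b] :: P ∈ allParts (a :: b :: P.flatten)
        rw [allParts.eq_def]
        exact List.mem_append_right _ (List.mem_map.mpr ⟨P, ih, rfl⟩)

theorem enf_concrete : ∀ Q ∈ allParts ([0,4,1,3,1,3,1,4,2] : List (Fin 5)),
    [4] ∉ Q → Q.Nodup → ([1] ∈ Q ∨ ([0] ∈ Q ∧ [2] ∈ Q)) := by decide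

theorem cl3_concrete : ∀ Q ∈ allParts ([0,3,1,3,2] : List (Fin 4)),
    [3] ∉ Q → ([0] ∈ Q ∨ [1] ∈ Q ∨ [2] ∈ Q) := by decide

theorem cl2_concrete : ∀ Q ∈ allParts ([0,2,1] : List (Fin 3)),
    [2] ∉ Q → ([0] ∈ Q ∨ [1] ∈ Q) := by decide

section Transfer
variable {α β : Type*}

theorem part_map (f : α → β) {K : ℕ} {w : List α} {P : List (List α)}
    (h : IsPartition K w P) : IsPartition K (w.map f) (P.map (List.map f)) := by
  obtain ⟨h1, h2⟩ := h
  refine ⟨by rw [← h1, List.map_flatten], ?_⟩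
  intro p hp
  obtain ⟨q, hq, rfl⟩ := List.mem_map.mp hp
  obtain ⟨hne, hlen⟩ := h2 q hq
  exact ⟨by simpa using hne, by simpa using hlen⟩

theorem singleton_mem_map {f : α → β} {P : List (List α)} {b : β}
    (h : [b] ∈ P.map (List.map f)) : ∃ a, f a = b ∧ [a] ∈ P := by
  obtain ⟨q, hq, heq⟩ := List.mem_map.mp h
  match q, hq, heq with
  | [a], hq, heq => exact ⟨a, by simpa using heq, hq⟩

theorem map_inj_of_letters {f : α → β} {S : List α}
    (hinj : ∀ a ∈ S, ∀ b ∈ S, f a = f b → a = b) :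
    ∀ p q : List α, (∀ a ∈ p, a ∈ S) → (∀ a ∈ q, a ∈ S) →
      p.map f = q.map f → p = q
  | [], [], _, _, _ => rfl
  | a :: p, b :: q, hp, hq, h => by
    simp only [List.map_cons, List.cons.injEq] at h
    have := hinj a (hp a (by simp)) b (hq b (by simp)) h.1
    subst this
    rw [map_inj_of_letters hinj p q (fun x hx => hp x (by simp [hx]))
      (fun x hx => hq x (by simp [hx])) h.2]

theorem nodup_map_pieces {f : α → β} {w S : List α} {P : List (List α)}
    (hP : P.flatten = w) (hsub : ∀ a ∈ w, a ∈ S)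
    (hinj : ∀ a ∈ S, ∀ b ∈ S, f a = f b → a = b)
    (hnd : P.Nodup) : (P.map (List.map f)).Nodup := by
  refine hnd.map_on ?_
  intro p hp q hq h
  exact map_inj_of_letters hinj p q
    (fun a ha => hsub a (hP ▸ List.mem_flatten.mpr ⟨p, hp, ha⟩))
    (fun a ha => hsub a (hP ▸ List.mem_flatten.mpr ⟨q, hq, ha⟩)) h

end Transfer

section Keys
variable {α : Type*} [DecidableEq α]

theorem clause2_key {l0 l1 mi : α} (h01 : l0 ≠ l1) (h0m : l0 ≠ mi) (h1m : l1 ≠ mi)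
    {P : List (List α)} (hP : IsPartition 2 [l0, mi, l1] P) (hm : [mi] ∉ P) :
    [l0] ∈ P ∨ [l1] ∈ P := by
  classical
  set f : α → Fin 3 := fun a => if a = l0 then 0 else if a = l1 then 1 else 2 with hf
  have h9 : ([l0, mi, l1].map f) = [0, 2, 1] := by
    simp [hf, h01, h01.symm, h0m.symm, h1m.symm]
  have hQ : IsPartition 2 ([0,2,1] : List (Fin 3)) (P.map (List.map f)) :=
    h9 ▸ part_map f hP
  have h2 : [(2 : Fin 3)] ∉ P.map (List.map f) := by
    intro h
    obtain ⟨a, hfa, haP⟩ := singleton_mem_map h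
    have haw : a ∈ [l0, mi, l1] := by
      rw [← hP.1]; exact List.mem_flatten.mpr ⟨[a], haP, by simp⟩
    have : a = mi := by
      simp only [hf] at hfa
      split_ifs at hfa with e1 e2
      · exact absurd hfa (by decide)
      · exact absurd hfa (by decide)
      · simp only [List.mem_cons, List.not_mem_nil, or_false] at haw; tauto
    exact hm (this ▸ haP)
  rcases cl2_concrete _ (mem_allParts _ _ hQ) h2 with h | h <;>
    obtain ⟨a, hfa, haP⟩ := singleton_mem_map h
  · left
    have : a = l0 := by
      simp only [hf] at hfa
      split_ifs at hfa with e1 e2 <;>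
        first | assumption | exact absurd hfa (by decide)
    exact this ▸ haP
  · right
    have : a = l1 := by
      simp only [hf] at hfa
      split_ifs at hfa with e1 e2 <;>
        first | assumption | exact absurd hfa (by decide)
    exact this ▸ haP

theorem clause3_key {l0 l1 l2 mi : α} (h01 : l0 ≠ l1) (h02 : l0 ≠ l2) (h12 : l1 ≠ l2)
    (h0m : l0 ≠ mi) (h1m : l1 ≠ mi) (h2m : l2 ≠ mi)
    {P : List (List α)} (hP : IsPartition 2 [l0, mi, l1, mi, l2] P) (hm : [mi] ∉ P) :
    [l0] ∈ P ∨ [l1] ∈ P ∨ [l2] ∈ P := by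
  classical
  set f : α → Fin 4 := fun a =>
    if a = l0 then 0 else if a = l1 then 1 else if a = l2 then 2 else 3 with hf
  have h9 : ([l0, mi, l1, mi, l2].map f) = [0, 3, 1, 3, 2] := by
    simp [hf, h01, h02, h12, h0m.symm, h1m.symm, h2m.symm, h01.symm, h02.symm, h12.symm]
  have hQ : IsPartition 2 ([0,3,1,3,2] : List (Fin 4)) (P.map (List.map f)) :=
    h9 ▸ part_map f hP
  have h3 : [(3 : Fin 4)] ∉ P.map (List.map f) := by
    intro h
    obtain ⟨a, hfa, haP⟩ := singleton_mem_map h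
    have haw : a ∈ [l0, mi, l1, mi, l2] := by
      rw [← hP.1]; exact List.mem_flatten.mpr ⟨[a], haP, by simp⟩
    have : a = mi := by
      simp only [hf] at hfa
      split_ifs at hfa with e1 e2 e3 <;>
        first
        | exact absurd hfa (by decide)
        | (simp only [List.mem_cons, List.not_mem_nil, or_false] at haw; tauto)
    exact hm (this ▸ haP)
  rcases cl3_concrete _ (mem_allParts _ _ hQ) h3 with h | h | h <;>
    obtain ⟨a, hfa, haP⟩ := singleton_mem_map h
  · refine Or.inl ?_
    have : a = l0 := by
      simp only [hf] at hfa
      split_ifs at hfa with e1 e2 e3 <;>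
        first | assumption | exact absurd hfa (by decide)
    exact this ▸ haP
  · refine Or.inr (Or.inl ?_)
    have : a = l1 := by
      simp only [hf] at hfa
      split_ifs at hfa with e1 e2 e3 <;>
        first | assumption | exact absurd hfa (by decide)
    exact this ▸ haP
  · refine Or.inr (Or.inr ?_)
    have : a = l2 := by
      simp only [hf] at hfa
      split_ifs at hfa with e1 e2 e3 <;>
        first | assumption | exact absurd hfa (by decide)
    exact this ▸ haP

theorem enf_key {A N B x pl : α}
    (hAN : A ≠ N) (hAB : A ≠ B) (hNB : N ≠ B)
    (hplA : pl ≠ A) (hplN : pl ≠ N) (hplB : pl ≠ B)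
    (hxA : x ≠ A) (hxN : x ≠ N) (hxB : x ≠ B) (hxpl : x ≠ pl)
    {P : List (List α)} (hP : IsPartition 2 [A, pl, N, x, N, x, N, pl, B] P)
    (hpl : [pl] ∉ P) (hnd : P.Nodup) : [N] ∈ P ∨ ([A] ∈ P ∧ [B] ∈ P) := by
  classical
  set f : α → Fin 5 := fun a =>
    if a = A then 0 else if a = N then 1 else if a = B then 2 else if a = pl then 4 else 3
    with hf
  have fA : f A = 0 := by simp [hf]
  have fN : f N = 1 := by simp [hf, hAN.symm]
  have fB : f B = 2 := by simp [hf, hAB.symm, hNB.symm]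
  have fpl : f pl = 4 := by simp [hf, hplA, hplN, hplB]
  have fx : f x = 3 := by simp [hf, hxA, hxN, hxB, hxpl]
  have h9 : ([A, pl, N, x, N, x, N, pl, B].map f) = [0, 4, 1, 3, 1, 3, 1, 4, 2] := by
    simp only [List.map_cons, List.map_nil, fA, fN, fB, fpl, fx]
  have hQ : IsPartition 2 ([0,4,1,3,1,3,1,4,2] : List (Fin 5)) (P.map (List.map f)) :=
    h9 ▸ part_map f hP
  have h4 : [(4 : Fin 5)] ∉ P.map (List.map f) := by
    intro h
    obtain ⟨a, hfa, haP⟩ := singleton_mem_map h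
    have : a = pl := by
      simp only [hf] at hfa
      split_ifs at hfa with e1 e2 e3 e4 <;> simp_all
    exact hpl (this ▸ haP)
  have hsub : ∀ a ∈ [A, pl, N, x, N, x, N, pl, B], a ∈ [A, N, B, x, pl] := by
    intro a ha; simp only [List.mem_cons, List.not_mem_nil, or_false] at ha ⊢; tauto
  have hinjS : ∀ a ∈ [A, N, B, x, pl], ∀ b ∈ [A, N, B, x, pl],
      f a = f b → a = b := by
    intro a ha b hb hab
    simp only [List.mem_cons, List.not_mem_nil, or_false] at ha hb
    rcases ha with rfl | rfl | rfl | rfl | rfl <;>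
      rcases hb with rfl | rfl | rfl | rfl | rfl <;>
      first
      | rfl
      | (simp only [fA, fN, fB, fpl, fx] at hab; exact absurd hab (by decide))
  have hndQ := nodup_map_pieces hP.1 hsub hinjS hnd
  rcases enf_concrete _ (mem_allParts _ _ hQ) h4 hndQ with h | ⟨h0, h2⟩
  · obtain ⟨a, hfa, haP⟩ := singleton_mem_map h
    refine Or.inl ?_
    have : a = N := by
      simp only [hf] at hfa
      split_ifs at hfa with e1 e2 e3 e4 <;>
        first | assumption | exact absurd hfa (by decide)
    exact this ▸ haP
  · refine Or.inr ⟨?_, ?_⟩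
    · obtain ⟨a, hfa, haP⟩ := singleton_mem_map h0
      have : a = A := by
        simp only [hf] at hfa
        split_ifs at hfa with e1 e2 e3 e4 <;>
          first | assumption | exact absurd hfa (by decide)
      exact this ▸ haP
    · obtain ⟨a, hfa, haP⟩ := singleton_mem_map h2
      have : a = B := by
        simp only [hf] at hfa
        split_ifs at hfa with e1 e2 e3 e4 <;>
          first | assumption | exact absurd hfa (by decide)
      exact this ▸ haP

end Keys

deriving instance DecidableEq for SPLetter

def litP {n m : ℕ} (a : Fin m × ℕ) : SPLetter n m := .lit a.1 a.2

theorem litInj {n m : ℕ} (a b : Fin m × ℕ) (h : litP (n := n) a = litP b) : a = b := by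
  simp only [litP, SPLetter.lit.injEq] at h
  exact Prod.ext h.1 h.2

/-- The chosen partition of the clause string of clause `i` (length `L`,
satisfying literal at position `J`). -/
def cpF (n m : ℕ) (i : Fin m) (L J : ℕ) : List (List (SPLetter n m)) :=
  if L = 2 then
    if J = 0 then [[.lit i 0], [.minus, .lit i 1]] else [[.lit i 0, .minus], [.lit i 1]]
  else
    if J = 0 then [[.lit i 0], [.minus, .lit i 1], [.minus, .lit i 2]]
    else if J = 1 then [[.lit i 0, .minus], [.lit i 1], [.minus, .lit i 2]]
    else [[.lit i 0, .minus], [.lit i 1, .minus], [.lit i 2]]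

theorem cpF_isPart {n m : ℕ} (i : Fin m) (L J : ℕ) (hL : L = 2 ∨ L = 3) :
    IsPartition 2 (List.intersperse .minus ((List.range L).map fun j => SPLetter.lit (n := n) i j))
      (cpF n m i L J) := by
  rcases hL with rfl | rfl
  · rw [cpF, if_pos rfl]
    split_ifs <;> refine ⟨rfl, ?_⟩ <;> intro p hp <;>
      simp only [List.mem_cons, List.not_mem_nil, or_false] at hp <;>
      rcases hp with rfl | rfl <;> simp
  · rw [cpF, if_neg (by omega)]
    split_ifs <;> refine ⟨rfl, ?_⟩ <;> intro p hp <;>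
      simp only [List.mem_cons, List.not_mem_nil, or_false] at hp <;>
      rcases hp with rfl | rfl | rfl <;> simp

theorem cpF_nodup {n m : ℕ} (i : Fin m) (L J : ℕ) : (cpF n m i L J).Nodup := by
  unfold cpF; split_ifs <;> simp

theorem cpF_shape {n m : ℕ} {i : Fin m} {L J : ℕ} (hL : L = 2 ∨ L = 3) (hJ : J < L)
    {p : List (SPLetter n m)} (hp : p ∈ cpF n m i L J) :
    ∃ j < L, ((p = [.lit i j] ∧ j = J) ∨ p = [.lit i j, .minus] ∨ p = [.minus, .lit i j]) := by
  rcases hL with rfl | rfl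
  · rw [cpF, if_pos rfl] at hp
    split_ifs at hp with h1
    · simp only [List.mem_cons, List.not_mem_nil, or_false] at hp
      rcases hp with rfl | rfl
      exacts [⟨0, by omega, Or.inl ⟨rfl, h1.symm⟩⟩, ⟨1, by omega, by simp⟩]
    · simp only [List.mem_cons, List.not_mem_nil, or_false] at hp
      rcases hp with rfl | rfl
      exacts [⟨0, by omega, by simp⟩, ⟨1, by omega, Or.inl ⟨rfl, by omega⟩⟩]
  · rw [cpF, if_neg (by omega)] at hp
    split_ifs at hp with h1 h2
    · simp only [List.mem_cons, List.not_mem_nil, or_false] at hp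
      rcases hp with rfl | rfl | rfl
      exacts [⟨0, by omega, Or.inl ⟨rfl, h1.symm⟩⟩, ⟨1, by omega, by simp⟩, ⟨2, by omega, by simp⟩]
    · simp only [List.mem_cons, List.not_mem_nil, or_false] at hp
      rcases hp with rfl | rfl | rfl
      exacts [⟨0, by omega, by simp⟩, ⟨1, by omega, Or.inl ⟨rfl, h2.symm⟩⟩, ⟨2, by omega, by simp⟩]
    · simp only [List.mem_cons, List.not_mem_nil, or_false] at hp
      rcases hp with rfl | rfl | rfl
      exacts [⟨0, by omega, by simp⟩, ⟨1, by omega, by simp⟩, ⟨2, by omega, Or.inl ⟨rfl, by omega⟩⟩]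

/-- The chosen partition of the enforcer string of variable `v` (truth value `t`). -/
def epF (n m : ℕ) (a b ng : Fin m × ℕ) (v : Fin n) (t : Bool) : List (List (SPLetter n m)) :=
  if t then [[litP a, .plus], [litP ng, .var v], [litP ng], [.var v, litP ng], [.plus, litP b]]
  else [[litP a], [.plus, litP ng], [.var v, litP ng], [.var v], [litP ng, .plus], [litP b]]

theorem epF_isPart {n m : ℕ} (a b ng : Fin m × ℕ) (v : Fin n) (t : Bool) :
    IsPartition 2 [litP a, .plus, litP ng, .var v, litP ng, .var v, litP ng, .plus, litP b]
      (epF n m a b ng v t) := by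
  unfold epF
  split
  · refine ⟨rfl, ?_⟩
    intro p hp
    simp only [List.mem_cons, List.not_mem_nil, or_false] at hp
    rcases hp with rfl | rfl | rfl | rfl | rfl <;> simp
  · refine ⟨rfl, ?_⟩
    intro p hp
    simp only [List.mem_cons, List.not_mem_nil, or_false] at hp
    rcases hp with rfl | rfl | rfl | rfl | rfl | rfl <;> simp

theorem epF_nodup {n m : ℕ} {a b ng : Fin m × ℕ} {v : Fin n} {t : Bool}
    (han : litP (n := n) (m := m) a ≠ litP ng) (hab : litP (n := n) (m := m) a ≠ litP b)
    (hnb : litP (n := n) (m := m) ng ≠ litP b) :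
    (epF n m a b ng v t).Nodup := by
  have han' : ¬(a.1 = ng.1 ∧ a.2 = ng.2) := fun hh => han (by simp [litP, hh.1, hh.2])
  have hab' : ¬(a.1 = b.1 ∧ a.2 = b.2) := fun hh => hab (by simp [litP, hh.1, hh.2])
  have hnb' : ¬(ng.1 = b.1 ∧ ng.2 = b.2) := fun hh => hnb (by simp [litP, hh.1, hh.2])
  unfold epF
  split <;> simp [litP, han', hab', hnb']

theorem epF_letters {n m : ℕ} {a b ng : Fin m × ℕ} {v : Fin n} {t : Bool}
    {p : List (SPLetter n m)} (hp : p ∈ epF n m a b ng v t) :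
    ∀ c ∈ p, c ∈ [litP a, litP ng, litP b, .var v, .plus] := by
  unfold epF at hp
  split at hp <;> simp only [List.mem_cons, List.not_mem_nil, or_false] at hp
  · rcases hp with rfl | rfl | rfl | rfl | rfl <;> intro c hc <;>
      simp only [List.mem_cons, List.not_mem_nil, or_false] at hc ⊢ <;> tauto
  · rcases hp with rfl | rfl | rfl | rfl | rfl | rfl <;> intro c hc <;>
      simp only [List.mem_cons, List.not_mem_nil, or_false] at hc ⊢ <;> tauto

theorem epF_has {n m : ℕ} {a b ng : Fin m × ℕ} {v : Fin n} {t : Bool}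
    {p : List (SPLetter n m)} (hp : p ∈ epF n m a b ng v t) :
    ∃ c ∈ p, c ∈ [litP a, litP ng, litP b, .var v] := by
  unfold epF at hp
  split at hp <;> simp only [List.mem_cons, List.not_mem_nil, or_false] at hp
  · rcases hp with rfl | rfl | rfl | rfl | rfl
    exacts [⟨litP a, by simp, by simp⟩, ⟨litP ng, by simp, by simp⟩,
      ⟨litP ng, by simp, by simp⟩, ⟨litP ng, by simp, by simp⟩, ⟨litP b, by simp, by simp⟩]
  · rcases hp with rfl | rfl | rfl | rfl | rfl | rfl
    exacts [⟨litP a, by simp, by simp⟩, ⟨litP ng, by simp, by simp⟩,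
      ⟨litP ng, by simp, by simp⟩, ⟨SPLetter.var v, by simp, by simp⟩,
      ⟨litP ng, by simp, by simp⟩, ⟨litP b, by simp, by simp⟩]

theorem epF_singleton {n m : ℕ} {a b ng : Fin m × ℕ} {v : Fin n} {t : Bool}
    {c : SPLetter n m} (hc : [c] ∈ epF n m a b ng v t) :
    (c = litP a ∧ t = false) ∨ (c = litP ng ∧ t = true) ∨ (c = litP b ∧ t = false) ∨
      c = .var v := by
  unfold epF at hc
  split at hc <;> rename_i ht
  · simp only [List.mem_cons, List.not_mem_nil, or_false, List.cons.injEq, and_true] at hc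
    rcases hc with ⟨h, _⟩ | ⟨h, _⟩ | h | ⟨h, _⟩ | ⟨h, _⟩ <;> simp_all
  · simp only [List.mem_cons, List.not_mem_nil, or_false, List.cons.injEq, and_true] at hc
    rcases hc with h | ⟨h, _⟩ | ⟨h, _⟩ | h | ⟨h, _⟩ | h <;> simp_all

theorem forall2_ofFn {α β : Type*} {R : α → β → Prop} {k : ℕ} {f : Fin k → α} {g : Fin k → β}
    (h : ∀ i, R (f i) (g i)) : List.Forall₂ R (List.ofFn f) (List.ofFn g) := by
  rw [List.forall₂_iff_get]
  refine ⟨by simp, fun i h1 h2 => ?_⟩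
  simp only [List.get_eq_getElem, List.getElem_ofFn]
  exact h _

theorem pairP {n m : ℕ} {clauses : Fin m → List (Fin n × Bool)} {x y : Fin m × ℕ}
    {a b : Fin n} {ba bb : Bool}
    (hx : (clauses x.1)[x.2]? = some (a, ba)) (hy : (clauses y.1)[y.2]? = some (b, bb))
    (h : x = y) : a = b ∧ ba = bb := by
  subst h; rw [hx] at hy; injection hy with h'
  exact ⟨congrArg Prod.fst h', congrArg Prod.snd h'⟩

theorem cross_var {n m : ℕ} {clauses : Fin m → List (Fin n × Bool)}
    {pos1 pos2 neg : Fin n → Fin m × ℕ}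
    (hpos1 : ∀ v, (clauses (pos1 v).1)[(pos1 v).2]? = some (v, true))
    (hpos2 : ∀ v, (clauses (pos2 v).1)[(pos2 v).2]? = some (v, true))
    (hneg : ∀ v, (clauses (neg v).1)[(neg v).2]? = some (v, false))
    {v w : Fin n} {c : SPLetter n m}
    (h1 : c ∈ [litP (pos1 v), litP (neg v), litP (pos2 v), .var v])
    (h2 : c ∈ [litP (pos1 w), litP (neg w), litP (pos2 w), .var w, .plus]) : v = w := by
  simp only [List.mem_cons, List.not_mem_nil, or_false] at h1 h2
  rcases h1 with rfl | rfl | rfl | rfl <;> rcases h2 with h | h | h | h | h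
  all_goals first
    | exact (pairP (hpos1 v) (hpos1 w) (litInj _ _ h)).1
    | exact (pairP (hneg v) (hneg w) (litInj _ _ h)).1
    | exact (pairP (hpos2 v) (hpos2 w) (litInj _ _ h)).1
    | exact (pairP (hpos1 v) (hpos2 w) (litInj _ _ h)).1
    | exact (pairP (hpos2 v) (hpos1 w) (litInj _ _ h)).1
    | exact absurd (pairP (hpos1 v) (hneg w) (litInj _ _ h)).2 (by simp)
    | exact absurd (pairP (hneg v) (hpos1 w) (litInj _ _ h)).2 (by simp)
    | exact absurd (pairP (hpos2 v) (hneg w) (litInj _ _ h)).2 (by simp)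
    | exact absurd (pairP (hneg v) (hpos2 w) (litInj _ _ h)).2 (by simp)
    | exact SPLetter.var.inj h
    | (exfalso; simp [litP] at h)

set_option maxHeartbeats 1000000 in
theorem forwardDir {n m : ℕ} (clauses : Fin m → List (Fin n × Bool))
    (hlen : ∀ i, (clauses i).length = 2 ∨ (clauses i).length = 3)
    (pos1 pos2 neg : Fin n → Fin m × ℕ)
    (hpos1 : ∀ v, (clauses (pos1 v).1)[(pos1 v).2]? = some (v, true))
    (hpos2 : ∀ v, (clauses (pos2 v).1)[(pos2 v).2]? = some (v, true))
    (hneg : ∀ v, (clauses (neg v).1)[(neg v).2]? = some (v, false))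
    (hdist : ∀ v, pos1 v ≠ pos2 v)
    (τ : Fin n → Bool) (hτ : ∀ i, ∃ p ∈ clauses i, τ p.1 = p.2) :
    ∃ Ps, IsMultiPartition 2
      ((List.ofFn fun i : Fin m =>
          List.intersperse (SPLetter.minus : SPLetter n m)
            ((List.range (clauses i).length).map fun j => SPLetter.lit i j)) ++
       (List.ofFn fun v : Fin n =>
          [SPLetter.lit (pos1 v).1 (pos1 v).2, SPLetter.plus,
           SPLetter.lit (neg v).1 (neg v).2, SPLetter.var v,
           SPLetter.lit (neg v).1 (neg v).2, SPLetter.var v,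
           SPLetter.lit (neg v).1 (neg v).2, SPLetter.plus,
           SPLetter.lit (pos2 v).1 (pos2 v).2]) ++
       [[SPLetter.minus], [SPLetter.plus]]) Ps ∧ EqFree Ps.flatten := by
  classical
  have hex : ∀ i : Fin m, ∃ j, ∃ h : j < (clauses i).length,
      τ ((clauses i)[j]'h).1 = ((clauses i)[j]'h).2 := by
    intro i
    obtain ⟨p, hp, hs⟩ := hτ i
    obtain ⟨j, hj, hpe⟩ := List.getElem_of_mem hp
    exact ⟨j, hj, by rw [hpe]; exact hs⟩
  choose J hJ hsat using hex
  -- consistency of the chosen satisfying literal with τ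
  have hJocc : ∀ (i : Fin m) (w : Fin n) (bb : Bool) (x : Fin m × ℕ),
      (clauses x.1)[x.2]? = some (w, bb) → (i, J i) = x → τ w = bb := by
    intro i w bb x hlook hx
    subst hx
    have hlook' : (clauses i)[J i]? = some (w, bb) := hlook
    rw [List.getElem?_eq_getElem (hJ i)] at hlook'
    injection hlook' with h'
    have := hsat i
    rw [h'] at this
    exact this
  have hAN : ∀ v, litP (n := n) (pos1 v) ≠ litP (neg v) := fun v h =>
    absurd (pairP (hpos1 v) (hneg v) (litInj _ _ h)).2 (by simp)
  have hAB : ∀ v, litP (n := n) (pos1 v) ≠ litP (pos2 v) := fun v h =>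
    hdist v (litInj _ _ h)
  have hNB : ∀ v, litP (n := n) (neg v) ≠ litP (pos2 v) := fun v h =>
    absurd (pairP (hneg v) (hpos2 v) (litInj _ _ h)).2 (by simp)
  refine ⟨(List.ofFn fun i => cpF n m i (clauses i).length (J i)) ++
          (List.ofFn fun v => epF n m (pos1 v) (pos2 v) (neg v) v (τ v)) ++
          [[[SPLetter.minus]], [[SPLetter.plus]]], ?_, ?_⟩
  · refine List.rel_append (List.rel_append ?_ ?_) ?_
    · exact forall2_ofFn (fun i => cpF_isPart i _ (J i) (hlen i))
    · exact forall2_ofFn (fun v => epF_isPart (pos1 v) (pos2 v) (neg v) v (τ v))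
    · exact List.Forall₂.cons ⟨rfl, by simp⟩ (List.Forall₂.cons ⟨rfl, by simp⟩ List.Forall₂.nil)
  · show List.Nodup _
    have hCmem : ∀ {p : List (SPLetter n m)},
        p ∈ (List.ofFn fun i => cpF n m i (clauses i).length (J i)).flatten →
        ∃ i : Fin m, p ∈ cpF n m i (clauses i).length (J i) := by
      intro p hp
      obtain ⟨l, hl, hpl⟩ := List.mem_flatten.mp hp
      obtain ⟨i, hi⟩ := List.mem_ofFn.mp hl
      exact ⟨i, hi ▸ hpl⟩
    have hEmem : ∀ {p : List (SPLetter n m)},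
        p ∈ (List.ofFn fun v => epF n m (pos1 v) (pos2 v) (neg v) v (τ v)).flatten →
        ∃ v : Fin n, p ∈ epF n m (pos1 v) (pos2 v) (neg v) v (τ v) := by
      intro p hp
      obtain ⟨l, hl, hpl⟩ := List.mem_flatten.mp hp
      obtain ⟨v, hv⟩ := List.mem_ofFn.mp hl
      exact ⟨v, hv ▸ hpl⟩
    -- the clause/enforcer cross exclusion
    have hcross : ∀ (i : Fin m) (w : Fin n) {p : List (SPLetter n m)},
        p ∈ cpF n m i (clauses i).length (J i) →
        p ∈ epF n m (pos1 w) (pos2 w) (neg w) w (τ w) → False := by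
      intro i w p hpc hpe
      obtain ⟨j1, hj1, hf⟩ := cpF_shape (hlen i) (hJ i) hpc
      rcases hf with ⟨rfl, rfl⟩ | rfl | rfl
      · rcases epF_singleton hpe with ⟨h, ht⟩ | ⟨h, ht⟩ | ⟨h, ht⟩ | h
        · have := hJocc i w true (pos1 w) (hpos1 w) (litInj (i, J i) (pos1 w) h)
          rw [this] at ht; exact Bool.noConfusion ht
        · have := hJocc i w false (neg w) (hneg w) (litInj (i, J i) (neg w) h)
          rw [this] at ht; exact Bool.noConfusion ht
        · have := hJocc i w true (pos2 w) (hpos2 w) (litInj (i, J i) (pos2 w) h)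
          rw [this] at ht; exact Bool.noConfusion ht
        · exact absurd h (by simp [litP])
      · have := epF_letters hpe SPLetter.minus (by simp)
        simp [litP] at this
      · have := epF_letters hpe SPLetter.minus (by simp)
        simp [litP] at this
    simp only [List.flatten_append, List.flatten_cons, List.flatten_nil, List.append_nil,
      List.nil_append, List.cons_append, List.singleton_append]
    rw [List.append_assoc]
    rw [List.nodup_append]
    refine ⟨?_, ?_, ?_⟩
    · -- clause part nodup
      rw [List.nodup_flatten]
      refine ⟨?_, ?_⟩
      · intro l hl
        obtain ⟨i, hi⟩ := List.mem_ofFn.mp hl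
        exact hi ▸ cpF_nodup i _ _
      · rw [List.pairwise_ofFn]
        intro i j hij p hpi hpj
        obtain ⟨j1, hj1, hf1⟩ := cpF_shape (hlen i) (hJ i) hpi
        obtain ⟨j2, hj2, hf2⟩ := cpF_shape (hlen j) (hJ j) hpj
        rcases hf1 with ⟨rfl, -⟩ | rfl | rfl <;> rcases hf2 with ⟨h, -⟩ | h | h <;>
          first
          | (refine absurd ?_ (Fin.ne_of_lt hij)
             simp only [List.cons.injEq, SPLetter.lit.injEq, and_true, true_and] at h
             tauto)
          | simp at h
    · -- enforcer part + forbidden part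
      rw [List.nodup_append]
      refine ⟨?_, by simp, ?_⟩
      · rw [List.nodup_flatten]
        refine ⟨?_, ?_⟩
        · intro l hl
          obtain ⟨v, hv⟩ := List.mem_ofFn.mp hl
          exact hv ▸ epF_nodup (hAN v) (hAB v) (hNB v)
        · rw [List.pairwise_ofFn]
          intro v w hvw p hpv hpw
          obtain ⟨c, hcp, hcv⟩ := epF_has hpv
          have hcw := epF_letters hpw c hcp
          exact Fin.ne_of_lt hvw (cross_var hpos1 hpos2 hneg hcv hcw)
      · -- enforcer vs forbidden
        rintro p hpE _ hpF rfl
        obtain ⟨v, hpv⟩ := hEmem hpE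
        simp only [List.mem_cons, List.not_mem_nil, or_false] at hpF
        rcases hpF with rfl | rfl
        · have := epF_letters hpv SPLetter.minus (by simp)
          simp [litP] at this
        · rcases epF_singleton hpv with ⟨h, -⟩ | ⟨h, -⟩ | ⟨h, -⟩ | h <;> simp [litP] at h
    · -- clause part vs rest
      rintro p hpC _ hpR rfl
      obtain ⟨i, hpi⟩ := hCmem hpC
      rcases List.mem_append.mp hpR with hpE | hpF
      · obtain ⟨w, hpw⟩ := hEmem hpE
        exact hcross i w hpi hpw
      · obtain ⟨j1, hj1, hf⟩ := cpF_shape (hlen i) (hJ i) hpi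
        simp only [List.mem_cons, List.not_mem_nil, or_false] at hpF
        rcases hf with ⟨rfl, -⟩ | rfl | rfl <;> rcases hpF with h | h <;> simp at h

theorem part_singleton {α : Type*} {K : ℕ} {a : α} {P : List (List α)}
    (h : IsPartition K [a] P) : P = [[a]] := by
  obtain ⟨h1, h2⟩ := h
  rcases P with _ | ⟨p, P'⟩
  · simp at h1
  rcases p with _ | ⟨b, p'⟩
  · exact absurd rfl (h2 [] (by simp)).1
  simp only [List.flatten_cons, List.cons_append, List.cons.injEq] at h1
  obtain ⟨rfl, h3⟩ := h1
  have hp' : p' = [] := by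
    rcases p' with _ | ⟨c, p''⟩
    · rfl
    · simp at h3
  subst hp'
  simp only [List.nil_append] at h3
  rcases P' with _ | ⟨q, Q⟩
  · rfl
  · exfalso
    rcases List.append_eq_nil_iff.mp h3 with ⟨hq, -⟩
    exact (h2 q (by simp)).1 hq

set_option maxHeartbeats 1000000 in
theorem backwardDir {n m : ℕ} (clauses : Fin m → List (Fin n × Bool))
    (hlen : ∀ i, (clauses i).length = 2 ∨ (clauses i).length = 3)
    (pos1 pos2 neg : Fin n → Fin m × ℕ)
    (hpos1 : ∀ v, (clauses (pos1 v).1)[(pos1 v).2]? = some (v, true))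
    (hpos2 : ∀ v, (clauses (pos2 v).1)[(pos2 v).2]? = some (v, true))
    (hneg : ∀ v, (clauses (neg v).1)[(neg v).2]? = some (v, false))
    (hdist : ∀ v, pos1 v ≠ pos2 v)
    (hocc : ∀ (v : Fin n) (b : Bool) (i : Fin m) (j : ℕ),
      (clauses i)[j]? = some (v, b) →
        (i, j) = pos1 v ∨ (i, j) = pos2 v ∨ (i, j) = neg v)
    (Ps : List (List (List (SPLetter n m))))
    (hMP : IsMultiPartition 2
      ((List.ofFn fun i : Fin m =>
          List.intersperse (SPLetter.minus : SPLetter n m)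
            ((List.range (clauses i).length).map fun j => SPLetter.lit i j)) ++
       (List.ofFn fun v : Fin n =>
          [SPLetter.lit (pos1 v).1 (pos1 v).2, SPLetter.plus,
           SPLetter.lit (neg v).1 (neg v).2, SPLetter.var v,
           SPLetter.lit (neg v).1 (neg v).2, SPLetter.var v,
           SPLetter.lit (neg v).1 (neg v).2, SPLetter.plus,
           SPLetter.lit (pos2 v).1 (pos2 v).2]) ++
       [[SPLetter.minus], [SPLetter.plus]]) Ps)
    (hEF : EqFree Ps.flatten) :
    ∃ τ : Fin n → Bool, ∀ i, ∃ p ∈ clauses i, τ p.1 = p.2 := by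
  classical
  have hflip := List.Forall₂.flip hMP
  -- decompose Ps into the clause part, the enforcer part and the forbidden part
  have h12 := List.forall₂_take_append Ps _ _ hflip
  have h3 := List.forall₂_drop_append Ps _ _ hflip
  set Cs := List.take (List.ofFn fun i : Fin m =>
      List.intersperse (SPLetter.minus : SPLetter n m)
        ((List.range (clauses i).length).map fun j => SPLetter.lit i j)).length
      (List.take _ Ps) with hCsdef
  have hC := List.forall₂_take_append _ _ _ h12
  rw [← hCsdef] at hC
  have hE := List.forall₂_drop_append _ _ _ h12
  set Es := List.drop (List.ofFn fun i : Fin m =>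
      List.intersperse (SPLetter.minus : SPLetter n m)
        ((List.range (clauses i).length).map fun j => SPLetter.lit i j)).length
      (List.take _ Ps) with hEsdef
  set Fs := List.drop _ Ps with hFsdef
  have hPsplit : Ps = (Cs ++ Es) ++ Fs := by
    rw [hCsdef, hEsdef, hFsdef, List.take_append_drop, List.take_append_drop]
  clear_value Cs Es Fs
  -- the forbidden part
  have hFs : Fs = [[[SPLetter.minus]], [[SPLetter.plus]]] := by
    rcases h3 with - | ⟨hf1, hrest⟩
    rename_i F1 Fs'
    rcases hrest with - | ⟨hf2, hnil⟩
    rename_i F2 Fs''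
    rcases hnil
    rw [part_singleton hf1, part_singleton hf2]
  -- nodup decomposition
  have hnd : Ps.flatten.Nodup := hEF
  rw [hPsplit, List.flatten_append, List.flatten_append, List.append_assoc,
    List.nodup_append] at hnd
  obtain ⟨hndC, hndEF, hdisjC⟩ := hnd
  rw [List.nodup_append] at hndEF
  obtain ⟨hndE, -, hdisjEF⟩ := hndEF
  have hmemF : [SPLetter.minus] ∈ Fs.flatten ∧ [SPLetter.plus] ∈ Fs.flatten := by
    rw [hFs]; simp
  have hnoMinusC : ([SPLetter.minus] : List (SPLetter n m)) ∉ Cs.flatten := fun hmem =>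
    hdisjC _ hmem _ (List.mem_append_right _ hmemF.1) rfl
  have hnoPlusE : ([SPLetter.plus] : List (SPLetter n m)) ∉ Es.flatten := fun hmem =>
    hdisjEF _ hmem _ hmemF.2 rfl
  have hdisjCE : ∀ {p : List (SPLetter n m)}, p ∈ Cs.flatten → p ∈ Es.flatten → False :=
    fun hp hq => hdisjC _ hp _ (List.mem_append_left _ hq) rfl
  -- lengths
  have hCslen : Cs.length = m := by
    have := hC.length_eq; simpa using this
  have hEslen : Es.length = n := by
    have := hE.length_eq; simpa using this
  clear hCsdef hEsdef hFsdef
  have hvE : ∀ v : Fin n, (v : ℕ) < Es.length := fun v => by rw [hEslen]; exact v.isLt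
  have hiC : ∀ i : Fin m, (i : ℕ) < Cs.length := fun i => by rw [hCslen]; exact i.isLt
  -- per-index partitions
  have hCpart : ∀ i : Fin m, IsPartition 2
      (List.intersperse (SPLetter.minus : SPLetter n m)
        ((List.range (clauses i).length).map fun j => SPLetter.lit i j)) (Cs[(i : ℕ)]'(hiC i)) := by
    intro i
    have := (List.forall₂_iff_get.mp hC).2 i (hiC i) (by simp [hCslen])
    simp only [List.get_eq_getElem, List.getElem_ofFn] at this
    exact this
  have hEpart : ∀ v : Fin n, IsPartition 2
      [litP (pos1 v), SPLetter.plus, litP (neg v), SPLetter.var v, litP (neg v),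
        SPLetter.var v, litP (neg v), SPLetter.plus, litP (pos2 v)] (Es[(v : ℕ)]'(hvE v)) := by
    intro v
    have := (List.forall₂_iff_get.mp hE).2 v (hvE v) (by simp [hEslen])
    simp only [List.get_eq_getElem, List.getElem_ofFn] at this
    exact this
  have hCmemFl : ∀ (i : Fin m) {p}, p ∈ Cs[(i : ℕ)]'(hiC i) → p ∈ Cs.flatten := by
    intro i p hp
    exact List.mem_flatten.mpr ⟨_, List.getElem_mem (hiC i), hp⟩
  have hEmemFl : ∀ (v : Fin n) {p}, p ∈ Es[(v : ℕ)]'(hvE v) → p ∈ Es.flatten := by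
    intro v p hp
    exact List.mem_flatten.mpr ⟨_, List.getElem_mem (hvE v), hp⟩
  -- the enforcer dichotomy
  have hEnf : ∀ v : Fin n, [litP (neg v)] ∈ Es[(v : ℕ)]'(hvE v) ∨
      ([litP (pos1 v)] ∈ Es[(v : ℕ)]'(hvE v) ∧ [litP (pos2 v)] ∈ Es[(v : ℕ)]'(hvE v)) := by
    intro v
    refine enf_key ?_ ?_ ?_ (by simp [litP]) (by simp [litP]) (by simp [litP])
      (by simp [litP]) (by simp [litP]) (by simp [litP]) (by simp) (hEpart v) ?_ ?_
    · exact fun h => absurd (pairP (hpos1 v) (hneg v) (litInj _ _ h)).2 (by simp)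
    · exact fun h => hdist v (litInj _ _ h)
    · exact fun h => absurd (pairP (hneg v) (hpos2 v) (litInj _ _ h)).2 (by simp)
    · exact fun h => hnoPlusE (hEmemFl v h)
    · exact (List.nodup_flatten.mp hndE).1 _ (List.getElem_mem (hvE v))
  -- define the assignment
  refine ⟨fun v => if [litP (neg v)] ∈ Es[(v : ℕ)]'(hvE v) then true else false, fun i => ?_⟩
  -- find the singleton literal of clause i
  have hnoMinusCi : ([SPLetter.minus] : List (SPLetter n m)) ∉ Cs[(i : ℕ)]'(hiC i) :=
    fun h => hnoMinusC (hCmemFl i h)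
  have hsing : ∃ j, ∃ hj : j < (clauses i).length, [SPLetter.lit i j] ∈ Cs[(i : ℕ)]'(hiC i) := by
    rcases hlen i with hL | hL
    · have hr : (List.range (clauses i).length) = [0, 1] := by rw [hL]; decide
      have hP' : IsPartition 2 [SPLetter.lit i 0, SPLetter.minus, SPLetter.lit i 1]
          (Cs[(i : ℕ)]'(hiC i)) := by
        have := hCpart i; rw [hr] at this; exact this
      rcases clause2_key (by simp) (by simp) (by simp) hP' hnoMinusCi with h | h
      exacts [⟨0, by omega, h⟩, ⟨1, by omega, h⟩]
    · have hr : (List.range (clauses i).length) = [0, 1, 2] := by rw [hL]; decide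
      have hP' : IsPartition 2 [SPLetter.lit i 0, SPLetter.minus, SPLetter.lit i 1,
          SPLetter.minus, SPLetter.lit i 2] (Cs[(i : ℕ)]'(hiC i)) := by
        have := hCpart i; rw [hr] at this; exact this
      rcases clause3_key (by simp) (by simp) (by simp) (by simp) (by simp) (by simp)
          hP' hnoMinusCi with h | h | h
      exacts [⟨0, by omega, h⟩, ⟨1, by omega, h⟩, ⟨2, by omega, h⟩]
  obtain ⟨j, hj, hjC⟩ := hsing
  have hlook : (clauses i)[j]? = some ((clauses i)[j]'hj) := List.getElem?_eq_getElem hj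
  have hlook2 : (clauses i)[j]? = some (((clauses i)[j]'hj).1, ((clauses i)[j]'hj).2) := hlook
  refine ⟨(clauses i)[j]'hj, List.getElem_mem hj, ?_⟩
  set u := ((clauses i)[j]'hj).1 with hu
  set b := ((clauses i)[j]'hj).2 with hb
  have hx : (clauses ((i, j) : Fin m × ℕ).1)[((i, j) : Fin m × ℕ).2]? = some (u, b) := hlook2
  rcases hocc u b i j hlook2 with he | he | he
  · -- positive occurrence 1: b = true and we must show τ u = true
    have hbt : b = true := (pairP hx (hpos1 u) he).2
    rw [hbt]
    rcases hEnf u with hN | ⟨hA, -⟩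
    · beta_reduce
      rw [if_pos hN]
    · exfalso
      rw [← he] at hA
      have hA' : [SPLetter.lit i j] ∈ Es[(u : ℕ)]'(hvE u) := hA
      exact hdisjCE (hCmemFl i hjC) (hEmemFl u hA')
  · -- positive occurrence 2
    have hbt : b = true := (pairP hx (hpos2 u) he).2
    rw [hbt]
    rcases hEnf u with hN | ⟨-, hB⟩
    · beta_reduce
      rw [if_pos hN]
    · exfalso
      rw [← he] at hB
      have hB' : [SPLetter.lit i j] ∈ Es[(u : ℕ)]'(hvE u) := hB
      exact hdisjCE (hCmemFl i hjC) (hEmemFl u hB')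
  · -- negated occurrence: b = false and we must show τ u = false
    have hbt : b = false := (pairP hx (hneg u) he).2
    rw [hbt]
    beta_reduce
    rw [if_neg ?_]
    intro hN
    rw [← he] at hN
    have hN' : [SPLetter.lit i j] ∈ Es[(u : ℕ)]'(hvE u) := hN
    exact hdisjCE (hCmemFl i hjC) (hEmemFl u hN')



/-- A 3SAT(3) instance with `m` clauses over `n` variables (a literal is a pair
of a variable and a polarity, `true` meaning positive): every clause has two or
three literals, and every variable occurs exactly three times, twice positive
(at positions `pos1 v` and `pos2 v`) and once negated (at position `neg v`).
The instance is satisfiable iff the multiset consisting of the clause strings,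
the enforcer strings, and the two forbidden strings `⊟`, `⊞` has an
equality-free `2`-partition. -/
theorem stmt_2 (n m : ℕ) (clauses : Fin m → List (Fin n × Bool))
    (hlen : ∀ i, (clauses i).length = 2 ∨ (clauses i).length = 3)
    (pos1 pos2 neg : Fin n → Fin m × ℕ)
    (hpos1 : ∀ v, (clauses (pos1 v).1)[(pos1 v).2]? = some (v, true))
    (hpos2 : ∀ v, (clauses (pos2 v).1)[(pos2 v).2]? = some (v, true))
    (hneg : ∀ v, (clauses (neg v).1)[(neg v).2]? = some (v, false))
    (hdist : ∀ v, pos1 v ≠ pos2 v)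
    (hocc : ∀ (v : Fin n) (b : Bool) (i : Fin m) (j : ℕ),
      (clauses i)[j]? = some (v, b) →
        (i, j) = pos1 v ∨ (i, j) = pos2 v ∨ (i, j) = neg v) :
    (∃ τ : Fin n → Bool, ∀ i, ∃ p ∈ clauses i, τ p.1 = p.2) ↔
    (∃ Ps, IsMultiPartition 2
      ((List.ofFn fun i : Fin m =>
          List.intersperse (SPLetter.minus : SPLetter n m)
            ((List.range (clauses i).length).map fun j => SPLetter.lit i j)) ++
       (List.ofFn fun v : Fin n =>
          [SPLetter.lit (pos1 v).1 (pos1 v).2, SPLetter.plus,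
           SPLetter.lit (neg v).1 (neg v).2, SPLetter.var v,
           SPLetter.lit (neg v).1 (neg v).2, SPLetter.var v,
           SPLetter.lit (neg v).1 (neg v).2, SPLetter.plus,
           SPLetter.lit (pos2 v).1 (pos2 v).2]) ++
       [[SPLetter.minus], [SPLetter.plus]]) Ps ∧ EqFree Ps.flatten) := by
  constructor
  · rintro ⟨τ, hτ⟩
    exact forwardDir clauses hlen pos1 pos2 neg hpos1 hpos2 hneg hdist τ hτ
  · rintro ⟨Ps, hMP, hEF⟩
    exact backwardDir clauses hlen pos1 pos2 neg hpos1 hpos2 hneg hdist hocc Ps hMP hEF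
end

section
/- Let w₁,…,w_ℓ be nonempty strings over an alphabet Σ and let ⊡, ⊟, d₁,…,d_{ℓ−1} be pairwise distinct letters not in Σ. Let w̄ = ⊡⊡⊡⊡⊟ w₁ d₁⊡⊡d₁ w₂ d₂⊡⊡d₂ ⋯ d_{ℓ−1}⊡⊡d_{ℓ−1} w_ℓ. Then w̄ has an equality-free 2-partition if and only if the multiset {w₁,…,w_ℓ} has an equality-free 2-partition. -/
/-- `glue d k [w₁, …, w_ℓ] = w₁ ++ d k ++ w₂ ++ d (k+1) ++ ⋯ ++ d (k+ℓ-2) ++ w_ℓ`: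
interleaves the strings with the delimiter strings `d k, d (k+1), …`. -/
def glue {α : Type*} (d : ℕ → List α) : ℕ → List (List α) → List α
  | _, [] => []
  | _, [w] => w
  | k, w :: ws => w ++ d k ++ glue d (k + 1) ws

namespace Stmt3Aux
variable {γ : Type*}

/-- Interleave partitions with gadget frame pieces. -/
def interP (e : ℕ → List (List γ)) : ℕ → List (List (List γ)) → List (List γ)
  | _, [] => []
  | _, [Q] => Q
  | k, Q :: Qs => Q ++ e k ++ interP e (k + 1) Qs

theorem interP_cons (e : ℕ → List (List γ)) (k Q Q' Qs) :
    interP e k (Q :: Q' :: Qs) = Q ++ e k ++ interP e (k+1) (Q' :: Qs) := rfl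

/-- peel the first piece off a partition whose flatten starts with `x`. -/
theorem peel {Q : List (List γ)} {x : γ} {t : List γ}
    (hf : Q.flatten = x :: t) (hp : ∀ p ∈ Q, p ≠ [] ∧ p.length ≤ 2) :
    (∃ Q', Q = [x] :: Q' ∧ Q'.flatten = t) ∨
    (∃ y t' Q', Q = [x, y] :: Q' ∧ t = y :: t' ∧ Q'.flatten = t') := by
  match Q with
  | [] => simp at hf
  | p :: Q' =>
    obtain ⟨hne, hlen⟩ := hp p (by simp)
    match p with
    | [a] =>
      simp at hf
      exact Or.inl ⟨Q', by simp [hf.1], hf.2⟩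
    | [a, a'] =>
      simp at hf
      exact Or.inr ⟨a', Q'.flatten, Q', by simp [hf.1], hf.2.symm, rfl⟩
    | a :: a' :: a'' :: r => simp at hlen

theorem split_at_special {S : Set γ} {c : γ} (hc : c ∉ S) :
    ∀ (Q : List (List γ)) (w t : List γ),
    Q.flatten = w ++ c :: t → (∀ x ∈ w, x ∈ S) →
    (∀ p ∈ Q, p ≠ [] ∧ p.length ≤ 2) →
    ∃ Q₁ p Q₂, Q = Q₁ ++ p :: Q₂ ∧
      ((p = [c] ∧ Q₁.flatten = w ∧ Q₂.flatten = t) ∨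
       (∃ y t', p = [c, y] ∧ Q₁.flatten = w ∧ t = y :: t' ∧ Q₂.flatten = t') ∨
       (∃ x, p = [x, c] ∧ w = Q₁.flatten ++ [x] ∧ Q₂.flatten = t)) := by
  intro Q
  induction Q with
  | nil => intro w t hf _ _; simp at hf
  | cons p Q' ih =>
    intro w t hf hw hp
    obtain ⟨hne, hlen⟩ := hp p (by simp)
    match p with
    | [a] =>
      simp at hf
      match w with
      | [] =>
        simp at hf
        exact ⟨[], [c], Q', by simp [hf.1], Or.inl ⟨rfl, rfl, hf.2⟩⟩
      | x :: w' =>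
        simp at hf
        obtain ⟨Q₁, q, Q₂, hQ, hcase⟩ := ih w' t hf.2 (fun y hy => hw y (by simp [hy])) (fun q hq => hp q (by simp [hq]))
        refine ⟨[a] :: Q₁, q, Q₂, by simp [hQ], ?_⟩
        rcases hcase with ⟨h1, h2, h3⟩ | ⟨y, t', h1, h2, h3, h4⟩ | ⟨x', h1, h2, h3⟩
        · exact Or.inl ⟨h1, by simp [h2, hf.1], h3⟩
        · exact Or.inr (Or.inl ⟨y, t', h1, by simp [h2, hf.1], h3, h4⟩)
        · exact Or.inr (Or.inr ⟨x', h1, by simp [h2, hf.1], h3⟩)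
    | [a, a'] =>
      match w with
      | [] =>
        simp at hf
        exact ⟨[], [c, a'], Q', by simp [hf.1], Or.inr (Or.inl ⟨a', Q'.flatten, rfl, rfl, hf.2.symm, rfl⟩)⟩
      | [x] =>
        simp at hf
        exact ⟨[], [x, c], Q', by simp [hf.1, hf.2.1], Or.inr (Or.inr ⟨x, by simp [hf.2.1], by simp, hf.2.2⟩)⟩
      | x :: x' :: w' =>
        simp at hf
        obtain ⟨Q₁, q, Q₂, hQ, hcase⟩ := ih w' t hf.2.2 (fun y hy => hw y (by simp [hy])) (fun q hq => hp q (by simp [hq]))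
        refine ⟨[a, a'] :: Q₁, q, Q₂, by simp [hQ], ?_⟩
        rcases hcase with ⟨h1, h2, h3⟩ | ⟨y, t', h1, h2, h3, h4⟩ | ⟨x'', h1, h2, h3⟩
        · exact Or.inl ⟨h1, by simp [h2, hf.1, hf.2.1], h3⟩
        · exact Or.inr (Or.inl ⟨y, t', h1, by simp [h2, hf.1, hf.2.1], h3, h4⟩)
        · exact Or.inr (Or.inr ⟨x'', h1, by simp [h2, hf.1, hf.2.1], h3⟩)
    | a :: a' :: a'' :: r => simp at hlen


theorem extract (S : Set γ) (b : γ) (d : ℕ → γ) :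
    ∀ (ws : List (List γ)) (k : ℕ) (Q : List (List γ)),
    (∀ w ∈ ws, ∀ x ∈ w, x ∈ S) →
    (∀ j, k ≤ j → j + 2 ≤ k + ws.length → d j ∉ S ∧ d j ≠ b) →
    Q.flatten = glue (fun k => [d k, b, b, d k]) k ws →
    (∀ p ∈ Q, p ≠ [] ∧ p.length ≤ 2) →
    [b] ∉ Q → [b, b] ∉ Q →
    ∃ Ps, List.Forall₂ (IsPartition 2) ws Ps ∧ List.Sublist Ps.flatten Q := by
  intro ws
  induction ws with
  | nil =>
    intro k Q _ _ hf hp _ _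
    refine ⟨[], List.Forall₂.nil, ?_⟩
    simp
  | cons w ws' ih =>
    cases ws' with
    | nil =>
      intro k Q _ _ hf hp _ _
      refine ⟨[Q], List.Forall₂.cons ⟨hf, hp⟩ List.Forall₂.nil, by simp⟩
    | cons w' ws'' =>
      intro k Q hS hdel hf hp h1 h2
      have hdk : d k ∉ S := (hdel k le_rfl (by simp)).1
      have hglue : glue (fun k => [d k, b, b, d k]) k (w :: w' :: ws'') =
          w ++ [d k, b, b, d k] ++ glue (fun k => [d k, b, b, d k]) (k+1) (w' :: ws'') := rfl
      set G := glue (fun k => [d k, b, b, d k]) (k+1) (w' :: ws'') with hG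
      have hf' : Q.flatten = w ++ d k :: (b :: b :: d k :: G) := by
        rw [hf, hglue]; simp
      obtain ⟨Q₁, p, Q₂, hQ, hcase⟩ := split_at_special hdk Q w _ hf'
        (fun x hx => hS w (by simp) x hx) hp
      have hpQ₂ : ∀ q ∈ Q₂, q ≠ [] ∧ q.length ≤ 2 := fun q hq => hp q (by simp [hQ, hq])
      -- helper: Q₂.flatten = b :: b :: d k :: G is impossible
      have impossible : Q₂.flatten = b :: b :: d k :: G → False := by
        intro h
        rcases peel h hpQ₂ with ⟨Q', hQ', _⟩ | ⟨y, t', Q', hQ', hty, _⟩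
        · exact h1 (by simp [hQ, hQ'])
        · obtain ⟨rfl, rfl⟩ : y = b ∧ t' = d k :: G := by
            constructor <;> [exact (List.cons.injEq .. ▸ hty).1.symm; exact ((List.cons.injEq .. ▸ hty).2).symm]
          exact h2 (by simp [hQ, hQ'])
      rcases hcase with ⟨hpc, hQ₁, hQ₂f⟩ | ⟨y, t', hpc, hQ₁, hty, hQ₂f⟩ | ⟨x, hpc, hQ₁, hQ₂f⟩
      · exact absurd hQ₂f impossible
      · -- p = [d k, y] with y = b
        injection hty with e1 e2
        subst e1; subst e2
        -- now peel Q₂ whose flatten is b :: d k :: G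
        rcases peel hQ₂f hpQ₂ with ⟨Q', hQ', _⟩ | ⟨z, t'', Q', hQ', htz, hQ'f⟩
        · exact absurd (by simp [hQ, hQ']) h1
        · injection htz with e3 e4
          subst e3; subst e4
          have hQfull : Q = Q₁ ++ [d k, b] :: [b, d k] :: Q' := by rw [hQ, hQ', hpc]
          obtain ⟨Ps', hF, hsub⟩ := ih (k+1) Q'
            (fun v hv x hx => hS v (by simp at hv ⊢; tauto) x hx)
            (fun j hj hj2 => hdel j (by omega) (by simp at hj2 ⊢; omega))
            hQ'f
            (fun q hq => hp q (by simp [hQfull, hq]))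
            (fun hmem => h1 (by simp [hQfull]; tauto))
            (fun hmem => h2 (by simp [hQfull]; tauto))
          refine ⟨Q₁ :: Ps', List.Forall₂.cons ⟨hQ₁, fun q hq => hp q (by simp [hQfull, hq])⟩ hF, ?_⟩
          rw [hQfull]
          have : List.Sublist Ps'.flatten ([d k, b] :: [b, d k] :: Q') := (hsub.cons _).cons _
          simpa using this.append_left Q₁
      · exact absurd hQ₂f impossible



theorem forall₂_mem_right {α β : Type*} {R : α → β → Prop} :
    ∀ {ws : List α} {Ps : List β}, List.Forall₂ R ws Ps → ∀ Q ∈ Ps, ∃ w ∈ ws, R w Q := by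
  intro ws Ps h
  induction h with
  | nil => intro Q hQ; simp at hQ
  | cons hR hF ih =>
    intro Q hQ
    rcases List.mem_cons.1 hQ with rfl | hQ
    · exact ⟨_, by simp, hR⟩
    · obtain ⟨w, hw, hwQ⟩ := ih Q hQ
      exact ⟨w, by simp [hw], hwQ⟩

theorem interP_flatten (e : ℕ → List (List γ)) (g : ℕ → List γ)
    (hg : ∀ j, (e j).flatten = g j) :
    ∀ (ws : List (List γ)) (k : ℕ) (Qs : List (List (List γ))),
    List.Forall₂ (fun w Q => List.flatten Q = w) ws Qs →
    (interP e k Qs).flatten = glue g k ws := by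
  intro ws
  induction ws with
  | nil =>
    intro k Qs h
    cases h
    simp [interP, glue]
  | cons w ws' ih =>
    intro k Qs h
    rcases h with _ | ⟨hQ, htail⟩
    rename_i Q Qs'
    cases ws' with
    | nil => cases htail; simpa [interP, glue] using hQ
    | cons w' ws'' =>
      rcases htail with _ | ⟨hQ', htail'⟩
      rename_i Q' Qs''
      rw [interP_cons]
      have hglue : glue g k (w :: w' :: ws'') = w ++ g k ++ glue g (k+1) (w' :: ws'') := rfl
      rw [hglue, ← ih (k+1) (Q' :: Qs'') (List.Forall₂.cons hQ' htail'), ← hQ, ← hg k]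
      simp

theorem interP_mem (e : ℕ → List (List γ)) :
    ∀ (Qs : List (List (List γ))) (k : ℕ) (p : List γ), p ∈ interP e k Qs →
    p ∈ Qs.flatten ∨ ∃ j, k ≤ j ∧ j + 2 ≤ k + Qs.length ∧ p ∈ e j := by
  intro Qs
  induction Qs with
  | nil => intro k p hp; simp [interP] at hp
  | cons Q Qs' ih =>
    intro k p hp
    cases Qs' with
    | nil => exact Or.inl (by simpa [interP] using hp)
    | cons Q' Qs'' =>
      rw [interP_cons] at hp
      simp only [List.mem_append] at hp
      rcases hp with (hp | hp) | hp
      · exact Or.inl (by simp [hp])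
      · exact Or.inr ⟨k, le_rfl, by simp, hp⟩
      · rcases ih (k+1) p hp with h | ⟨j, hj1, hj2, hj3⟩
        · exact Or.inl (by simp at h ⊢; tauto)
        · exact Or.inr ⟨j, by omega, by simp at hj2 ⊢; omega, hj3⟩

theorem ne_of_allS {S : Set γ} {q p : List γ} {c : γ}
    (hq : ∀ x ∈ q, x ∈ S) (hc : c ∉ S) (hcp : c ∈ p) : q ≠ p :=
  fun h => hc (hq c (h ▸ hcp))

theorem interP_pairwise (S : Set γ) (b : γ) (d : ℕ → γ) (hb : b ∉ S) :
    ∀ (Qs : List (List (List γ))) (k : ℕ),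
    (∀ p ∈ Qs.flatten, ∀ x ∈ p, x ∈ S) →
    (∀ j, k ≤ j → j + 2 ≤ k + Qs.length → d j ∉ S ∧ d j ≠ b) →
    (∀ i j, k ≤ i → i + 2 ≤ k + Qs.length → k ≤ j → j + 2 ≤ k + Qs.length →
      d i = d j → i = j) →
    Qs.flatten.Pairwise (· ≠ ·) →
    (interP (fun j => [[d j, b], [b, d j]]) k Qs).Pairwise (· ≠ ·) := by
  intro Qs
  induction Qs with
  | nil => intro k _ _ _ _; simp [interP]
  | cons Q Qs' ih =>
    intro k hS hdel hinj hpw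
    cases Qs' with
    | nil => simpa [interP] using hpw
    | cons Q' Qs'' =>
      have hdk : d k ∉ S ∧ d k ≠ b := hdel k le_rfl (by simp)
      set I := interP (fun j => [[d j, b], [b, d j]]) (k+1) (Q' :: Qs'') with hI
      have hunfold : interP (fun j => [[d j, b], [b, d j]]) k (Q :: Q' :: Qs'')
          = Q ++ [d k, b] :: [b, d k] :: I := by
        rw [interP_cons]; simp [hI]
      rw [hunfold]
      have hflat : (Q :: Q' :: Qs'').flatten = Q ++ (Q' :: Qs'').flatten := by simp
      rw [hflat, List.pairwise_append] at hpw
      obtain ⟨hpwQ, hpwrest, hcross⟩ := hpw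
      have hSrest : ∀ p ∈ (Q' :: Qs'').flatten, ∀ x ∈ p, x ∈ S := by
        intro p hp; exact hS p (by simp at hp ⊢; tauto)
      have hSQ : ∀ p ∈ Q, ∀ x ∈ p, x ∈ S := by
        intro p hp; exact hS p (by simp [hp])
      have hmem : ∀ p ∈ I, p ∈ (Q' :: Qs'').flatten ∨
          ∃ j, k + 1 ≤ j ∧ j + 2 ≤ k + 1 + (Q' :: Qs'').length ∧
            (p = [d j, b] ∨ p = [b, d j]) := by
        intro p hp
        rcases interP_mem _ _ _ _ hp with h | ⟨j, hj1, hj2, hj3⟩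
        · exact Or.inl h
        · simp at hj3
          exact Or.inr ⟨j, hj1, hj2, hj3⟩
      rw [List.pairwise_append]
      refine ⟨hpwQ, ?_, ?_⟩
      · refine List.Pairwise.cons ?_ (List.Pairwise.cons ?_ ?_)
        · -- [d k, b] vs everything after
          intro p hp
          rcases List.mem_cons.1 hp with rfl | hp
          · intro h; simp at h; exact hdk.2 h.1
          · rcases hmem p hp with h | ⟨j, hj1, hj2, hj3⟩
            · exact (ne_of_allS (hSrest p h) hdk.1 (by simp)).symm
            · rcases hj3 with rfl | rfl
              · intro h; simp at h
                have := hinj k j le_rfl (by simp) (by omega) (by simp at hj2 ⊢; omega) h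
                omega
              · intro h; simp at h; exact hdk.2 h.1
        · -- [b, d k] vs members of I
          intro p hp
          rcases hmem p hp with h | ⟨j, hj1, hj2, hj3⟩
          · exact (ne_of_allS (hSrest p h) hdk.1 (by simp)).symm
          · rcases hj3 with rfl | rfl
            · intro h; simp at h
              exact (hdel j (by omega) (by simp at hj2 ⊢; omega)).2 h.1.symm
            · intro h; simp at h
              have := hinj k j le_rfl (by simp) (by omega) (by simp at hj2 ⊢; omega) h
              omega
        · exact ih (k+1) hSrest
            (fun j hj1 hj2 => hdel j (by omega) (by simp at hj2 ⊢; omega))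
            (fun i j hi1 hi2 hj1 hj2 => hinj i j (by omega) (by simp at hi2 ⊢; omega)
              (by omega) (by simp at hj2 ⊢; omega))
            hpwrest
      · -- cross: members of Q versus the frame/rest
        intro q hq p hp
        have hqS : ∀ x ∈ q, x ∈ S := hSQ q hq
        rcases List.mem_cons.1 hp with rfl | hp
        · exact ne_of_allS hqS hdk.1 (by simp)
        rcases List.mem_cons.1 hp with rfl | hp
        · exact ne_of_allS hqS hdk.1 (by simp)
        rcases hmem p hp with h | ⟨j, hj1, hj2, hj3⟩
        · exact hcross q hq p h
        · rcases hj3 with rfl | rfl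
          · exact ne_of_allS hqS (hdel j (by omega) (by simp at hj2 ⊢; omega)).1 (by simp)
          · exact ne_of_allS hqS (hdel j (by omega) (by simp at hj2 ⊢; omega)).1 (by simp)

end Stmt3Aux

/-- `w̄ = ⊡⊡⊡⊡⊟ w₁ d₁⊡⊡d₁ w₂ d₂⊡⊡d₂ ⋯ d_{ℓ−1}⊡⊡d_{ℓ−1} w_ℓ` has an
equality-free 2-partition iff the multiset `{w₁, …, w_ℓ}` has one.
Here `S` is the set of letters of the alphabet `Σ` over which the `wᵢ` are
strings, and `box = ⊡`, `minus = ⊟`, `d 1, …, d (ℓ-1)` are pairwise distinct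
letters not in `S`. -/
theorem stmt_3 {γ : Type*} (S : Set γ) (box minus : γ) (d : ℕ → γ)
    (ws : List (List γ)) (hws : ws ≠ []) (hne : ∀ w ∈ ws, w ≠ [])
    (hsub : ∀ w ∈ ws, ∀ x ∈ w, x ∈ S)
    (hbox : box ∉ S) (hminus : minus ∉ S) (hbm : box ≠ minus)
    (hd : ∀ i, 1 ≤ i → i ≤ ws.length - 1 → d i ∉ S ∧ d i ≠ box ∧ d i ≠ minus)
    (hinj : ∀ i j, 1 ≤ i → i ≤ ws.length - 1 → 1 ≤ j → j ≤ ws.length - 1 →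
      d i = d j → i = j) :
    (∃ P, IsPartition 2
        ([box, box, box, box, minus] ++ glue (fun k => [d k, box, box, d k]) 1 ws) P ∧
      EqFree P) ↔
    (∃ Ps, IsMultiPartition 2 ws Ps ∧ EqFree Ps.flatten) := by
  constructor
  · -- forward direction
    rintro ⟨P, ⟨hflat, hp⟩, hEF⟩
    set G := glue (fun k => [d k, box, box, d k]) 1 ws with hG
    have hflat' : P.flatten = box :: box :: box :: box :: minus :: G := by
      simpa using hflat
    unfold EqFree at hEF
    have key : ∀ Q : List (List γ), Q.flatten = G →
        (∀ p ∈ Q, p ≠ [] ∧ p.length ≤ 2) →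
        [box] ∉ Q → [box, box] ∉ Q → Q.Pairwise (· ≠ ·) →
        ∃ Ps, IsMultiPartition 2 ws Ps ∧ EqFree Ps.flatten := by
      intro Q hQf hQp hQ1 hQ2 hQpw
      obtain ⟨Ps, hF, hsubl⟩ := Stmt3Aux.extract S box d ws 1 Q hsub
        (fun j hj hj2 => ⟨(hd j hj (by omega)).1, (hd j hj (by omega)).2.1⟩)
        hQf hQp hQ1 hQ2
      exact ⟨Ps, hF, List.Pairwise.sublist hsubl hQpw⟩
    rcases Stmt3Aux.peel hflat' hp with ⟨P₁, rfl, h1⟩ | ⟨y, t1, P₁, rfl, hty, h1⟩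
    · -- P = [box] :: P₁
      have hp₁ : ∀ p ∈ P₁, p ≠ [] ∧ p.length ≤ 2 := fun p hq => hp p (by simp [hq])
      rcases Stmt3Aux.peel h1 hp₁ with ⟨P₂, rfl, h2⟩ | ⟨y, t2, P₂, rfl, hty2, h2⟩
      · exact absurd rfl ((List.pairwise_cons.1 hEF).1 [box] (by simp))
      · injection hty2 with e1 e2; subst e1; subst e2
        have hp₂ : ∀ p ∈ P₂, p ≠ [] ∧ p.length ≤ 2 := fun p hq => hp p (by simp [hq])
        rcases Stmt3Aux.peel h2 hp₂ with ⟨P₃, rfl, h3⟩ | ⟨y, t3, P₃, rfl, hty3, h3⟩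
        · exact absurd rfl ((List.pairwise_cons.1 hEF).1 [box] (by simp))
        · injection hty3 with e1 e2; subst e1; subst e2
          have hEF1 := List.pairwise_cons.1 hEF
          have hEF2 := List.pairwise_cons.1 hEF1.2
          have hEF3 := List.pairwise_cons.1 hEF2.2
          exact key P₃ h3 (fun p hq => hp p (by simp [hq]))
            (fun hm => hEF1.1 [box] (by simp [hm]) rfl)
            (fun hm => hEF2.1 [box, box] (by simp [hm]) rfl)
            hEF3.2
    · -- P = [box, y] :: P₁
      injection hty with e1 e2; subst e1; subst e2
      have hp₁ : ∀ p ∈ P₁, p ≠ [] ∧ p.length ≤ 2 := fun p hq => hp p (by simp [hq])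
      rcases Stmt3Aux.peel h1 hp₁ with ⟨P₂, rfl, h2⟩ | ⟨y, t2, P₂, rfl, hty2, h2⟩
      · -- P = [box,box] :: [box] :: P₂
        have hp₂ : ∀ p ∈ P₂, p ≠ [] ∧ p.length ≤ 2 := fun p hq => hp p (by simp [hq])
        rcases Stmt3Aux.peel h2 hp₂ with ⟨P₃, rfl, h3⟩ | ⟨y, t3, P₃, rfl, hty3, h3⟩
        · exact absurd rfl ((List.pairwise_cons.1 (List.pairwise_cons.1 hEF).2).1 [box] (by simp))
        · injection hty3 with e1 e2; subst e1; subst e2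
          have hEF1 := List.pairwise_cons.1 hEF
          have hEF2 := List.pairwise_cons.1 hEF1.2
          have hEF3 := List.pairwise_cons.1 hEF2.2
          exact key P₃ h3 (fun p hq => hp p (by simp [hq]))
            (fun hm => hEF2.1 [box] (by simp [hm]) rfl)
            (fun hm => hEF1.1 [box, box] (by simp [hm]) rfl)
            hEF3.2
      · injection hty2 with e1 e2; subst e1; subst e2
        exact absurd rfl ((List.pairwise_cons.1 hEF).1 [box, box] (by simp))
  · -- backward direction
    rintro ⟨Ps, hMP, hEF⟩
    unfold IsMultiPartition at hMP
    unfold EqFree at hEF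
    have hlen : ws.length = Ps.length := hMP.length_eq
    have hwslen : 1 ≤ ws.length := List.length_pos_iff.2 hws
    have hflat2 : List.Forall₂ (fun w Q => List.flatten Q = w) ws Ps :=
      hMP.imp (fun {_ _} h => h.1)
    have Smem : ∀ p ∈ Ps.flatten, p ≠ [] ∧ p.length ≤ 2 ∧ ∀ x ∈ p, x ∈ S := by
      intro p hp
      rw [List.mem_flatten] at hp
      obtain ⟨Q, hQ, hpQ⟩ := hp
      obtain ⟨w, hw, hIP⟩ := Stmt3Aux.forall₂_mem_right hMP Q hQ
      refine ⟨(hIP.2 p hpQ).1, (hIP.2 p hpQ).2, fun x hx => hsub w hw x ?_⟩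
      rw [← hIP.1]
      exact List.mem_flatten.2 ⟨p, hpQ, hx⟩
    have hdel' : ∀ j, 1 ≤ j → j + 2 ≤ 1 + Ps.length → d j ∉ S ∧ d j ≠ box :=
      fun j h1 h2 => ⟨(hd j h1 (by omega)).1, (hd j h1 (by omega)).2.1⟩
    have hinj' : ∀ i j, 1 ≤ i → i + 2 ≤ 1 + Ps.length → 1 ≤ j → j + 2 ≤ 1 + Ps.length →
        d i = d j → i = j :=
      fun i j h1 h2 h3 h4 => hinj i j h1 (by omega) h3 (by omega)
    refine ⟨[[box, box], [box], [box, minus]] ++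
      Stmt3Aux.interP (fun j => [[d j, box], [box, d j]]) 1 Ps, ⟨?_, ?_⟩, ?_⟩
    · -- flatten
      have hIf := Stmt3Aux.interP_flatten (fun j => [[d j, box], [box, d j]])
        (fun j => [d j, box, box, d j]) (by intro j; simp) ws 1 Ps hflat2
      simp [hIf]
    · -- pieces
      intro p hp
      rcases List.mem_append.1 hp with h | h
      · simp at h; rcases h with rfl | rfl | rfl <;> simp
      · rcases Stmt3Aux.interP_mem _ _ _ _ h with h' | ⟨j, hj1, hj2, hj3⟩
        · exact ⟨(Smem p h').1, (Smem p h').2.1⟩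
        · simp at hj3; rcases hj3 with rfl | rfl <;> simp
    · -- equality-freeness
      unfold EqFree
      rw [List.pairwise_append]
      refine ⟨?_, ?_, ?_⟩
      · -- the three prefix pieces are pairwise distinct
        refine List.Pairwise.cons ?_ (List.Pairwise.cons ?_ (List.Pairwise.cons ?_ List.Pairwise.nil))
        · intro p hp
          rcases List.mem_cons.1 hp with rfl | hp
          · simp
          · simp at hp; subst hp; intro h; simp at h; exact hbm h
        · intro p hp
          simp at hp; subst hp; simp
        · intro p hp; simp at hp
      · exact Stmt3Aux.interP_pairwise S box d hbox Ps 1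
          (fun p hp => (Smem p hp).2.2) hdel' hinj' hEF
      · -- prefix pieces differ from every piece of the interleaving
        intro a ha p hp
        rcases Stmt3Aux.interP_mem _ _ _ _ hp with h' | ⟨j, hj1, hj2, hj3⟩
        · have hpS := (Smem p h').2.2
          simp at ha
          rcases ha with rfl | rfl | rfl <;>
            exact (Stmt3Aux.ne_of_allS hpS hbox (by simp)).symm
        · simp at hj3
          have hdj := hd j hj1 (by omega)
          simp at ha
          rcases ha with rfl | rfl | rfl <;> rcases hj3 with rfl | rfl
          · intro h; simp at h; exact hdj.2.1 h.symm
          · intro h; simp at h; exact hdj.2.1 h.symm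
          · intro h; simp at h
          · intro h; simp at h
          · intro h; simp at h; exact hdj.2.1 h.1.symm
          · intro h; simp at h; exact hdj.2.2 h.symm
end

section
/- Let a and z be distinct letters and let f = aza. Let 𝒲 be a finite multiset of strings containing f such that every letter occurring in some string of 𝒲 occurs at least twice in total, counting all occurrences across all strings of 𝒲. Then for every K ≥ 3, in any factor-free K-partition of 𝒲, the string f is selected as a whole (its partition has no non-trivial cut point), and consequently no selected string occurring in the partition of any other string of 𝒲 is a factor of f. -/
/-- A partition is factor-free if no selected string at one occurrence is a
factor (contiguous substring) of a selected string at another occurrence. -/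
def FactorFree {α : Type*} (P : List (List α)) : Prop :=
  P.Pairwise fun a b => ¬ a <:+: b ∧ ¬ b <:+: a

lemma key_aza {α : Type*} (a z : α) (P : List (List α))
    (hfl : P.flatten = [a, z, a]) (hne : ∀ p ∈ P, p ≠ [])
    (hpw : P.Pairwise fun s t => ¬ s <:+: t ∧ ¬ t <:+: s) :
    P = [[a, z, a]] := by
  rcases P with _ | ⟨p, P'⟩
  · simp at hfl
  rcases P' with _ | ⟨p', rest⟩
  · simp_all
  exfalso
  have hp : p ≠ [] := hne p (by simp)
  have hp' : p' ≠ [] := hne p' (by simp)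
  simp only [List.flatten_cons, List.append_assoc] at hfl
  rw [List.pairwise_cons] at hpw
  rcases p with _ | ⟨x, _ | ⟨y, _ | ⟨u, p''⟩⟩⟩
  · exact hp rfl
  · -- p = [x]
    simp only [List.cons_append, List.nil_append, List.cons.injEq] at hfl
    obtain ⟨rfl, hrest⟩ := hfl
    rcases p' with _ | ⟨y, _ | ⟨y', _ | ⟨y'', p₃⟩⟩⟩
    · exact hp' rfl
    · simp only [List.cons_append, List.nil_append, List.cons.injEq] at hrest
      obtain ⟨rfl, hr2⟩ := hrest
      rcases rest with _ | ⟨r, rest'⟩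
      · simp at hr2
      have hrne : r ≠ [] := hne r (by simp)
      simp only [List.flatten_cons, List.append_assoc] at hr2
      rcases r with _ | ⟨u, _ | ⟨v, r'⟩⟩
      · exact hrne rfl
      · simp only [List.cons_append, List.nil_append, List.cons.injEq] at hr2
        obtain ⟨rfl, -⟩ := hr2
        exact (hpw.1 [u] (by simp)).1 (List.infix_refl _)
      · simp only [List.cons_append, List.cons.injEq] at hr2
        simp at hr2
    · simp only [List.cons_append, List.nil_append, List.cons.injEq] at hrest
      obtain ⟨rfl, rfl, -⟩ := hrest
      exact (hpw.1 _ List.mem_cons_self).1 (List.suffix_cons _ _).isInfix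
    · simp only [List.cons_append, List.cons.injEq] at hrest
      simp at hrest
  · -- p = [x, y]
    simp only [List.cons_append, List.nil_append, List.cons.injEq] at hfl
    obtain ⟨rfl, rfl, hrest⟩ := hfl
    rcases p' with _ | ⟨u, _ | ⟨v, p₃⟩⟩
    · exact hp' rfl
    · simp only [List.cons_append, List.nil_append, List.cons.injEq] at hrest
      obtain ⟨rfl, -⟩ := hrest
      exact (hpw.1 [u] (by simp)).2 ⟨[], [y], rfl⟩
    · simp only [List.cons_append, List.cons.injEq] at hrest
      simp at hrest
  · -- p length ≥ 3
    simp only [List.cons_append, List.cons.injEq] at hfl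
    obtain ⟨-, -, -, hemp⟩ := hfl
    simp at hemp
    exact hp' hemp.2.1

lemma forall₂_append_decomp {α β : Type*} {R : α → β → Prop} :
    ∀ {l₁ l₂ : List α} {u : List β}, List.Forall₂ R (l₁ ++ l₂) u →
      ∃ u₁ u₂, List.Forall₂ R l₁ u₁ ∧ List.Forall₂ R l₂ u₂ ∧ u = u₁ ++ u₂ := by
  intro l₁
  induction l₁ with
  | nil => exact fun h => ⟨[], _, List.Forall₂.nil, h, rfl⟩
  | cons x l₁ ih =>
    intro l₂ u h
    rw [List.cons_append] at h
    obtain ⟨b, u', hb, h', rfl⟩ := List.forall₂_cons_left_iff.mp h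
    obtain ⟨u₁, u₂, hu₁, hu₂, rfl⟩ := ih h'
    exact ⟨b :: u₁, u₂, List.Forall₂.cons hb hu₁, hu₂, rfl⟩


/-- Let `f = aza` with `a ≠ z`, and let the multiset `ws = l₁ ++ f :: l₂`
contain `f`, with every occurring letter occurring at least twice in total.
Then for every `K ≥ 3`, in any factor-free `K`-partition of `ws` the string
`f` is selected as a whole (its partition is the single block `[f]`), and no
selected string in the partition of any other string of `ws` is a factor
of `f`. -/
theorem stmt_7 {α : Type*} [DecidableEq α] (a z : α) (haz : a ≠ z)
    (l₁ l₂ : List (List α))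
    (hocc : ∀ x : α, (∃ w ∈ l₁ ++ [a, z, a] :: l₂, x ∈ w) →
      2 ≤ (l₁ ++ [a, z, a] :: l₂).flatten.count x)
    (K : ℕ) (hK : 3 ≤ K) :
    ∀ Ps, IsMultiPartition K (l₁ ++ [a, z, a] :: l₂) Ps → FactorFree Ps.flatten →
      ∃ q₁ q₂, Ps = q₁ ++ [[a, z, a]] :: q₂ ∧ q₁.length = l₁.length ∧
        ∀ s ∈ (q₁ ++ q₂).flatten, ¬ s <:+: [a, z, a] := by
  intro Ps hmp hff
  rw [IsMultiPartition] at hmp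
  obtain ⟨q₁, Ps₂, h1, h2, rfl⟩ := forall₂_append_decomp hmp
  obtain ⟨P, q₂, hP, h3, rfl⟩ := List.forall₂_cons_left_iff.mp h2
  rw [FactorFree] at hff
  have hsub : List.Sublist P ((q₁ ++ P :: q₂).flatten) := by
    have h4 : List.Sublist P (q₁.flatten ++ (P ++ q₂.flatten)) :=
      (List.sublist_append_left P q₂.flatten).trans
        (List.sublist_append_right _ _)
    simpa using h4
  have hPeq : P = [[a, z, a]] :=
    key_aza a z P hP.1 (fun p hp => (hP.2 p hp).1) (hff.sublist hsub)
  subst hPeq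
  refine ⟨q₁, q₂, rfl, h1.length_eq.symm, ?_⟩
  intro s hs
  have hflat : (q₁ ++ [[a, z, a]] :: q₂).flatten
      = q₁.flatten ++ [a, z, a] :: q₂.flatten := by simp
  rw [hflat] at hff
  rw [List.pairwise_append] at hff
  simp only [List.flatten_append, List.mem_append] at hs
  rcases hs with hs | hs
  · exact (hff.2.2 s hs [a, z, a] (by simp)).1
  · exact (List.pairwise_cons.mp hff.2.1).1 s hs |>.2
end

section
/- Let a, b, c and z be pairwise distinct letters. In any factor-free 3-partition of the string aazbbzcc in which no selected string has length 1, at least one of the strings aa, bb, cc is a selected string. Similarly, in any factor-free 3-partition of the string aazbb in which no selected string has length 1, at least one of aa, bb is a selected string. -/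
theorem stmt_8 {α : Type*} (a b c z : α)
    (hab : a ≠ b) (hac : a ≠ c) (haz : a ≠ z)
    (hbc : b ≠ c) (hbz : b ≠ z) (hcz : c ≠ z) :
    (∀ P : List (List α), IsPartition 3 [a, a, z, b, b, z, c, c] P →
      FactorFree P → (∀ s ∈ P, s.length ≠ 1) →
      ([a, a] ∈ P ∨ [b, b] ∈ P ∨ [c, c] ∈ P)) ∧
    (∀ P : List (List α), IsPartition 3 [a, a, z, b, b] P →
      FactorFree P → (∀ s ∈ P, s.length ≠ 1) →
      ([a, a] ∈ P ∨ [b, b] ∈ P)) := by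
  have hlen23 : ∀ (P : List (List α)) (p : List α), (∀ q ∈ P, q ≠ [] ∧ q.length ≤ 3) →
      (∀ s ∈ P, s.length ≠ 1) → p ∈ P → p.length = 2 ∨ p.length = 3 := by
    intro P p h1 h2 hp
    obtain ⟨hne, hle⟩ := h1 p hp
    have h1' := h2 p hp
    have h0 : p.length ≠ 0 := by simpa using hne
    omega
  constructor
  · rintro (_ | ⟨p, P⟩) ⟨hflat, hmem⟩ _ hlen
    · simp at hflat
    · rcases hlen23 _ p hmem hlen (List.mem_cons_self) with h2 | h3
      · obtain ⟨x, y, rfl⟩ := List.length_eq_two.mp h2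
        simp only [List.flatten_cons, List.cons_append, List.nil_append,
          List.cons.injEq] at hflat
        obtain ⟨rfl, rfl, -⟩ := hflat
        exact Or.inl (List.mem_cons_self)
      · obtain ⟨x, y, w, rfl⟩ := List.length_eq_three.mp h3
        simp only [List.flatten_cons, List.cons_append, List.nil_append,
          List.cons.injEq] at hflat
        obtain ⟨rfl, rfl, rfl, hflat⟩ := hflat
        rcases P with _ | ⟨q, Q⟩
        · simp at hflat
        · rcases hlen23 _ q hmem hlen (by simp) with h2' | h3'
          · obtain ⟨u, v, rfl⟩ := List.length_eq_two.mp h2'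
            simp only [List.flatten_cons, List.cons_append, List.nil_append,
              List.cons.injEq] at hflat
            obtain ⟨rfl, rfl, -⟩ := hflat
            exact Or.inr (Or.inl (by simp))
          · obtain ⟨u, v, t, rfl⟩ := List.length_eq_three.mp h3'
            simp only [List.flatten_cons, List.cons_append, List.nil_append,
              List.cons.injEq] at hflat
            obtain ⟨rfl, rfl, rfl, hflat⟩ := hflat
            rcases Q with _ | ⟨r, R⟩
            · simp at hflat
            · rcases hlen23 _ r hmem hlen (by simp) with h2'' | h3''
              · obtain ⟨s1, s2, rfl⟩ := List.length_eq_two.mp h2''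
                simp only [List.flatten_cons, List.cons_append, List.nil_append,
                  List.cons.injEq] at hflat
                obtain ⟨rfl, rfl, -⟩ := hflat
                exact Or.inr (Or.inr (by simp))
              · obtain ⟨s1, s2, s3, rfl⟩ := List.length_eq_three.mp h3''
                have := congrArg List.length hflat
                simp at this
  · rintro (_ | ⟨p, P⟩) ⟨hflat, hmem⟩ _ hlen
    · simp at hflat
    · rcases hlen23 _ p hmem hlen (List.mem_cons_self) with h2 | h3
      · obtain ⟨x, y, rfl⟩ := List.length_eq_two.mp h2
        simp only [List.flatten_cons, List.cons_append, List.nil_append,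
          List.cons.injEq] at hflat
        obtain ⟨rfl, rfl, -⟩ := hflat
        exact Or.inl (List.mem_cons_self)
      · obtain ⟨x, y, w, rfl⟩ := List.length_eq_three.mp h3
        simp only [List.flatten_cons, List.cons_append, List.nil_append,
          List.cons.injEq] at hflat
        obtain ⟨rfl, rfl, rfl, hflat⟩ := hflat
        rcases P with _ | ⟨q, Q⟩
        · simp at hflat
        · rcases hlen23 _ q hmem hlen (by simp) with h2' | h3'
          · obtain ⟨u, v, rfl⟩ := List.length_eq_two.mp h2'
            simp only [List.flatten_cons, List.cons_append, List.nil_append,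
              List.cons.injEq] at hflat
            obtain ⟨rfl, rfl, -⟩ := hflat
            exact Or.inr (by simp)
          · obtain ⟨u, v, t, rfl⟩ := List.length_eq_three.mp h3'
            have := congrArg List.length hflat
            simp at this
end

section
/- Let K ≥ 2, let x be a letter, and let α and β be letters different from x (possibly α = β). If a string w contains the factor α x^{3K−2} β at some position, then in any factor-free K-partition of w, the part of the partition covering this occurrence consists of exactly three consecutive selected strings, namely α x^{K−1}, x^K and x^{K−1}β; in particular, the strings α x^{K−1}, x^K and x^{K−1}β are selected. -/
lemma split_at_pos {α : Type*} : ∀ (P : List (List α)) (n : ℕ), n < P.flatten.length →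
    ∃ P₁ s₁ s₂ P₂, P = P₁ ++ (s₁ ++ s₂) :: P₂ ∧ s₂ ≠ [] ∧ P₁.flatten.length + s₁.length = n := by
  intro P
  induction P with
  | nil => simp
  | cons p rest ih =>
    intro n hn
    by_cases h : n < p.length
    · refine ⟨[], p.take n, p.drop n, rest, by simp, ?_, by simp; omega⟩
      simp [List.drop_eq_nil_iff]; omega
    · obtain ⟨P₁, s₁, s₂, P₂, h1, h2, h3⟩ := ih (n - p.length) (by simp at hn ⊢; omega)
      refine ⟨p :: P₁, s₁, s₂, P₂, by simp [h1], h2, ?_⟩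
      simp only [List.flatten_cons, List.length_append]
      omega

lemma rep_infix {α : Type*} (x : α) {m n : ℕ} (h : m ≤ n) :
    List.replicate m x <:+: List.replicate n x :=
  ⟨[], List.replicate (n - m) x, by
    rw [List.nil_append, ← List.replicate_add]
    congr 1
    omega⟩

/-- If `w = u ++ a x^{3K−2} b ++ v` (with `a, b ≠ x`, `K ≥ 2`), then in any
factor-free `K`-partition of `w` the part covering the occurrence
`a x^{3K−2} b` consists of exactly the three consecutive selected strings
`a x^{K−1}`, `x^K` and `x^{K−1} b`; in particular these strings are selected. -/
theorem stmt_10 {α : Type*} (K : ℕ) (hK : 2 ≤ K) (x a b : α)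
    (hax : a ≠ x) (hbx : b ≠ x) (u v : List α) :
    ∀ P, IsPartition K (u ++ [a] ++ List.replicate (3 * K - 2) x ++ [b] ++ v) P →
      FactorFree P →
      ∃ P₁ P₂, P = P₁ ++ [[a] ++ List.replicate (K - 1) x,
                          List.replicate K x,
                          List.replicate (K - 1) x ++ [b]] ++ P₂ ∧
        P₁.flatten = u := by
  intro P hP hFF
  obtain ⟨hflat, hparts⟩ := hP
  set N := 3 * K - 2 with hN
  -- Step A: split at position u.length
  obtain ⟨P₁, s₁, s₂, P₂, hPe, hs₂ne, hlen⟩ := split_at_pos P u.length (by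
    rw [hflat]; simp)
  have hw : (P₁.flatten ++ s₁) ++ (s₂ ++ P₂.flatten) =
      u ++ ([a] ++ (List.replicate N x ++ ([b] ++ v))) := by
    have h := hflat
    rw [hPe] at h
    simp only [List.flatten_append, List.flatten_cons, List.append_assoc] at h ⊢
    exact h
  have hlen' : (P₁.flatten ++ s₁).length = u.length := by
    rw [List.length_append]; exact hlen
  obtain ⟨htake, hdrop⟩ := List.append_inj hw hlen'
  obtain ⟨c, s₂', rfl⟩ := List.exists_cons_of_ne_nil hs₂ne
  obtain ⟨hca, hdrop'⟩ : c = a ∧ s₂' ++ P₂.flatten = List.replicate N x ++ (b :: v) := by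
    simpa using hdrop
  rw [hca] at hPe
  -- the part containing a
  have hpmem : (s₁ ++ a :: s₂') ∈ P := by rw [hPe]; simp
  have hplen : (s₁ ++ a :: s₂').length ≤ K := (hparts _ hpmem).2
  have hplen' : s₁.length + (s₂'.length + 1) ≤ K := by
    simpa using hplen
  have hi : s₂'.length ≤ K - 1 := by omega
  have hiN : s₂'.length ≤ N := by omega
  -- s₂' is pure x
  have hs2rep : s₂' = List.replicate s₂'.length x := by
    have h1 : s₂' = (List.replicate N x ++ (b :: v)).take s₂'.length := by
      rw [← hdrop', List.take_left' rfl]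
    rw [List.take_append, List.take_replicate, min_eq_left hiN] at h1
    have h0 : s₂'.length - (List.replicate N x).length = 0 := by simp; omega
    rw [h0] at h1; simpa using h1
  have hP₂flat : P₂.flatten = List.replicate (N - s₂'.length) x ++ (b :: v) := by
    have h := congrArg (·.drop s₂'.length) hdrop'
    rw [List.drop_left' rfl, List.drop_append, List.drop_replicate] at h
    have h0 : s₂'.length - (List.replicate N x).length = 0 := by simp; omega
    rw [h0] at h; simpa using h
  -- Step C: split P₂ at position N - s₂'.length
  obtain ⟨Q₁, t₁, t₂, Q₂, hQe, ht₂ne, hlen2⟩ := split_at_pos P₂ (N - s₂'.length) (by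
    rw [hP₂flat]; simp)
  have hw2 : (Q₁.flatten ++ t₁) ++ (t₂ ++ Q₂.flatten) =
      List.replicate (N - s₂'.length) x ++ (b :: v) := by
    have h := hP₂flat
    rw [hQe] at h
    simp only [List.flatten_append, List.flatten_cons, List.append_assoc] at h
    simp only [List.append_assoc]
    exact h
  have hlen2' : (Q₁.flatten ++ t₁).length = (List.replicate (N - s₂'.length) x).length := by
    rw [List.length_append, List.length_replicate]; exact hlen2
  obtain ⟨htake2, hdrop2⟩ := List.append_inj hw2 hlen2'
  obtain ⟨d, t₂', rfl⟩ := List.exists_cons_of_ne_nil ht₂ne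
  have hdb : d = b := by
    have := congrArg (·.head?) hdrop2
    simpa using this
  rw [hdb] at hQe
  -- t₁ is pure x
  have ht₁rep : t₁ = List.replicate t₁.length x := by
    refine List.eq_replicate_of_mem fun c hc => ?_
    have : c ∈ List.replicate (N - s₂'.length) x := by
      rw [← htake2]; exact List.mem_append_right _ hc
    exact List.eq_of_mem_replicate this
  -- q = t₁ ++ b :: t₂' is a part
  have hqmem : (t₁ ++ b :: t₂') ∈ P := by rw [hPe, hQe]; simp
  have hqlen : (t₁ ++ b :: t₂').length ≤ K := (hparts _ hqmem).2
  have hqlen' : t₁.length + (t₂'.length + 1) ≤ K := by simpa using hqlen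
  have hjK : t₁.length ≤ K - 1 := by omega
  -- every element of Q₁ is a nonempty pure power of x
  have hQ₁x : ∀ q ∈ Q₁, q = List.replicate q.length x ∧ 1 ≤ q.length ∧ q.length ≤ K := by
    intro q hq
    have hqP : q ∈ P := by rw [hPe, hQe]; simp; tauto
    have hne := (hparts q hqP).1
    refine ⟨List.eq_replicate_of_mem fun c hc => ?_, ?_, (hparts q hqP).2⟩
    · have : c ∈ List.replicate (N - s₂'.length) x := by
        rw [← htake2]
        exact List.mem_append_left _ (List.mem_flatten.2 ⟨q, hq, hc⟩)
      exact List.eq_of_mem_replicate this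
    · cases q with
      | nil => simp at hne
      | cons _ _ => simp
  -- Q₁ has at most one element, via factor-freeness
  have hQ₁sub : Q₁.Sublist P := by
    rw [hPe, hQe]
    refine List.Sublist.trans ?_ (List.sublist_append_right _ _)
    refine List.Sublist.trans ?_ (List.sublist_cons_self _ _)
    exact List.Sublist.trans (Q₁.sublist_append_left _) (by rfl)
  have hQ₁pw := hFF.sublist hQ₁sub
  match Q₁, hQe, htake2, hlen2, hQ₁x, hQ₁pw with
  | q₁ :: q₂ :: rest, hQe, htake2, hlen2, hQ₁x, hQ₁pw =>
    exfalso
    have hrel := (List.pairwise_cons.1 hQ₁pw).1 q₂ (by simp)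
    obtain ⟨h1r, -, -⟩ := hQ₁x q₁ (by simp)
    obtain ⟨h2r, -, -⟩ := hQ₁x q₂ (by simp)
    rcases le_total q₁.length q₂.length with h | h
    · exact hrel.1 (by rw [h1r, h2r]; exact rep_infix x h)
    · exact hrel.2 (by rw [h1r, h2r]; exact rep_infix x h)
  | [], hQe, htake2, hlen2, hQ₁x, hQ₁pw =>
    exfalso
    simp only [List.flatten_nil, List.length_nil, Nat.zero_add] at hlen2
    omega
  | [r], hQe, htake2, hlen2, hQ₁x, hQ₁pw =>
    obtain ⟨hr, hr1, hrK⟩ := hQ₁x r (by simp)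
    simp only [List.flatten_cons, List.flatten_nil, List.append_nil,
      List.length_append] at hlen2
    have hiK : s₂'.length = K - 1 := by omega
    have hrKe : r.length = K := by omega
    have hjKe : t₁.length = K - 1 := by omega
    have hs₁nil : s₁ = [] := by
      have : s₁.length = 0 := by omega
      exact List.eq_nil_of_length_eq_zero this
    have ht₂'nil : t₂' = [] := by
      have : t₂'.length = 0 := by omega
      exact List.eq_nil_of_length_eq_zero this
    refine ⟨P₁, Q₂, ?_, ?_⟩
    · rw [hPe, hQe, hs₁nil, ht₂'nil]
      rw [hs2rep, hiK, ht₁rep, hjKe, hr, hrKe]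
      simp
    · rw [hs₁nil] at htake; simpa using htake
end

section
/- Let K ≥ 2, let w₁,…,w_n be nonempty strings over an alphabet Σ, and let α, γ₁,…,γ_{n−1} be pairwise distinct letters not in Σ. Let w′ = w₁ α γ₁^{3K−2} α w₂ α γ₂^{3K−2} α ⋯ α γ_{n−1}^{3K−2} α w_n. Then w′ has a factor-free K-partition if and only if the multiset {w₁,…,w_n} has a factor-free K-partition. -/
namespace Stmt11

variable {A : Type*}

/-- symmetric relation -/
abbrev Rel (p q : List A) : Prop := ¬ p <:+: q ∧ ¬ q <:+: p

lemma flatten_split (x : A) : ∀ (P : List (List A)) (u t : List A),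
    P.flatten = u ++ x :: t →
    ∃ P₁ q₁ q₂ P₂, P = P₁ ++ (q₁ ++ x :: q₂) :: P₂ ∧ P₁.flatten ++ q₁ = u ∧
      q₂ ++ P₂.flatten = t := by
  intro P
  induction P with
  | nil => intro u t h; simp at h
  | cons p P' ih =>
    intro u t h
    simp only [List.flatten_cons] at h
    rcases List.append_eq_append_iff.mp h with ⟨a', rfl, h2⟩ | ⟨c', rfl, h2⟩
    · obtain ⟨P₁, q₁, q₂, P₂, rfl, hu, ht⟩ := ih a' t h2
      exact ⟨p :: P₁, q₁, q₂, P₂, by simp, by simp [← hu], ht⟩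
    · match c', h2 with
      | [], h2 =>
        obtain ⟨P₁, q₁, q₂, P₂, rfl, hu, ht⟩ := ih [] t h2.symm
        refine ⟨(u ++ []) :: P₁, q₁, q₂, P₂, by simp, ?_, ht⟩
        simp only [List.flatten_cons, List.append_assoc, hu]; simp
      | y :: c'', h2 =>
        obtain ⟨rfl, rfl⟩ : x = y ∧ t = c'' ++ P'.flatten := by
          have := h2; simpa using this
        exact ⟨[], u, c'', P', by simp, by simp, rfl⟩

lemma rep_split {y w w' : List A} {n : ℕ} {c : A} (h : y ++ w = List.replicate n c ++ w')
    (hl : y.length ≤ n) :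
    y = List.replicate y.length c ∧ w = List.replicate (n - y.length) c ++ w' := by
  rcases List.append_eq_append_iff.mp h with ⟨e, he, hw⟩ | ⟨e, hy, hw'⟩
  · have hy : y = List.replicate y.length c := by
      have := congrArg (List.take y.length) he
      simpa [List.take_replicate, Nat.min_eq_left hl] using this.symm
    have helen : e.length = n - y.length := by
      have := congrArg List.length he; simp at this; omega
    have he' : e = List.replicate (n - y.length) c := by
      have := congrArg (List.drop y.length) he
      simpa [List.drop_replicate, helen] using this.symm
    exact ⟨hy, by rw [hw, he']⟩
  · have hlen : y.length = n := by
      have := congrArg List.length hy; simp at this; omega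
    have he : e = [] := by
      have := congrArg List.length hy; simp at this; exact List.eq_nil_of_length_eq_zero (by omega)
    subst he
    simp only [List.append_nil] at hy
    constructor
    · rw [hlen, hy]
    · rw [hlen]; simp [hw']

lemma rep_infix {s t : ℕ} {c : A} (h : s ≤ t) :
    List.replicate s c <:+: List.replicate t c :=
  ⟨[], List.replicate (t - s) c, by
    rw [List.nil_append, ← List.replicate_add]; congr 1; omega⟩

lemma split_sep {K : ℕ} (hK : 2 ≤ K) (a c : A) (P : List (List A)) (u v : List A)
    (hf : P.flatten = u ++ (a :: (List.replicate (3*K-2) c ++ [a])) ++ v)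
    (hp : ∀ p ∈ P, p ≠ [] ∧ p.length ≤ K)
    (hff : P.Pairwise Rel) :
    ∃ P₁ P₂, P = P₁ ++ (a :: List.replicate (K-1) c) :: List.replicate K c ::
        (List.replicate (K-1) c ++ [a]) :: P₂ ∧ P₁.flatten = u ∧ P₂.flatten = v := by
  have hf' : P.flatten = u ++ a :: (List.replicate (3*K-2) c ++ (a :: v)) := by
    simpa [List.append_assoc] using hf
  obtain ⟨P₁, x, y, P₂, rfl, hu, ht⟩ := flatten_split a P u _ hf'
  have hq := hp (x ++ a :: y) (by simp)
  have hxy : x.length + 1 + y.length ≤ K := by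
    have := hq.2; simp at this; omega
  have hyK : y.length ≤ 3*K-2 := by omega
  obtain ⟨hy, hP₂⟩ := rep_split ht hyK
  set s := y.length with hs
  set m := 3*K-2-s with hm
  have hsK : s ≤ K - 1 := by omega
  have hmK : K ≤ m := by omega
  -- P₂ nonempty
  obtain ⟨q', P₂', rfl⟩ : ∃ q' P₂', P₂ = q' :: P₂' := by
    cases P₂ with
    | nil =>
      exfalso
      have := congrArg List.length hP₂
      simp at this
    | cons q' P₂' => exact ⟨q', P₂', rfl⟩
  have hflat : q' ++ P₂'.flatten = List.replicate m c ++ (a :: v) := by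
    simpa using hP₂
  have hq'p := hp q' (by simp)
  have hq'K : q'.length ≤ m := le_trans hq'p.2 hmK
  obtain ⟨hq'rep, hP₂'⟩ := rep_split hflat hq'K
  set t := q'.length with hts
  have ht1 : 1 ≤ t := List.length_pos_iff.mpr hq'p.1
  -- P₂' nonempty
  obtain ⟨q'', P₂'', rfl⟩ : ∃ q'' P₂'', P₂' = q'' :: P₂'' := by
    cases P₂' with
    | nil =>
      exfalso
      have := congrArg List.length hP₂'
      simp at this
    | cons q'' P₂'' => exact ⟨q'', P₂'', rfl⟩
  have hflat2 : q'' ++ P₂''.flatten = List.replicate (m - t) c ++ (a :: v) := by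
    simpa using hP₂'
  -- q'' cannot be a pure replicate of c, by factor-freeness with q'
  have hrel : Rel q' q'' := by
    have h1 : List.Pairwise Rel ((x ++ a :: y) :: q' :: q'' :: P₂'') :=
      (List.pairwise_append.mp hff).2.1
    have h2 : List.Pairwise Rel (q' :: q'' :: P₂'') := (List.pairwise_cons.mp h1).2
    exact (List.pairwise_cons.mp h2).1 q'' (by simp)
  have contra : ∀ n, q'' = List.replicate n c → False := by
    intro n hn
    rcases Nat.le_total t n with h | h
    · exact hrel.1 (by rw [hq'rep, hn]; exact rep_infix h)
    · exact hrel.2 (by rw [hq'rep, hn]; exact rep_infix h)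
  rcases List.append_eq_append_iff.mp hflat2 with ⟨e, he, hw⟩ | ⟨e, hq'', hev⟩
  · -- q'' is a prefix of the replicate: pure replicate, contradiction
    exfalso
    refine contra q''.length ?_
    have := congrArg (List.take q''.length) he
    have hlen : q''.length ≤ m - t := by
      have := congrArg List.length he; simp at this; omega
    simpa [List.take_replicate, Nat.min_eq_left hlen] using this.symm
  · match e, hev with
    | [], hev =>
      exfalso; exact contra (m - t) (by simpa using hq'')
    | a' :: z, hev =>
      obtain ⟨rfl, hv⟩ : a = a' ∧ v = z ++ P₂''.flatten := by simpa using hev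
      have hq''p := hp q'' (by simp)
      have hq''len : (m - t) + 1 + z.length ≤ K := by
        have := hq''p.2
        rw [hq''] at this; simp at this; omega
      -- all the length bookkeeping
      have hx0 : x.length = 0 := by omega
      have hz0 : z.length = 0 := by omega
      have hsK1 : s = K - 1 := by omega
      have htK : t = K := by omega
      have hmt : m - t = K - 1 := by omega
      obtain rfl : x = [] := List.eq_nil_of_length_eq_zero hx0
      obtain rfl : z = [] := List.eq_nil_of_length_eq_zero hz0
      refine ⟨P₁, P₂'', ?_, by simpa using hu, by simp [hv]⟩
      have hy' : y = List.replicate (K-1) c := by rw [hy, hsK1]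
      have hq'' : q'' = List.replicate (K-1) c ++ [a] := by rw [hq'', hmt]
      have hq' : q' = List.replicate K c := by rw [hq'rep, htK]
      rw [hy', hq', hq'']
      simp



lemma glue_nil (d : ℕ → List A) (k : ℕ) : glue d k ([] : List (List A)) = [] := rfl
lemma glue_single (d : ℕ → List A) (k : ℕ) (w : List A) : glue d k [w] = w := rfl
lemma glue_cons₂ (d : ℕ → List A) (k : ℕ) (w w' : List A) (ws : List (List A)) :
    glue d k (w :: w' :: ws) = w ++ d k ++ glue d (k+1) (w' :: ws) := rfl

lemma fwd {K : ℕ} (hK : 2 ≤ K) (a : A) (g : ℕ → A) :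
    ∀ (ws : List (List A)) (k : ℕ) (P : List (List A)),
    P.flatten = glue (fun k => [a] ++ List.replicate (3*K-2) (g k) ++ [a]) k ws →
    (∀ p ∈ P, p ≠ [] ∧ p.length ≤ K) → P.Pairwise Rel →
    ∃ Ps, List.Forall₂ (IsPartition K) ws Ps ∧ Ps.flatten.Sublist P := by
  intro ws
  induction ws with
  | nil =>
    intro k P hf hp _
    exact ⟨[], List.Forall₂.nil, by simp⟩
  | cons w ws ih =>
    intro k P hf hp hff
    cases ws with
    | nil =>
      refine ⟨[P], List.Forall₂.cons ⟨?_, hp⟩ List.Forall₂.nil, by simp⟩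
      simpa [glue_single] using hf
    | cons w' ws' =>
      rw [glue_cons₂] at hf
      have hf' : P.flatten = w ++ (a :: (List.replicate (3*K-2) (g k) ++ [a])) ++
          glue (fun k => [a] ++ List.replicate (3*K-2) (g k) ++ [a]) (k+1) (w' :: ws') := by
        simpa [List.append_assoc] using hf
      obtain ⟨P₁, P₂, rfl, hu, hv⟩ := split_sep hK a (g k) P w _ hf' hp hff
      have hP₂sub : P₂.Sublist (P₁ ++ (a :: List.replicate (K-1) (g k)) ::
          List.replicate K (g k) :: (List.replicate (K-1) (g k) ++ [a]) :: P₂) := by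
        refine List.Sublist.trans ?_ (List.sublist_append_right P₁ _)
        exact (List.sublist_cons_self _ _).trans
          ((List.sublist_cons_self _ _).trans (List.sublist_cons_self _ _))
      obtain ⟨Ps', hF, hsub⟩ := ih (k+1) P₂ hv
        (fun p hp' => hp p (hP₂sub.mem hp')) (hff.sublist hP₂sub)
      refine ⟨P₁ :: Ps', List.Forall₂.cons ⟨hu, fun p hp' => hp p ?_⟩ hF, ?_⟩
      · exact (List.sublist_append_left P₁ _).mem hp'
      · simp only [List.flatten_cons]
        refine List.Sublist.append_left ?_ P₁
        exact hsub.trans ((List.sublist_cons_self _ _).trans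
          ((List.sublist_cons_self _ _).trans (List.sublist_cons_self _ _)))

/-! ### Backward direction -/

def sepP (K : ℕ) (a c : A) : List (List A) :=
  [a :: List.replicate (K-1) c, List.replicate K c, List.replicate (K-1) c ++ [a]]

def build (K : ℕ) (a : A) (g : ℕ → A) : ℕ → List (List (List A)) → List (List A)
  | _, [] => []
  | _, [Q] => Q
  | k, Q :: Ps => Q ++ sepP K a (g k) ++ build K a g (k+1) Ps

lemma build_nil (K : ℕ) (a : A) (g : ℕ → A) (k : ℕ) : build K a g k [] = [] := rfl
lemma build_single (K : ℕ) (a : A) (g : ℕ → A) (k : ℕ) (Q : List (List A)) :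
    build K a g k [Q] = Q := rfl
lemma build_cons₂ (K : ℕ) (a : A) (g : ℕ → A) (k : ℕ) (Q Q' : List (List A))
    (Ps : List (List (List A))) :
    build K a g k (Q :: Q' :: Ps) = Q ++ sepP K a (g k) ++ build K a g (k+1) (Q' :: Ps) := rfl

lemma sepP_flatten {K : ℕ} (hK : 2 ≤ K) (a c : A) :
    (sepP K a c).flatten = a :: (List.replicate (3*K-2) c ++ [a]) := by
  simp only [sepP, List.flatten_cons, List.flatten_nil, List.append_nil, List.cons_append]
  rw [← List.append_assoc, ← List.replicate_add, ← List.append_assoc, ← List.replicate_add]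
  congr 3
  omega

lemma mem_sepP {K : ℕ} (hK : 2 ≤ K) {a c : A} {p : List A} (hp : p ∈ sepP K a c) :
    p ≠ [] ∧ p.length = K ∧ c ∈ p ∧ ∀ x ∈ p, x = a ∨ x = c := by
  have hK1 : K - 1 ≠ 0 := by omega
  have hK0 : K ≠ 0 := by omega
  simp only [sepP, List.mem_cons, List.mem_singleton, List.not_mem_nil] at hp
  rcases hp with rfl | rfl | (rfl | h)
  case inr.inr.inr => exact absurd h not_false
  · refine ⟨by simp, by simp; omega, List.mem_cons_of_mem _ (by simp [List.mem_replicate, hK1]), ?_⟩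
    intro x hx
    rcases List.mem_cons.mp hx with rfl | hx
    · exact Or.inl rfl
    · exact Or.inr (List.eq_of_mem_replicate hx)
  · refine ⟨by simp [hK0], by simp, by simp [List.mem_replicate, hK0], ?_⟩
    intro x hx
    exact Or.inr (List.eq_of_mem_replicate hx)
  · refine ⟨by simp, by simp; omega, List.mem_append_left _ (by simp [List.mem_replicate, hK1]), ?_⟩
    intro x hx
    rcases List.mem_append.mp hx with hx | hx
    · exact Or.inr (List.eq_of_mem_replicate hx)
    · exact Or.inl (by simpa using hx)

lemma forall₂_exists_left {X Y : Type*} {R : X → Y → Prop} :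
    ∀ {l₁ : List X} {l₂ : List Y}, List.Forall₂ R l₁ l₂ → ∀ y ∈ l₂, ∃ x ∈ l₁, R x y := by
  intro l₁ l₂ h
  induction h with
  | nil => simp
  | cons h _ ih =>
    intro y hy
    rcases List.mem_cons.mp hy with rfl | hy
    · exact ⟨_, by simp, h⟩
    · obtain ⟨x, hx, hr⟩ := ih y hy
      exact ⟨x, List.mem_cons_of_mem _ hx, hr⟩

lemma not_infix_of_mem {p q : List A} (x : A) (hx : x ∈ p) (hq : x ∉ q) : ¬ p <:+: q :=
  fun h => hq (h.subset hx)

lemma sep_word {K : ℕ} (hK : 2 ≤ K) {S : Set A} {a c : A} (ha : a ∉ S) (hc : c ∉ S)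
    {p q : List A} (hp : p ∈ sepP K a c) (hq : q ≠ []) (hqS : ∀ x ∈ q, x ∈ S) :
    Rel p q := by
  obtain ⟨-, -, hcp, hlet⟩ := mem_sepP hK hp
  constructor
  · refine not_infix_of_mem c hcp fun hcq => hc (hqS c hcq)
  · intro h
    obtain ⟨x, hx⟩ := List.exists_mem_of_ne_nil q hq
    rcases hlet x (h.subset hx) with rfl | rfl
    · exact ha (hqS x hx)
    · exact hc (hqS x hx)

lemma sep_sep {K : ℕ} (hK : 2 ≤ K) {a c c' : A} (hca : c ≠ a) (hc'a : c' ≠ a)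
    (hcc' : c ≠ c') {p q : List A} (hp : p ∈ sepP K a c) (hq : q ∈ sepP K a c') :
    Rel p q := by
  obtain ⟨-, -, hcp, hletp⟩ := mem_sepP hK hp
  obtain ⟨-, -, hcq, hletq⟩ := mem_sepP hK hq
  constructor
  · refine not_infix_of_mem c hcp fun hcq' => ?_
    rcases hletq c hcq' with h | h
    · exact hca h
    · exact hcc' h
  · refine not_infix_of_mem c' hcq fun hc'p => ?_
    rcases hletp c' hc'p with h | h
    · exact hc'a h
    · exact hcc' h.symm

lemma sep_pairwise {K : ℕ} (hK : 2 ≤ K) {a c : A} (hca : c ≠ a) :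
    (sepP K a c).Pairwise Rel := by
  obtain ⟨j, hj⟩ : ∃ j, K - 1 = j + 1 := ⟨K - 2, by omega⟩
  have hA : a :: List.replicate (K-1) c = a :: c :: List.replicate j c := by
    rw [hj, List.replicate_succ]
  have hB : List.replicate K c = c :: List.replicate (K-1) c := by
    conv_lhs => rw [show K = (K-1) + 1 by omega, List.replicate_succ]
  have hC : List.replicate (K-1) c ++ [a] = c :: (List.replicate j c ++ [a]) := by
    rw [hj, List.replicate_succ]; simp
  have lenA : (a :: List.replicate (K-1) c).length = K := by simp; omega
  have lenB : (List.replicate K c : List A).length = K := by simp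
  have lenC : (List.replicate (K-1) c ++ [a]).length = K := by simp; omega
  have eqlen : ∀ {p q : List A}, p.length = K → q.length = K → p <:+: q → p = q :=
    fun h1 h2 h => h.sublist.eq_of_length (h1.trans h2.symm)
  have hanB : a ∉ List.replicate K c := fun h => hca (List.eq_of_mem_replicate h).symm
  refine List.pairwise_cons.mpr ⟨?_, List.pairwise_cons.mpr ⟨?_, List.pairwise_singleton _ _⟩⟩
  · intro q hq
    simp only [sepP, List.mem_cons, List.mem_singleton, List.not_mem_nil, or_false] at hq
    rcases hq with rfl | rfl
    · constructor
      · exact not_infix_of_mem a (by simp) hanB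
      · intro h
        have := eqlen lenB lenA h
        rw [hA, hB] at this
        exact hca (by injection this)
    · constructor
      · intro h
        have := eqlen lenA lenC h
        rw [hA, hC] at this
        have h2 : a = c := by injection this
        exact hca h2.symm
      · intro h
        have := eqlen lenC lenA h
        rw [hA, hC] at this
        exact hca (by injection this)
  · intro q hq
    simp only [List.mem_singleton] at hq
    subst hq
    constructor
    · intro h
      have := eqlen lenB lenC h
      have : a ∈ List.replicate K c := by rw [this]; simp
      exact hanB this
    · exact not_infix_of_mem a (by simp) hanB

lemma mem_build {K : ℕ} {a : A} {g : ℕ → A} :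
    ∀ (Ps : List (List (List A))) (k : ℕ) (p : List A), p ∈ build K a g k Ps →
    (∃ Q ∈ Ps, p ∈ Q) ∨ ∃ j, k ≤ j ∧ j + 2 ≤ k + Ps.length ∧ p ∈ sepP K a (g j) := by
  intro Ps
  induction Ps with
  | nil => intro k p h; rw [build_nil] at h; exact absurd h List.not_mem_nil
  | cons Q Ps ih =>
    intro k p h
    cases Ps with
    | nil =>
      rw [build_single] at h
      exact Or.inl ⟨Q, by simp, h⟩
    | cons Q' Ps' =>
      rw [build_cons₂] at h
      rcases List.mem_append.mp h with h | h
      · rcases List.mem_append.mp h with h | h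
        · exact Or.inl ⟨Q, by simp, h⟩
        · exact Or.inr ⟨k, le_refl k, by simp, h⟩
      · rcases ih (k+1) p h with ⟨Q'', hQ'', hp⟩ | ⟨j, hj1, hj2, hp⟩
        · exact Or.inl ⟨Q'', List.mem_cons_of_mem _ hQ'', hp⟩
        · refine Or.inr ⟨j, by omega, ?_, hp⟩
          simp at hj2 ⊢
          omega

lemma build_flatten {K : ℕ} (hK : 2 ≤ K) (a : A) (g : ℕ → A) :
    ∀ {ws : List (List A)} {Ps : List (List (List A))},
    List.Forall₂ (fun (w : List A) Q => List.flatten Q = w) ws Ps → ∀ k,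
    (build K a g k Ps).flatten =
      glue (fun k => [a] ++ List.replicate (3*K-2) (g k) ++ [a]) k ws := by
  intro ws Ps h
  induction h with
  | nil => intro k; simp [build_nil, glue_nil]
  | @cons w Q ws' Ps' hwQ htail ih =>
    intro k
    cases htail with
    | nil => simpa [build_single, glue_single] using hwQ
    | @cons w' Q' ws'' Ps'' h1 h2 =>
      rw [build_cons₂, glue_cons₂]
      simp only [List.flatten_append]
      rw [ih (k+1), hwQ, sepP_flatten hK]
      simp [List.append_assoc]

lemma build_pairwise {K : ℕ} (hK : 2 ≤ K) {S : Set A} (a : A) (g : ℕ → A) (ha : a ∉ S) :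
    ∀ (Ps : List (List (List A))) (k : ℕ),
    (∀ Q ∈ Ps, ∀ p ∈ Q, p ≠ [] ∧ ∀ x ∈ p, x ∈ S) →
    (∀ j, k ≤ j → j + 2 ≤ k + Ps.length → g j ∉ S ∧ g j ≠ a) →
    (∀ i j, k ≤ i → i + 2 ≤ k + Ps.length → k ≤ j → j + 2 ≤ k + Ps.length →
      g i = g j → i = j) →
    Ps.flatten.Pairwise Rel → (build K a g k Ps).Pairwise Rel := by
  intro Ps
  induction Ps with
  | nil => intro k _ _ _ _; simp [build_nil]
  | cons Q Ps ih =>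
    intro k hmem hg hginj hPW
    cases Ps with
    | nil => rw [build_single]; simpa using hPW
    | cons Q' t =>
      rw [build_cons₂, List.append_assoc]
      have hflat : List.Pairwise Rel (Q ++ (Q' :: t).flatten) := by simpa using hPW
      obtain ⟨hQ, hrest, hcross⟩ := List.pairwise_append.mp hflat
      have hgk := hg k (le_refl k) (by simp only [List.length_cons]; omega)
      refine List.pairwise_append.mpr ⟨hQ, ?_, ?_⟩
      · refine List.pairwise_append.mpr ⟨sep_pairwise hK hgk.2, ?_, ?_⟩
        · refine ih (k+1) (fun Q'' h => hmem Q'' (List.mem_cons_of_mem _ h))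
            (fun j h1 h2 => hg j (by omega)
              (by simp only [List.length_cons] at h2 ⊢; omega))
            (fun i j h1 h2 h3 h4 he => hginj i j (by omega)
              (by simp only [List.length_cons] at h2 ⊢; omega) (by omega)
              (by simp only [List.length_cons] at h4 ⊢; omega) he) hrest
        · intro p hp q hq
          rcases mem_build _ _ q hq with ⟨Q'', hQ'', hqQ⟩ | ⟨j, hj1, hj2, hqs⟩
          · obtain ⟨hne, hS⟩ := hmem Q'' (List.mem_cons_of_mem _ hQ'') q hqQ
            exact sep_word hK ha hgk.1 hp hne hS
          · have hgj := hg j (by omega)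
              (by simp only [List.length_cons] at hj2 ⊢; omega)
            refine sep_sep hK hgk.2 hgj.2 ?_ hp hqs
            intro h
            have := hginj k j (le_refl k) (by simp only [List.length_cons]; omega)
              (by omega) (by simp only [List.length_cons] at hj2 ⊢; omega) h
            omega
      · intro p hp q hq
        rcases List.mem_append.mp hq with hq | hq
        · obtain ⟨hne, hS⟩ := hmem Q (by simp) p hp
          have h := sep_word hK ha hgk.1 hq hne hS
          exact ⟨h.2, h.1⟩
        · rcases mem_build _ _ q hq with ⟨Q'', hQ'', hqQ⟩ | ⟨j, hj1, hj2, hqs⟩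
          · exact hcross p hp q (List.mem_flatten.mpr ⟨Q'', hQ'', hqQ⟩)
          · obtain ⟨hne, hS⟩ := hmem Q (by simp) p hp
            have hgj := hg j (by omega)
              (by simp only [List.length_cons] at hj2 ⊢; omega)
            have h := sep_word hK ha hgj.1 hqs hne hS
            exact ⟨h.2, h.1⟩

end Stmt11

/-- `w′ = w₁ α γ₁^{3K−2} α w₂ α γ₂^{3K−2} α ⋯ α γ_{n−1}^{3K−2} α w_n` has a
factor-free `K`-partition iff the multiset `{w₁, …, w_n}` has one.  Here `S` is
the set of letters of `Σ`, and `a = α`, `g 1, …, g (n-1)` are pairwise distinct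
letters not in `S`. -/
theorem stmt_11 {γ : Type*} (K : ℕ) (hK : 2 ≤ K) (S : Set γ) (a : γ) (g : ℕ → γ)
    (ws : List (List γ)) (hws : ws ≠ []) (hne : ∀ w ∈ ws, w ≠ [])
    (hsub : ∀ w ∈ ws, ∀ x ∈ w, x ∈ S)
    (ha : a ∉ S)
    (hg : ∀ i, 1 ≤ i → i ≤ ws.length - 1 → g i ∉ S ∧ g i ≠ a)
    (hginj : ∀ i j, 1 ≤ i → i ≤ ws.length - 1 → 1 ≤ j → j ≤ ws.length - 1 →
      g i = g j → i = j) :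
    (∃ P, IsPartition K
        (glue (fun k => [a] ++ List.replicate (3 * K - 2) (g k) ++ [a]) 1 ws) P ∧
      FactorFree P) ↔
    (∃ Ps, IsMultiPartition K ws Ps ∧ FactorFree Ps.flatten) := by
  constructor
  · rintro ⟨P, ⟨hflat, hp⟩, hff⟩
    obtain ⟨Ps, hF, hsub⟩ := Stmt11.fwd hK a g ws 1 P hflat hp hff
    exact ⟨Ps, hF, List.Pairwise.sublist hsub hff⟩
  · rintro ⟨Ps, hMP, hff⟩
    have hlen : ws.length = Ps.length := hMP.length_eq
    refine ⟨Stmt11.build K a g 1 Ps, ⟨?_, ?_⟩, ?_⟩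
    · exact Stmt11.build_flatten hK a g (List.Forall₂.imp (fun {w Q} h => h.1) hMP) 1
    · intro p hp
      rcases Stmt11.mem_build Ps 1 p hp with ⟨Q, hQ, hpQ⟩ | ⟨j, hj1, hj2, hps⟩
      · obtain ⟨w, hw, hPart⟩ := Stmt11.forall₂_exists_left hMP Q hQ
        exact hPart.2 p hpQ
      · obtain ⟨h1, h2, _, _⟩ := Stmt11.mem_sepP hK hps
        exact ⟨h1, le_of_eq h2⟩
    · refine Stmt11.build_pairwise hK a g ha Ps 1 ?_ ?_ ?_ hff
      · intro Q hQ p hpQ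
        obtain ⟨w, hw, hPart⟩ := Stmt11.forall₂_exists_left hMP Q hQ
        refine ⟨(hPart.2 p hpQ).1, fun x hx => hsub w hw x ?_⟩
        have hxQf : x ∈ Q.flatten := List.mem_flatten.mpr ⟨p, hpQ, hx⟩
        rw [hPart.1] at hxQf
        exact hxQf
      · intro j h1 h2
        exact hg j h1 (by omega)
      · intro i j h1 h2 h3 h4 he
        exact hginj i j h1 (by omega) h3 (by omega) he
end

section
/- Let K ≥ 4 and for 0 ≤ i ≤ K−1 let d_i = 1^i 0 1^{K−1−i} (a binary string of length K). Let 2 ≤ N ≤ K/2, let u₁,…,u_N be arbitrary binary strings, and let w = u₁ d₀ 1^K d₀^R u₂ d₁ d₁^R u₃ d₂ d₂^R ⋯ u_{N−1} d_{N−2} d_{N−2}^R u_N, where s^R denotes the reversal of s. Then any factor-free K-partition of w selects the string 1^K as well as the strings d_i and d_i^R for every i = 0,…,N−2 (each occurring delimiter is selected as a whole). -/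
/-- `dd K i = 1^i 0 1^{K-1-i}` (a binary string of length `K`). -/
def dd (K i : ℕ) : List Bool :=
  List.replicate i true ++ [false] ++ List.replicate (K - 1 - i) true

namespace Stmt13Aux

open List

lemma dd_eq (K i : ℕ) :
    dd K i = replicate i true ++ false :: replicate (K - 1 - i) true := by
  simp [dd]

lemma dd_rev (K i : ℕ) :
    (dd K i).reverse = replicate (K - 1 - i) true ++ false :: replicate i true := by
  simp [dd]

lemma rep_prefix {a b : ℕ} {x : Bool} (h : a ≤ b) :
    replicate a x <+: replicate b x :=
  ⟨replicate (b - a) x, by rw [← replicate_add]; congr 1; omega⟩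

lemma infix_rep {l : List Bool} {n : ℕ} {x : Bool} (h : l <:+: replicate n x) :
    l = replicate l.length x :=
  eq_replicate_length.mpr fun _ hb => eq_of_mem_replicate (h.subset hb)

lemma prefix_rep_append {l r : List Bool} {n : ℕ} {x : Bool}
    (h : l <+: replicate n x ++ r) (hl : l.length ≤ n) :
    l = replicate l.length x :=
  infix_rep (IsPrefix.isInfix
    (prefix_of_prefix_length_le h (prefix_append _ _) (by simpa using hl)))

lemma suffix_append_rep {l r : List Bool} {n : ℕ} {x : Bool}
    (h : l <:+ r ++ replicate n x) (hl : l.length ≤ n) :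
    l = replicate l.length x :=
  infix_rep (IsSuffix.isInfix
    (suffix_of_suffix_length_le h (suffix_append _ _) (by simpa using hl)))

/-- Splitting a flattened list at a marked occurrence of a letter. -/
lemma split_at {α : Type*} {a : α} (P : List (List α)) :
    ∀ (A B : List α), P.flatten = A ++ a :: B →
    ∃ P₁ p₁ p₂ P₂, P = P₁ ++ (p₁ ++ a :: p₂) :: P₂ ∧
      P₁.flatten ++ p₁ = A ∧ p₂ ++ P₂.flatten = B := by
  induction P with
  | nil => intro A B h; exact absurd h.symm (by simp)
  | cons p P ih =>
    intro A B h
    rw [flatten_cons] at h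
    by_cases hle : p.length ≤ A.length
    · have hpA : p <+: A :=
        prefix_of_prefix_length_le ⟨P.flatten, h⟩ ⟨a :: B, rfl⟩ hle
      obtain ⟨A₂, rfl⟩ := hpA
      rw [append_assoc] at h
      obtain ⟨P₁, p₁, p₂, P₂, rfl, h1, h2⟩ := ih A₂ B (append_cancel_left h)
      exact ⟨p :: P₁, p₁, p₂, P₂, by simp, by simp [← h1], h2⟩
    · push_neg at hle
      have hAp : A <+: p :=
        prefix_of_prefix_length_le ⟨a :: B, h.symm⟩ (prefix_append _ _) (le_of_lt hle)
      obtain ⟨r, rfl⟩ := hAp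
      rcases r with _ | ⟨x, r'⟩
      · simp at hle
      · rw [append_assoc] at h
        have h' : x :: (r' ++ P.flatten) = a :: B := by
          have := append_cancel_left h
          simpa using this
        obtain ⟨rfl, hB⟩ : x = a ∧ r' ++ P.flatten = B := by
          constructor
          · exact (List.cons.injEq _ _ _ _ ▸ h').1
          · exact (List.cons.injEq _ _ _ _ ▸ h').2
        exact ⟨[], A, r', P, by simp, by simp, hB⟩

lemma ff_nodup {α : Type*} {P : List (List α)} (h : FactorFree P) : P.Nodup := by
  have h' : P.Pairwise fun a b => ¬ a <:+: b ∧ ¬ b <:+: a := h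
  refine h'.imp ?_
  intro a b hab heq
  subst heq
  exact hab.1 (List.infix_refl _)

lemma ff_symm {α : Type*} :
    Symmetric (fun (a b : List α) => ¬ a <:+: b ∧ ¬ b <:+: a) :=
  fun _ _ h => ⟨h.2, h.1⟩

lemma key {α : Type*} {E R : List (List α)} (hff : FactorFree (E ++ R))
    {x y : List α} (hx : x ∈ R) (hy : y ∈ E) (hxy : x <:+: y) : False := by
  by_cases h : x = y
  · subst h
    have hnd := ff_nodup hff
    rw [nodup_append] at hnd
    exact hnd.2.2 _ hy _ hx rfl
  · haveI : Std.Symm (fun (a b : List α) => ¬ a <:+: b ∧ ¬ b <:+: a) := ⟨fun a b h => ff_symm h⟩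
    exact (List.Pairwise.forall (R := fun (a b : List α) => ¬ a <:+: b ∧ ¬ b <:+: a) hff
      (mem_append_right E hx) (mem_append_left R hy) h).1 hxy

/-- Decomposition of a factor-free partition along a maximal run of `true`s
delimited by two `false`s. -/
lemma run_decomp {K m : ℕ} {E R : List (List Bool)} {A B : List Bool}
    (hff : FactorFree (E ++ R))
    (hpieces : ∀ p ∈ E ++ R, p ≠ [] ∧ p.length ≤ K)
    (hm : K ≤ m + 1)
    (hflat : R.flatten = A ++ false :: (replicate m true ++ false :: B)) :
    ∃ R₁ s c₁ c₂ Q c₃ t R₂,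
      R = R₁ ++ (s ++ false :: replicate c₁ true) ::
        (Q ++ (replicate c₃ true ++ false :: t) :: R₂) ∧
      R₁.flatten ++ s = A ∧ t ++ R₂.flatten = B ∧
      c₁ + c₂ + c₃ = m ∧
      (Q = [] ∧ c₂ = 0 ∨ Q = [replicate c₂ true] ∧ 1 ≤ c₂ ∧ c₂ ≤ K) ∧
      s.length + 1 + c₁ ≤ K ∧ c₃ + 1 + t.length ≤ K := by
  obtain ⟨R₁, s, r, R₂', hR, hA, hB₁⟩ := split_at R A _ hflat
  have hpmem : (s ++ false :: r) ∈ E ++ R := by rw [hR]; simp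
  have hplen : (s ++ false :: r).length ≤ K := (hpieces _ hpmem).2
  have hrlen : r.length ≤ m := by simp at hplen; omega
  have hr : r = replicate r.length true :=
    prefix_rep_append ⟨R₂'.flatten, hB₁⟩ hrlen
  have hflat2 : R₂'.flatten = replicate (m - r.length) true ++ false :: B := by
    have hsplit : replicate m true =
        replicate r.length true ++ replicate (m - r.length) true := by
      rw [← replicate_add]; congr 1; omega
    rw [hsplit, append_assoc, ← hr] at hB₁
    exact append_cancel_left hB₁
  obtain ⟨Q, t₁, t, R₂, hR₂', hQt, hB⟩ := split_at R₂' _ _ hflat2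
  have hQf : Q.flatten = replicate Q.flatten.length true :=
    infix_rep ⟨[], t₁, by simpa using hQt⟩
  have ht₁ : t₁ = replicate t₁.length true :=
    infix_rep ⟨Q.flatten, [], by simpa using hQt⟩
  have hlen : Q.flatten.length + t₁.length = m - r.length := by
    have := congrArg List.length hQt
    simpa using this
  have hqmem : (t₁ ++ false :: t) ∈ E ++ R := by rw [hR, hR₂']; simp
  have hqlen : (t₁ ++ false :: t).length ≤ K := (hpieces _ hqmem).2
  -- Q has at most one element
  have hQcase : Q = [] ∧ Q.flatten.length = 0 ∨
      Q = [replicate Q.flatten.length true] ∧ 1 ≤ Q.flatten.length ∧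
        Q.flatten.length ≤ K := by
    rcases Q with _ | ⟨z₁, Q'⟩
    · left; simp
    · rcases Q' with _ | ⟨z₂, Q''⟩
      · right
        have hz1 : z₁ ∈ E ++ R := by rw [hR, hR₂']; simp
        have hz1ne := (hpieces _ hz1).1
        have hz1len := (hpieces _ hz1).2
        simp only [flatten_cons, flatten_nil, append_nil] at hQf ⊢
        refine ⟨by rw [← hQf], ?_, hz1len⟩
        have : z₁.length ≠ 0 := fun h => hz1ne (length_eq_zero_iff.mp h)
        omega
      · exfalso
        -- two all-true pieces, contradiction with factor-freeness
        have hsub : [z₁, z₂] <+ E ++ R := by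
          have h1 : [z₁, z₂] <+ z₁ :: z₂ :: Q'' := by simp
          have h2 : (z₁ :: z₂ :: Q'') <+ R := by
            rw [hR, hR₂']
            refine List.IsInfix.sublist ⟨R₁ ++ [s ++ false :: r],
              (t₁ ++ false :: t) :: R₂, by simp⟩
          exact h1.trans (h2.trans (List.sublist_append_right E R))
        have hp2 : List.Pairwise
            (fun a b => ¬ a <:+: b ∧ ¬ b <:+: a) [z₁, z₂] :=
          List.Pairwise.sublist hsub hff
        rw [pairwise_cons] at hp2
        have hrel := hp2.1 z₂ (by simp)
        have hz₁ : z₁ = replicate z₁.length true := by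
          refine eq_replicate_length.mpr fun b hb => ?_
          have : b ∈ (z₁ :: z₂ :: Q'').flatten := by
            rw [mem_flatten]; exact ⟨z₁, by simp, hb⟩
          rw [hQf] at this
          exact eq_of_mem_replicate this
        have hz₂ : z₂ = replicate z₂.length true := by
          refine eq_replicate_length.mpr fun b hb => ?_
          have : b ∈ (z₁ :: z₂ :: Q'').flatten := by
            rw [mem_flatten]; exact ⟨z₂, by simp, hb⟩
          rw [hQf] at this
          exact eq_of_mem_replicate this
        rcases le_total z₁.length z₂.length with hle | hle
        · exact hrel.1 (by rw [hz₁, hz₂]; exact (rep_prefix hle).isInfix)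
        · exact hrel.2 (by rw [hz₁, hz₂]; exact (rep_prefix hle).isInfix)
  refine ⟨R₁, s, r.length, Q.flatten.length, Q, t₁.length, t, R₂, ?_, hA, hB, ?_, ?_, ?_, ?_⟩
  · rw [hR, hR₂', ← hr, ← ht₁]
  · omega
  · rcases hQcase with ⟨h1, h2⟩ | h
    · exact Or.inl ⟨h1, h2⟩
    · exact Or.inr h
  · simp only [length_append, length_cons] at hplen; omega
  · simp only [length_append, length_cons] at hqlen; omega

/-- A `true`s-prefix extension inside `dd K a`. -/
lemma pref_dd {K a c : ℕ} (h : c ≤ K - 1 - a) :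
    (replicate a true ++ false :: replicate c true) <+: dd K a := by
  refine ⟨replicate (K - 1 - a - c) true, ?_⟩
  rw [dd_eq, append_assoc, cons_append, ← replicate_add]
  congr 3
  omega

lemma suff_dd {K a c : ℕ} (h : c ≤ K - 1 - a) :
    (replicate c true ++ false :: replicate a true) <:+ (dd K a).reverse := by
  refine ⟨replicate (K - 1 - a - c) true, ?_⟩
  rw [dd_rev, ← append_assoc, ← replicate_add]
  congr 2
  omega

/-- Analysis of the block `1^i 0 1^{2K-2-2i} 0 1^i` for `1 ≤ i`. -/
lemma block_step {K i : ℕ} {E R : List (List Bool)} {A' B' : List Bool}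
    (hff : FactorFree (E ++ R))
    (hpieces : ∀ p ∈ E ++ R, p ≠ [] ∧ p.length ≤ K)
    (hKi : 2 * i + 2 ≤ K) (hi : 1 ≤ i)
    (h1K : replicate K true ∈ E)
    (hprev : ∀ j < i, dd K j ∈ E ∧ (dd K j).reverse ∈ E)
    (hflat : R.flatten = (A' ++ replicate i true) ++ false ::
      (replicate (2 * K - 2 - 2 * i) true ++ false :: (replicate i true ++ B'))) :
    ∃ R₁ R₂, R = R₁ ++ dd K i :: (dd K i).reverse :: R₂ ∧ R₂.flatten = B' := by
  obtain ⟨R₁, s, c₁, c₂, Q, c₃, t, R₂, hR, hA, hB, hsum, hQ, hc₁K, hc₃K⟩ :=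
    run_decomp hff hpieces (by omega) hflat
  have hpmemR : (s ++ false :: replicate c₁ true) ∈ R := by rw [hR]; simp
  have hqmemR : (replicate c₃ true ++ false :: t) ∈ R := by rw [hR]; simp
  -- c₁ ≤ K - 1 - i
  have hc₁ : c₁ ≤ K - 1 - i := by
    by_contra hcon
    have hslen : s.length + 1 ≤ i := by omega
    have hs : s = replicate s.length true :=
      suffix_append_rep ⟨R₁.flatten, hA⟩ (by omega)
    have hdda := (hprev s.length (by omega)).1
    refine key hff hpmemR hdda ?_
    rw [hs]
    simp only [List.length_replicate]
    exact (pref_dd (K := K) (a := s.length) (c := c₁) (by omega)).isInfix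
  -- c₃ ≤ K - 1 - i
  have hc₃ : c₃ ≤ K - 1 - i := by
    by_contra hcon
    have htlen : t.length + 1 ≤ i := by omega
    have ht : t = replicate t.length true :=
      prefix_rep_append ⟨R₂.flatten, hB⟩ (by omega)
    have hdda := (hprev t.length (by omega)).2
    refine key hff hqmemR hdda ?_
    rw [ht]
    simp only [List.length_replicate]
    exact (suff_dd (K := K) (a := t.length) (c := c₃) (by omega)).isInfix
  -- Q is empty
  have hQnil : Q = [] ∧ c₂ = 0 := by
    rcases hQ with h | ⟨hQeq, h1, h2⟩
    · exact h
    · exfalso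
      have hzmemR : replicate c₂ true ∈ R := by rw [hR, hQeq]; simp
      exact key hff hzmemR h1K (rep_prefix h2).isInfix
  obtain ⟨hQe, hc₂0⟩ := hQnil
  subst hQe
  have hc₁e : c₁ = K - 1 - i := by omega
  have hc₃e : c₃ = K - 1 - i := by omega
  -- s = 1^i
  have hslen : s.length ≤ i := by omega
  have hs : s = replicate s.length true :=
    suffix_append_rep ⟨R₁.flatten, hA⟩ hslen
  have hsi : s.length = i := by
    by_contra hcon
    have hdda := (hprev s.length (by omega)).1
    refine key hff hpmemR hdda ?_
    rw [hs, hc₁e]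
    simp only [List.length_replicate]
    exact (pref_dd (K := K) (a := s.length) (c := K - 1 - i) (by omega)).isInfix
  -- t = 1^i
  have htlen : t.length ≤ i := by omega
  have ht : t = replicate t.length true :=
    prefix_rep_append ⟨R₂.flatten, hB⟩ htlen
  have hti : t.length = i := by
    by_contra hcon
    have hdda := (hprev t.length (by omega)).2
    refine key hff hqmemR hdda ?_
    rw [ht, hc₃e]
    simp only [List.length_replicate]
    exact (suff_dd (K := K) (a := t.length) (c := K - 1 - i) (by omega)).isInfix
  have hseq : s = replicate i true := by rw [hs, hsi]
  have hteq : t = replicate i true := by rw [ht, hti]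
  refine ⟨R₁, R₂, ?_, ?_⟩
  · rw [hR, hseq, hteq, hc₁e, hc₃e, dd_rev, dd_eq]
    simp
  · rw [hteq] at hB
    exact append_cancel_left hB

/-- Analysis of the initial block `0 1^{3K-2} 0`. -/
lemma block_zero {K : ℕ} {P : List (List Bool)} {A' B' : List Bool}
    (hff : FactorFree P)
    (hpieces : ∀ p ∈ P, p ≠ [] ∧ p.length ≤ K) (hK : 4 ≤ K)
    (hflat : P.flatten = A' ++ false :: (replicate (3 * K - 2) true ++ false :: B')) :
    ∃ R₁ R₂, P = R₁ ++ dd K 0 :: replicate K true :: (dd K 0).reverse :: R₂ ∧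
      R₂.flatten = B' := by
  have hff' : FactorFree ([] ++ P) := by simpa using hff
  have hpieces' : ∀ p ∈ [] ++ P, p ≠ [] ∧ p.length ≤ K := by simpa using hpieces
  obtain ⟨R₁, s, c₁, c₂, Q, c₃, t, R₂, hR, hA, hB, hsum, hQ, hc₁K, hc₃K⟩ :=
    run_decomp (m := 3 * K - 2) hff' hpieces' (by omega) hflat
  rcases hQ with ⟨hQe, hc₂0⟩ | ⟨hQeq, h1, h2⟩
  · omega
  · have hc₁e : c₁ = K - 1 := by omega
    have hc₃e : c₃ = K - 1 := by omega
    have hc₂e : c₂ = K := by omega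
    have hse : s = [] := by
      rw [← length_eq_zero_iff]; omega
    have hte : t = [] := by
      rw [← length_eq_zero_iff]; omega
    refine ⟨R₁, R₂, ?_, ?_⟩
    · rw [hR, hQeq, hse, hte, hc₁e, hc₃e, hc₂e, dd_rev, dd_eq]
      simp
    · rw [hte] at hB
      simpa using hB

/-- Main induction over the remaining blocks. -/
lemma main_ind {K : ℕ} (d : ℕ → List Bool)
    (hd : ∀ k, 2 ≤ k → d k = dd K (k - 1) ++ (dd K (k - 1)).reverse) :
    ∀ (vs : List (List Bool)) (i : ℕ) (E R : List (List Bool)) (v : List Bool),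
    1 ≤ i → 2 * i + 2 * vs.length + 2 ≤ K →
    FactorFree (E ++ R) → (∀ p ∈ E ++ R, p ≠ [] ∧ p.length ≤ K) →
    replicate K true ∈ E → (∀ j < i, dd K j ∈ E ∧ (dd K j).reverse ∈ E) →
    R.flatten = glue d (i + 1) (v :: vs) →
    ∀ j < vs.length, dd K (i + j) ∈ E ++ R ∧ (dd K (i + j)).reverse ∈ E ++ R := by
  intro vs
  induction vs with
  | nil =>
    intro i E R v _ _ _ _ _ _ _ j hj
    simp at hj
  | cons v' vs' ih =>
    intro i E R v hi hbud hff hpieces h1K hprev hflat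
    have hglue : glue d (i + 1) (v :: v' :: vs') =
        v ++ d (i + 1) ++ glue d (i + 2) (v' :: vs') := rfl
    have hdk : d (i + 1) = dd K i ++ (dd K i).reverse := by
      rw [hd (i + 1) (by omega)]
      norm_num
    have hflat' : R.flatten = (v ++ replicate i true) ++ false ::
        (replicate (2 * K - 2 - 2 * i) true ++ false ::
          (replicate i true ++ glue d (i + 2) (v' :: vs'))) := by
      have e1 : 2 * K - 2 - 2 * i = (K - 1 - i) + (K - 1 - i) := by omega
      rw [hflat, hglue, hdk, dd_rev, dd_eq, e1]
      rw [replicate_add]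
      simp only [append_assoc, cons_append]
    have hbud' : 2 * i + 2 ≤ K := by simp at hbud; omega
    obtain ⟨R₁, R₂, hR, hB⟩ :=
      block_step hff hpieces hbud' hi h1K hprev hflat'
    set E' := E ++ (R₁ ++ [dd K i, (dd K i).reverse]) with hE'
    have hEQ : E' ++ R₂ = E ++ R := by
      rw [hR, hE']; simp
    have hff' : FactorFree (E' ++ R₂) := by rw [hEQ]; exact hff
    have hpieces' : ∀ p ∈ E' ++ R₂, p ≠ [] ∧ p.length ≤ K := by
      rw [hEQ]; exact hpieces
    have h1K' : replicate K true ∈ E' := mem_append_left _ h1K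
    have hprev' : ∀ j < i + 1, dd K j ∈ E' ∧ (dd K j).reverse ∈ E' := by
      intro j hj
      rcases Nat.lt_succ_iff_lt_or_eq.mp hj with h | rfl
      · exact ⟨mem_append_left _ (hprev j h).1, mem_append_left _ (hprev j h).2⟩
      · constructor <;> (apply mem_append_right; simp)
    have hflatR₂ : R₂.flatten = glue d (i + 1 + 1) (v' :: vs') := by
      rw [hB]
    have hres := ih (i + 1) E' R₂ v' (by omega)
      (by simp at hbud ⊢; omega) hff' hpieces' h1K' hprev' hflatR₂
    intro j hj
    rcases j with _ | j'
    · constructor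
      · apply mem_append_right
        rw [hR]
        simp
      · apply mem_append_right
        rw [hR]
        simp
    · have := hres j' (by simpa using hj)
      rw [hEQ] at this
      have he : i + (j' + 1) = i + 1 + j' := by omega
      rw [he]
      exact this

end Stmt13Aux

/-- Let `K ≥ 4`, `2 ≤ N ≤ K/2`, `us = [u₁, …, u_N]` arbitrary binary strings,
and `w = u₁ d₀ 1^K d₀^R u₂ d₁ d₁^R u₃ ⋯ u_{N−1} d_{N−2} d_{N−2}^R u_N`.  Then
any factor-free `K`-partition of `w` selects `1^K` and `d_i`, `d_i^R` for every
`i = 0, …, N−2` (each occurring delimiter selected as a whole). -/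
theorem stmt_13 (K : ℕ) (hK : 4 ≤ K) (us : List (List Bool))
    (hN2 : 2 ≤ us.length) (hNK : 2 * us.length ≤ K) :
    ∀ P, IsPartition K
        (glue (fun k =>
          if k = 1 then dd K 0 ++ List.replicate K true ++ (dd K 0).reverse
          else dd K (k - 1) ++ (dd K (k - 1)).reverse) 1 us) P →
      FactorFree P →
      List.replicate K true ∈ P ∧
        ∀ i, i ≤ us.length - 2 → dd K i ∈ P ∧ (dd K i).reverse ∈ P := by
  classical
  open List Stmt13Aux in
  intro P hpart hff
  obtain ⟨hflat, hpieces⟩ := hpart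
  set d : ℕ → List Bool := fun k =>
    if k = 1 then dd K 0 ++ List.replicate K true ++ (dd K 0).reverse
    else dd K (k - 1) ++ (dd K (k - 1)).reverse with hdDef
  have hd : ∀ k, 2 ≤ k → d k = dd K (k - 1) ++ (dd K (k - 1)).reverse := by
    intro k hk
    have hdk : d k = if k = 1 then dd K 0 ++ List.replicate K true ++ (dd K 0).reverse
        else dd K (k - 1) ++ (dd K (k - 1)).reverse := rfl
    rw [hdk, if_neg (by omega)]
  rcases us with _ | ⟨u₁, us'⟩
  · simp at hN2
  rcases us' with _ | ⟨u₂, vs⟩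
  · simp at hN2
  have hlen : (u₁ :: u₂ :: vs).length = vs.length + 2 := by simp
  have hd1 : d 1 = false :: (replicate (3 * K - 2) true ++ false :: ([] : List Bool)) := by
    have hd1' : d 1 = dd K 0 ++ List.replicate K true ++ (dd K 0).reverse := rfl
    rw [hd1', dd_rev, dd_eq]
    have e1 : 3 * K - 2 = (K - 1 - 0) + (K + (K - 1 - 0)) := by omega
    rw [e1, replicate_add, replicate_add]
    simp [append_assoc]
    rw [← append_assoc, ← replicate_add, Nat.add_assoc]
  have hglue : glue d 1 (u₁ :: u₂ :: vs) = u₁ ++ d 1 ++ glue d 2 (u₂ :: vs) := rfl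
  have hflat' : P.flatten = u₁ ++ false ::
      (replicate (3 * K - 2) true ++ false :: glue d 2 (u₂ :: vs)) := by
    rw [hflat, hglue, hd1]
    simp [append_assoc]
  obtain ⟨R₁, R₂, hP, hB⟩ := block_zero hff hpieces hK hflat'
  have h1KP : replicate K true ∈ P := by rw [hP]; simp
  refine ⟨h1KP, ?_⟩
  set E : List (List Bool) := R₁ ++ [dd K 0, replicate K true, (dd K 0).reverse] with hE
  have hEP : E ++ R₂ = P := by rw [hP, hE]; simp
  have hff2 : FactorFree (E ++ R₂) := by rw [hEP]; exact hff
  have hpieces2 : ∀ p ∈ E ++ R₂, p ≠ [] ∧ p.length ≤ K := by rw [hEP]; exact hpieces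
  have h1K : replicate K true ∈ E := by rw [hE]; simp
  have hprev : ∀ j < 1, dd K j ∈ E ∧ (dd K j).reverse ∈ E := by
    intro j hj
    have : j = 0 := by omega
    subst this
    constructor <;> (rw [hE]; simp)
  have hbud : 2 * 1 + 2 * vs.length + 2 ≤ K := by
    rw [hlen] at hNK
    omega
  have hflatR₂ : R₂.flatten = glue d (1 + 1) (u₂ :: vs) := hB
  have hmain := main_ind d hd vs 1 E R₂ u₂ (le_refl 1) hbud hff2 hpieces2 h1K hprev hflatR₂
  intro i hi
  rw [hlen] at hi
  simp only [Nat.add_sub_cancel] at hi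
  rcases i with _ | j
  · constructor <;> (rw [hP]; simp)
  · have hj : j < vs.length := by omega
    have := hmain j hj
    rw [hEP] at this
    have he : 1 + j = j + 1 := by omega
    rw [he] at this
    exact this
end

section
/- Let x₁, p, r, x₂ be pairwise distinct letters and let 𝒲 be a finite multiset of strings containing the string x₁ p r x₂. Then in any prefix-free 2-partition of 𝒲, at most one of the length-1 strings p and r is a selected string in the partitions of the strings of 𝒲 other than this occurrence of x₁ p r x₂. -/
/-- A partition is prefix-free if no selected string at one occurrence is a
prefix of a selected string at another occurrence. -/
def PrefixFree {α : Type*} (P : List (List α)) : Prop :=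
  P.Pairwise fun a b => ¬ a <+: b ∧ ¬ b <+: a

lemma forall2_mid {β γ : Type*} {R : β → γ → Prop} :
    ∀ (l₁ : List β) (q₁ : List γ) (a : β) (Pf : γ) (l₂ : List β) (q₂ : List γ),
      List.Forall₂ R (l₁ ++ a :: l₂) (q₁ ++ Pf :: q₂) → q₁.length = l₁.length → R a Pf := by
  intro l₁
  induction l₁ with
  | nil =>
    intro q₁ a Pf l₂ q₂ h hl
    have : q₁ = [] := List.eq_nil_of_length_eq_zero hl
    subst this
    simp at h
    exact h.1
  | cons b l₁ ih =>
    intro q₁ a Pf l₂ q₂ h hl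
    match q₁ with
    | [] => simp at hl
    | c :: q₁ =>
      simp at h hl
      exact ih q₁ a Pf l₂ q₂ h.2 hl

lemma core {α : Type*} (x₁ p r x₂ : α) (Pf : List (List α))
    (hflat : Pf.flatten = [x₁, p, r, x₂])
    (hP : ∀ s ∈ Pf, s ≠ [] ∧ s.length ≤ 2) :
    ∃ s ∈ Pf, [p] <+: s ∨ [r] <+: s := by
  match Pf with
  | [] => simp at hflat
  | s1 :: rest =>
    obtain ⟨hn, hle⟩ := hP s1 (by simp)
    match s1, hn, hle with
    | [a], _, _ =>
      simp at hflat
      obtain ⟨ha, hrest⟩ := hflat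
      match rest, hrest with
      | [], h => simp at h
      | s2 :: rest2, h =>
        obtain ⟨hn2, _⟩ := hP s2 (by simp)
        match s2, hn2 with
        | b :: t, _ =>
          simp at h
          exact ⟨b :: t, by simp, Or.inl ⟨t, by rw [h.1]; rfl⟩⟩
    | [a, b], _, _ =>
      simp at hflat
      obtain ⟨ha, hb, hrest⟩ := hflat
      match rest, hrest with
      | [], h => simp at h
      | s2 :: rest2, h =>
        obtain ⟨hn2, _⟩ := hP s2 (by simp [h])
        match s2, hn2 with
        | c :: t, _ =>
          simp at h
          exact ⟨c :: t, by simp, Or.inr ⟨t, by rw [h.1]; rfl⟩⟩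
    | a :: b :: c :: t, _, hle => simp at hle

/-- Let `x₁, p, r, x₂` be pairwise distinct letters and let the multiset
`ws = l₁ ++ [x₁, p, r, x₂] :: l₂` contain the string `x₁ p r x₂`.  In any
prefix-free 2-partition of `ws`, at most one of the length-1 strings `[p]`
and `[r]` is selected in the partitions of the strings of `ws` other than this
occurrence of `x₁ p r x₂`. -/
theorem stmt_17 {α : Type*} (x₁ p r x₂ : α)
    (h1 : x₁ ≠ p) (h2 : x₁ ≠ r) (h3 : x₁ ≠ x₂)
    (h4 : p ≠ r) (h5 : p ≠ x₂) (h6 : r ≠ x₂)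
    (l₁ l₂ : List (List α)) :
    ∀ Ps q₁ Pf q₂, IsMultiPartition 2 (l₁ ++ [x₁, p, r, x₂] :: l₂) Ps →
      PrefixFree Ps.flatten → Ps = q₁ ++ Pf :: q₂ → q₁.length = l₁.length →
      ¬([p] ∈ (q₁ ++ q₂).flatten ∧ [r] ∈ (q₁ ++ q₂).flatten) := by
  intro Ps q₁ Pf q₂ hM hPF hPs hlen ⟨hp, hr⟩
  subst hPs
  have hPart : IsPartition 2 [x₁, p, r, x₂] Pf :=
    forall2_mid l₁ q₁ _ Pf l₂ q₂ hM hlen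
  obtain ⟨hflat, hpieces⟩ := hPart
  obtain ⟨s, hs, hpre⟩ := core x₁ p r x₂ Pf hflat hpieces
  -- decompose the prefix-free hypothesis
  have hflatten : (q₁ ++ Pf :: q₂).flatten = q₁.flatten ++ (Pf ++ q₂.flatten) := by
    simp
  rw [hflatten] at hPF
  rw [PrefixFree, List.pairwise_append] at hPF
  obtain ⟨_, hPF2, hcross⟩ := hPF
  rw [List.pairwise_append] at hPF2
  obtain ⟨_, _, hcross2⟩ := hPF2
  -- key fact: for any t in (q₁ ++ q₂).flatten, ¬ t <+: s
  have key : ∀ t ∈ (q₁ ++ q₂).flatten, ¬ t <+: s := by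
    intro t ht
    rw [List.flatten_append, List.mem_append] at ht
    cases ht with
    | inl ht => exact (hcross t ht s (List.mem_append_left _ hs)).1
    | inr ht => exact (hcross2 s hs t ht).2
  cases hpre with
  | inl h => exact key [p] hp h
  | inr h => exact key [r] hr h
end

section
/- Let φ be a 3SAT(3) instance with clauses c₁,…,c_m and variables x₁,…,x_n. Let Σ consist of pairwise distinct letters x̂_v^1, x̂_v^2, x̂_v^3, x̂_v^4 (four per variable x_v), ĉ_i^j (one per literal occurrence c_i^j), and one further letter $. Let 𝒲 be the multiset consisting of: the clause string ĉ_i^1 $ ĉ_i^2 for each two-literal clause c_i and ĉ_i^1 $ ĉ_i^2 $ ĉ_i^3 for each three-literal clause c_i; for each variable x_v, where c_i^p and c_j^q are its two positive occurrences and c_k^r its negated occurrence, the two enforcer strings x̂_v^1 ĉ_i^p ĉ_k^r x̂_v^2 and x̂_v^3 ĉ_j^q ĉ_k^r x̂_v^4; and the forbidden string $$. Then φ is satisfiable if and only if 𝒲 has a prefix-free 2-partition. -/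
/-- The alphabet: four letters `var v 0, …, var v 3` per variable
(`x̂_v^1, …, x̂_v^4`), one letter `lit i j` per literal occurrence, and one
further letter `dollar` (`$`). -/
inductive PLetter (n m : ℕ) where
  | var : Fin n → Fin 4 → PLetter n m
  | lit : Fin m → ℕ → PLetter n m
  | dollar : PLetter n m


namespace PartAux

variable {α : Type*}

lemma partNil {P : List (List α)} (h : IsPartition 2 [] P) : P = [] := by
  obtain ⟨h1, h2⟩ := h
  cases P with
  | nil => rfl
  | cons p P' =>
    exfalso
    exact (h2 p (by simp)).1 ((List.flatten_eq_nil_iff.mp h1) p (by simp))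

lemma partCases {w : List α} {P : List (List α)} (h : IsPartition 2 w P) :
    (P = [] ∧ w = []) ∨
    (∃ a P', P = [a] :: P' ∧ ∃ t, w = a :: t ∧ IsPartition 2 t P') ∨
    (∃ a b P', P = [a, b] :: P' ∧ ∃ t, w = a :: b :: t ∧ IsPartition 2 t P') := by
  obtain ⟨h1, h2⟩ := h
  cases P with
  | nil => exact Or.inl ⟨rfl, by simpa using h1.symm⟩
  | cons p P' =>
    have hp := h2 p (by simp)
    have hrest : IsPartition 2 P'.flatten P' := ⟨rfl, fun q hq => h2 q (by simp [hq])⟩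
    match p, hp with
    | [a], _ =>
      refine Or.inr (Or.inl ⟨a, P', rfl, P'.flatten, ?_, hrest⟩)
      simpa using h1.symm
    | [a, b], _ =>
      refine Or.inr (Or.inr ⟨a, b, P', rfl, P'.flatten, ?_, hrest⟩)
      simpa using h1.symm
    | [], hp => exact absurd rfl hp.1
    | a :: b :: c :: t, hp => simp at hp

lemma part1 {a : α} {P : List (List α)} (h : IsPartition 2 [a] P) : P = [[a]] := by
  rcases partCases h with ⟨_, hw⟩ | ⟨x, P', rfl, t, hw, h'⟩ | ⟨x, y, P', rfl, t, hw, h'⟩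
  · simp at hw
  · obtain ⟨rfl, ht⟩ := List.cons.injEq .. ▸ hw
    rw [partNil (ht ▸ h' : IsPartition 2 ([] : List α) P')]
  · simp at hw

lemma part2 {a b : α} {P : List (List α)} (h : IsPartition 2 [a, b] P) :
    P = [[a], [b]] ∨ P = [[a, b]] := by
  rcases partCases h with ⟨_, hw⟩ | ⟨x, P', rfl, t, hw, h'⟩ | ⟨x, y, P', rfl, t, hw, h'⟩
  · simp at hw
  · obtain ⟨rfl, ht⟩ := List.cons.injEq .. ▸ hw
    rw [part1 (ht ▸ h' : IsPartition 2 [b] P')]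
    simp
  · obtain ⟨rfl, rfl, ht⟩ : a = x ∧ b = y ∧ [] = t := by simpa using hw
    rw [partNil (ht ▸ h' : IsPartition 2 ([] : List α) P')]
    simp

lemma part3 {a b c : α} {P : List (List α)} (h : IsPartition 2 [a, b, c] P) :
    P = [[a], [b], [c]] ∨ P = [[a], [b, c]] ∨ P = [[a, b], [c]] := by
  rcases partCases h with ⟨_, hw⟩ | ⟨x, P', rfl, t, hw, h'⟩ | ⟨x, y, P', rfl, t, hw, h'⟩
  · simp at hw
  · obtain ⟨rfl, ht⟩ := List.cons.injEq .. ▸ hw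
    rcases part2 (ht ▸ h' : IsPartition 2 [b, c] P') with rfl | rfl <;> simp
  · obtain ⟨rfl, rfl, ht⟩ : a = x ∧ b = y ∧ [c] = t := by simpa using hw
    rw [part1 (ht ▸ h' : IsPartition 2 [c] P')]
    simp

lemma part4 {a b c d : α} {P : List (List α)} (h : IsPartition 2 [a, b, c, d] P) :
    P = [[a], [b], [c], [d]] ∨ P = [[a], [b], [c, d]] ∨ P = [[a], [b, c], [d]] ∨
    P = [[a, b], [c], [d]] ∨ P = [[a, b], [c, d]] := by
  rcases partCases h with ⟨_, hw⟩ | ⟨x, P', rfl, t, hw, h'⟩ | ⟨x, y, P', rfl, t, hw, h'⟩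
  · simp at hw
  · obtain ⟨rfl, ht⟩ := List.cons.injEq .. ▸ hw
    rcases part3 (ht ▸ h' : IsPartition 2 [b, c, d] P') with rfl | rfl | rfl <;> simp
  · obtain ⟨rfl, rfl, ht⟩ : a = x ∧ b = y ∧ [c, d] = t := by simpa using hw
    rcases part2 (ht ▸ h' : IsPartition 2 [c, d] P') with rfl | rfl <;> simp

lemma part5 {a b c d e : α} {P : List (List α)} (h : IsPartition 2 [a, b, c, d, e] P) :
    P = [[a], [b], [c], [d], [e]] ∨ P = [[a], [b], [c], [d, e]] ∨
    P = [[a], [b], [c, d], [e]] ∨ P = [[a], [b, c], [d], [e]] ∨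
    P = [[a], [b, c], [d, e]] ∨ P = [[a, b], [c], [d], [e]] ∨
    P = [[a, b], [c], [d, e]] ∨ P = [[a, b], [c, d], [e]] := by
  rcases partCases h with ⟨_, hw⟩ | ⟨x, P', rfl, t, hw, h'⟩ | ⟨x, y, P', rfl, t, hw, h'⟩
  · simp at hw
  · obtain ⟨rfl, ht⟩ := List.cons.injEq .. ▸ hw
    rcases part4 (ht ▸ h' : IsPartition 2 [b, c, d, e] P') with rfl | rfl | rfl | rfl | rfl <;> simp
  · obtain ⟨rfl, rfl, ht⟩ : a = x ∧ b = y ∧ [c, d, e] = t := by simpa using hw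
    rcases part3 (ht ▸ h' : IsPartition 2 [c, d, e] P') with rfl | rfl | rfl <;> simp


lemma get4 {α : Type*} {m n : ℕ} (f : Fin m → α) (g h : Fin n → α) (x : α)
    (k : ℕ) (hk : k < m + n + n + 1) :
    (List.ofFn f ++ List.ofFn g ++ List.ofFn h ++ [x])[k]'(by simp; omega) =
      if h1 : k < m then f ⟨k, h1⟩
      else if h2 : k < m + n then g ⟨k - m, by omega⟩
      else if h3 : k < m + n + n then h ⟨k - m - n, by omega⟩
      else x := by
  simp only [List.getElem_append, List.length_ofFn, List.length_append, List.getElem_ofFn]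
  split_ifs <;> first | rfl | omega | (exact congrArg _ (Fin.ext (by simp; omega))) | (simp_all; omega) | simp_all


variable {n m : ℕ}

/-- The relation of mutual non-prefix. -/
def Rel {α : Type*} (a b : List α) : Prop := ¬ a <+: b ∧ ¬ b <+: a

def stepP (sel : Fin m → ℕ) (i : Fin m) (j : ℕ) : List (PLetter n m) :=
  if j < sel i then [.lit i j, .dollar] else if j = sel i then [.lit i j] else [.dollar, .lit i j]

def cpart (clauses : Fin m → List (Fin n × Bool)) (sel : Fin m → ℕ) (i : Fin m) :
    List (List (PLetter n m)) :=
  (List.range (clauses i).length).map (stepP sel i)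

def e1p (τ : Fin n → Bool) (pos1 neg : Fin n → Fin m × ℕ) (v : Fin n) :
    List (List (PLetter n m)) :=
  if τ v then [[.var v 0, .lit (pos1 v).1 (pos1 v).2], [.lit (neg v).1 (neg v).2, .var v 1]]
  else [[.var v 0], [.lit (pos1 v).1 (pos1 v).2, .lit (neg v).1 (neg v).2], [.var v 1]]

def e2p (τ : Fin n → Bool) (pos2 neg : Fin n → Fin m × ℕ) (v : Fin n) :
    List (List (PLetter n m)) :=
  if τ v then [[.var v 2, .lit (pos2 v).1 (pos2 v).2], [.lit (neg v).1 (neg v).2, .var v 3]]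
  else [[.var v 2], [.lit (pos2 v).1 (pos2 v).2, .lit (neg v).1 (neg v).2], [.var v 3]]

variable {clauses : Fin m → List (Fin n × Bool)} {τ : Fin n → Bool} {sel : Fin m → ℕ}
  {pos1 pos2 neg : Fin n → Fin m × ℕ}

lemma rel_stepP {i i' : Fin m} {j j' : ℕ} (h : ¬(i = i' ∧ j = j')) :
    Rel (stepP sel i j) (stepP (n := n) sel i' j') := by
  unfold stepP Rel
  split_ifs <;> constructor <;> simp [List.cons_prefix_cons] <;> tauto

lemma pairwise_cpart (i : Fin m) : List.Pairwise Rel (cpart clauses sel i) := by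
  unfold cpart
  rw [List.pairwise_map]
  exact List.pairwise_lt_range.imp (fun hab => rel_stepP (by omega))

lemma cpart_isPartition (i : Fin m) (hL : (clauses i).length = 2 ∨ (clauses i).length = 3)
    (hs : sel i < (clauses i).length) :
    IsPartition 2
      (List.intersperse (PLetter.dollar : PLetter n m)
        ((List.range (clauses i).length).map fun j => PLetter.lit i j))
      (cpart clauses sel i) := by
  constructor
  · rcases hL with hL | hL <;> rw [hL] at hs ⊢ <;> unfold cpart <;> rw [hL]
    · have : sel i = 0 ∨ sel i = 1 := by omega
      rcases this with hs0 | hs0 <;>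
        simp [stepP, hs0, List.range_succ]
    · have : sel i = 0 ∨ sel i = 1 ∨ sel i = 2 := by omega
      rcases this with hs0 | hs0 | hs0 <;>
        simp [stepP, hs0, List.range_succ]
  · intro p hp
    unfold cpart at hp
    simp only [List.mem_map, List.mem_range] at hp
    obtain ⟨j, -, rfl⟩ := hp
    unfold stepP
    split_ifs <;> simp

lemma e1p_isPartition (v : Fin n) :
    IsPartition 2
      [PLetter.var v 0, PLetter.lit (pos1 v).1 (pos1 v).2,
       PLetter.lit (neg v).1 (neg v).2, PLetter.var v 1] (e1p (m := m) τ pos1 neg v) := by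
  unfold e1p
  split_ifs <;> exact ⟨rfl, by intro p hp; simp at hp; rcases hp with rfl | rfl | rfl <;> simp⟩

lemma e2p_isPartition (v : Fin n) :
    IsPartition 2
      [PLetter.var v 2, PLetter.lit (pos2 v).1 (pos2 v).2,
       PLetter.lit (neg v).1 (neg v).2, PLetter.var v 3] (e2p (m := m) τ pos2 neg v) := by
  unfold e2p
  split_ifs <;> exact ⟨rfl, by intro p hp; simp at hp; rcases hp with rfl | rfl | rfl <;> simp⟩

lemma pairwise_e1p (v : Fin n) : List.Pairwise Rel (e1p (m := m) τ pos1 neg v) := by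
  unfold e1p
  split_ifs <;> simp [Rel, List.cons_prefix_cons]

lemma pairwise_e2p (v : Fin n) : List.Pairwise Rel (e2p (m := m) τ pos2 neg v) := by
  unfold e2p
  split_ifs <;> simp [Rel, List.cons_prefix_cons]

lemma rel_c_e1 (i : Fin m) (v : Fin n)
    (h1 : τ v = true → (PLetter.lit i (sel i) : PLetter n m) ≠ .lit (neg v).1 (neg v).2)
    (h2 : τ v = false → (PLetter.lit i (sel i) : PLetter n m) ≠ .lit (pos1 v).1 (pos1 v).2) :
    ∀ x ∈ cpart clauses sel i, ∀ y ∈ e1p τ pos1 neg v, Rel x y := by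
  intro x hx y hy
  unfold cpart at hx
  simp only [List.mem_map, List.mem_range] at hx
  obtain ⟨j, -, rfl⟩ := hx
  unfold e1p at hy
  by_cases hv : τ v <;> simp [hv] at hy
  · have h1' := h1 hv
    unfold stepP
    split_ifs with hj1 hj2 <;> rcases hy with rfl | rfl <;>
      constructor <;> subst_eqs <;> simp_all [List.cons_prefix_cons]
  · have h2' := h2 (by simpa using hv)
    unfold stepP
    split_ifs with hj1 hj2 <;> rcases hy with rfl | rfl | rfl <;>
      constructor <;> subst_eqs <;> simp_all [List.cons_prefix_cons]

lemma rel_c_e2 (i : Fin m) (v : Fin n)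
    (h1 : τ v = true → (PLetter.lit i (sel i) : PLetter n m) ≠ .lit (neg v).1 (neg v).2)
    (h2 : τ v = false → (PLetter.lit i (sel i) : PLetter n m) ≠ .lit (pos2 v).1 (pos2 v).2) :
    ∀ x ∈ cpart clauses sel i, ∀ y ∈ e2p τ pos2 neg v, Rel x y := by
  intro x hx y hy
  unfold cpart at hx
  simp only [List.mem_map, List.mem_range] at hx
  obtain ⟨j, -, rfl⟩ := hx
  unfold e2p at hy
  by_cases hv : τ v <;> simp [hv] at hy
  · have h1' := h1 hv
    unfold stepP
    split_ifs with hj1 hj2 <;> rcases hy with rfl | rfl <;>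
      constructor <;> subst_eqs <;> simp_all [List.cons_prefix_cons]
  · have h2' := h2 (by simpa using hv)
    unfold stepP
    split_ifs with hj1 hj2 <;> rcases hy with rfl | rfl | rfl <;>
      constructor <;> subst_eqs <;> simp_all [List.cons_prefix_cons]

lemma rel_c_d (i : Fin m) :
    ∀ x ∈ cpart (n := n) clauses sel i, Rel x [PLetter.dollar, PLetter.dollar] := by
  intro x hx
  unfold cpart at hx
  simp only [List.mem_map, List.mem_range] at hx
  obtain ⟨j, -, rfl⟩ := hx
  unfold stepP
  split_ifs <;> constructor <;> simp [List.cons_prefix_cons]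

lemma rel_e1_e1 (v v' : Fin n) (hvv' : v ≠ v')
    (hrr' : (PLetter.lit (neg v).1 (neg v).2 : PLetter n m) ≠ .lit (neg v').1 (neg v').2) :
    ∀ x ∈ e1p τ pos1 neg v, ∀ y ∈ e1p τ pos1 neg v', Rel x y := by
  have hvv2 : ¬ v' = v := fun h => hvv' h.symm
  have hrr2 : (PLetter.lit (neg v').1 (neg v').2 : PLetter n m) ≠ .lit (neg v).1 (neg v).2 :=
    fun h => hrr' h.symm
  intro x hx y hy
  unfold e1p at hx hy
  by_cases hv : τ v <;> by_cases hv' : τ v' <;> simp [hv, hv'] at hx hy <;>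
    rcases hx with rfl | rfl | rfl <;> rcases hy with rfl | rfl | rfl <;>
      constructor <;> simp_all [List.cons_prefix_cons]

lemma rel_e2_e2 (v v' : Fin n) (hvv' : v ≠ v')
    (hrr' : (PLetter.lit (neg v).1 (neg v).2 : PLetter n m) ≠ .lit (neg v').1 (neg v').2) :
    ∀ x ∈ e2p τ pos2 neg v, ∀ y ∈ e2p τ pos2 neg v', Rel x y := by
  have hvv2 : ¬ v' = v := fun h => hvv' h.symm
  have hrr2 : (PLetter.lit (neg v').1 (neg v').2 : PLetter n m) ≠ .lit (neg v).1 (neg v).2 :=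
    fun h => hrr' h.symm
  intro x hx y hy
  unfold e2p at hx hy
  by_cases hv : τ v <;> by_cases hv' : τ v' <;> simp [hv, hv'] at hx hy <;>
    rcases hx with rfl | rfl | rfl <;> rcases hy with rfl | rfl | rfl <;>
      constructor <;> simp_all [List.cons_prefix_cons]

lemma rel_e1_e2 (v v' : Fin n)
    (hpr : ¬((PLetter.lit (pos1 v).1 (pos1 v).2 : PLetter n m) = .lit (pos2 v').1 (pos2 v').2 ∧
      (PLetter.lit (neg v).1 (neg v).2 : PLetter n m) = .lit (neg v').1 (neg v').2)) :
    ∀ x ∈ e1p τ pos1 neg v, ∀ y ∈ e2p τ pos2 neg v', Rel x y := by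
  intro x hx y hy
  unfold e1p at hx
  unfold e2p at hy
  by_cases hv : τ v <;> by_cases hv' : τ v' <;> simp [hv, hv'] at hx hy <;>
    rcases hx with rfl | rfl | rfl <;> rcases hy with rfl | rfl | rfl <;>
      constructor <;> simp_all [List.cons_prefix_cons] <;> tauto

lemma rel_e1_d (v : Fin n) :
    ∀ x ∈ e1p (m := m) τ pos1 neg v, Rel x [PLetter.dollar, PLetter.dollar] := by
  intro x hx
  unfold e1p at hx
  by_cases hv : τ v <;> simp [hv] at hx <;>
    rcases hx with rfl | rfl | rfl <;> constructor <;> simp [List.cons_prefix_cons]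

lemma rel_e2_d (v : Fin n) :
    ∀ x ∈ e2p (m := m) τ pos2 neg v, Rel x [PLetter.dollar, PLetter.dollar] := by
  intro x hx
  unfold e2p at hx
  by_cases hv : τ v <;> simp [hv] at hx <;>
    rcases hx with rfl | rfl | rfl <;> constructor <;> simp [List.cons_prefix_cons]



lemma rel_c_c {n m : ℕ} {clauses : Fin m → List (Fin n × Bool)} {sel : Fin m → ℕ}
    {i i' : Fin m} (hii' : i ≠ i') :
    ∀ x ∈ cpart (n := n) clauses sel i, ∀ y ∈ cpart clauses sel i', Rel x y := by
  intro x hx y hy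
  unfold cpart at hx hy
  simp only [List.mem_map, List.mem_range] at hx hy
  obtain ⟨j, -, rfl⟩ := hx
  obtain ⟨j', -, rfl⟩ := hy
  exact rel_stepP (fun h => hii' h.1)

def words {n m : ℕ} (clauses : Fin m → List (Fin n × Bool))
    (pos1 pos2 neg : Fin n → Fin m × ℕ) : List (List (PLetter n m)) :=
  (List.ofFn fun i : Fin m =>
      List.intersperse (PLetter.dollar : PLetter n m)
        ((List.range (clauses i).length).map fun j => PLetter.lit i j)) ++
   (List.ofFn fun v : Fin n =>
      [PLetter.var v 0, PLetter.lit (pos1 v).1 (pos1 v).2,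
       PLetter.lit (neg v).1 (neg v).2, PLetter.var v 1]) ++
   (List.ofFn fun v : Fin n =>
      [PLetter.var v 2, PLetter.lit (pos2 v).1 (pos2 v).2,
       PLetter.lit (neg v).1 (neg v).2, PLetter.var v 3]) ++
   [[PLetter.dollar, PLetter.dollar]]

theorem forward {n m : ℕ} (clauses : Fin m → List (Fin n × Bool))
    (hlen : ∀ i, (clauses i).length = 2 ∨ (clauses i).length = 3)
    (pos1 pos2 neg : Fin n → Fin m × ℕ)
    (hpos1 : ∀ v, (clauses (pos1 v).1)[(pos1 v).2]? = some (v, true))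
    (hpos2 : ∀ v, (clauses (pos2 v).1)[(pos2 v).2]? = some (v, true))
    (hneg : ∀ v, (clauses (neg v).1)[(neg v).2]? = some (v, false))
    (hdist : ∀ v, pos1 v ≠ pos2 v)
    (τ : Fin n → Bool) (hτ : ∀ i, ∃ p ∈ clauses i, τ p.1 = p.2) :
    ∃ Ps, IsMultiPartition 2 (words clauses pos1 pos2 neg) Ps ∧ PrefixFree Ps.flatten := by
  have hsel : ∀ i : Fin m, ∃ j, ∃ h : j < (clauses i).length,
      τ ((clauses i)[j]'h).1 = ((clauses i)[j]'h).2 := by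
    intro i
    obtain ⟨p, hp, ht⟩ := hτ i
    obtain ⟨j, hj, he⟩ := List.mem_iff_getElem.mp hp
    exact ⟨j, hj, by rw [he]; exact ht⟩
  choose sel hsellt hselτ using hsel
  have keygen : ∀ (i : Fin m) (v : Fin n) (b : Bool) (oc : Fin m × ℕ),
      (clauses oc.1)[oc.2]? = some (v, b) →
      (PLetter.lit i (sel i) : PLetter n m) = .lit oc.1 oc.2 → τ v = b := by
    intro i v b oc hoc h
    injection h with h1 h2
    have e1 : (clauses i)[sel i]? = some ((clauses i)[sel i]'(hsellt i)) :=
      List.getElem?_eq_getElem _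
    have e2 : (clauses i)[sel i]? = some (v, b) := by rw [h2, h1]; exact hoc
    have hg := Option.some.inj (e1.symm.trans e2)
    have hidx := hselτ i
    rw [hg] at hidx
    simpa using hidx
  have keyNegInj : ∀ v v' : Fin n,
      (PLetter.lit (neg v).1 (neg v).2 : PLetter n m) = .lit (neg v').1 (neg v').2 → v = v' := by
    intro v v' h
    injection h with h1 h2
    have e2 : (clauses (neg v).1)[(neg v).2]? = some (v', false) := by
      rw [h1, h2]; exact hneg v'
    have := (hneg v).symm.trans e2
    simp only [Option.some.injEq, Prod.mk.injEq] at this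
    exact this.1
  have keyPQ : ∀ v v' : Fin n,
      ¬((PLetter.lit (pos1 v).1 (pos1 v).2 : PLetter n m) = .lit (pos2 v').1 (pos2 v').2 ∧
        (PLetter.lit (neg v).1 (neg v).2 : PLetter n m) = .lit (neg v').1 (neg v').2) := by
    rintro v v' ⟨h1, h2⟩
    obtain rfl : v = v' := keyNegInj _ _ h2
    injection h1 with a b
    exact hdist v (Prod.ext a b)
  have hne1 : ∀ (i : Fin m) (v : Fin n),
      τ v = true → (PLetter.lit i (sel i) : PLetter n m) ≠ .lit (neg v).1 (neg v).2 :=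
    fun i v hv h => by rw [keygen i v false (neg v) (hneg v) h] at hv; cases hv
  have hne2 : ∀ (i : Fin m) (v : Fin n),
      τ v = false → (PLetter.lit i (sel i) : PLetter n m) ≠ .lit (pos1 v).1 (pos1 v).2 :=
    fun i v hv h => by rw [keygen i v true (pos1 v) (hpos1 v) h] at hv; cases hv
  have hne3 : ∀ (i : Fin m) (v : Fin n),
      τ v = false → (PLetter.lit i (sel i) : PLetter n m) ≠ .lit (pos2 v).1 (pos2 v).2 :=
    fun i v hv h => by rw [keygen i v true (pos2 v) (hpos2 v) h] at hv; cases hv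
  refine ⟨List.ofFn (cpart clauses sel) ++ List.ofFn (e1p τ pos1 neg) ++
      List.ofFn (e2p τ pos2 neg) ++ [[[(PLetter.dollar : PLetter n m), .dollar]]], ?_, ?_⟩
  · rw [IsMultiPartition, List.forall₂_iff_get]
    constructor
    · simp [words]
    · intro k h1 h2
      have hk : k < m + n + n + 1 := by simp [words] at h1; omega
      simp only [List.get_eq_getElem]
      unfold words
      rw [PartAux.get4 _ _ _ _ k hk, PartAux.get4 _ _ _ _ k hk]
      split_ifs with c1 c2 c3
      · exact cpart_isPartition _ (hlen _) (hsellt _)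
      · exact e1p_isPartition _
      · exact e2p_isPartition _
      · exact ⟨rfl, by simp⟩
  · rw [PrefixFree, List.pairwise_flatten]
    constructor
    · intro P hP
      simp only [List.mem_append, List.mem_ofFn, Set.mem_range, List.mem_singleton] at hP
      rcases hP with ((⟨i, rfl⟩ | ⟨v, rfl⟩) | ⟨v, rfl⟩) | rfl
      · exact pairwise_cpart i
      · exact pairwise_e1p v
      · exact pairwise_e2p v
      · simp
    · refine List.pairwise_append.mpr ⟨List.pairwise_append.mpr
        ⟨List.pairwise_append.mpr ⟨?_, ?_, ?_⟩, ?_, ?_⟩, ?_, ?_⟩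
      · exact List.pairwise_ofFn.mpr fun i i' hlt => rel_c_c (Fin.ne_of_lt hlt)
      · exact List.pairwise_ofFn.mpr fun v v' hlt =>
          rel_e1_e1 v v' (Fin.ne_of_lt hlt) (fun hc => (Fin.ne_of_lt hlt) (keyNegInj _ _ hc))
      · intro a ha b hb
        simp only [List.mem_ofFn, Set.mem_range] at ha hb
        obtain ⟨i, rfl⟩ := ha
        obtain ⟨v, rfl⟩ := hb
        exact rel_c_e1 i v (hne1 i v) (hne2 i v)
      · exact List.pairwise_ofFn.mpr fun v v' hlt =>
          rel_e2_e2 v v' (Fin.ne_of_lt hlt) (fun hc => (Fin.ne_of_lt hlt) (keyNegInj _ _ hc))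
      · intro a ha b hb
        simp only [List.mem_append, List.mem_ofFn, Set.mem_range] at ha hb
        obtain ⟨v', rfl⟩ := hb
        rcases ha with ⟨i, rfl⟩ | ⟨v, rfl⟩
        · exact rel_c_e2 i v' (hne1 i v') (hne3 i v')
        · exact rel_e1_e2 v v' (keyPQ v v')
      · simp
      · intro a ha b hb
        simp only [List.mem_singleton] at hb
        subst hb
        simp only [List.mem_append, List.mem_ofFn, Set.mem_range] at ha
        rcases ha with (⟨i, rfl⟩ | ⟨v, rfl⟩) | ⟨v, rfl⟩
        · intro x hx y hy
          simp only [List.mem_singleton] at hy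
          subst hy
          exact rel_c_d i x hx
        · intro x hx y hy
          simp only [List.mem_singleton] at hy
          subst hy
          exact rel_e1_d v x hx
        · intro x hx y hy
          simp only [List.mem_singleton] at hy
          subst hy
          exact rel_e2_d v x hx



theorem backward {n m : ℕ} (clauses : Fin m → List (Fin n × Bool))
    (hlen : ∀ i, (clauses i).length = 2 ∨ (clauses i).length = 3)
    (pos1 pos2 neg : Fin n → Fin m × ℕ)
    (hpos1 : ∀ v, (clauses (pos1 v).1)[(pos1 v).2]? = some (v, true))
    (hpos2 : ∀ v, (clauses (pos2 v).1)[(pos2 v).2]? = some (v, true))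
    (hneg : ∀ v, (clauses (neg v).1)[(neg v).2]? = some (v, false))
    (hocc : ∀ (v : Fin n) (b : Bool) (i : Fin m) (j : ℕ),
      (clauses i)[j]? = some (v, b) →
        (i, j) = pos1 v ∨ (i, j) = pos2 v ∨ (i, j) = neg v)
    (Ps : List (List (List (PLetter n m))))
    (hmp : IsMultiPartition 2 (words clauses pos1 pos2 neg) Ps)
    (hpf : PrefixFree Ps.flatten) :
    ∃ τ : Fin n → Bool, ∀ i, ∃ p ∈ clauses i, τ p.1 = p.2 := by
  classical
  have hmp' : List.Forall₂ (IsPartition 2) (words clauses pos1 pos2 neg) Ps := hmp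
  have hwsl : (words clauses pos1 pos2 neg).length = m + n + n + 1 := by
    simp [words]; omega
  have hPl : Ps.length = m + n + n + 1 := by rw [← hwsl, hmp'.length_eq]
  have hpart : ∀ (k : ℕ) (hk : k < m + n + n + 1),
      IsPartition 2 ((words clauses pos1 pos2 neg)[k]'(by omega)) (Ps[k]'(by omega)) :=
    fun k hk => (List.forall₂_iff_get.mp hmp').2 k (by omega) (by omega)
  have hget : ∀ (k : ℕ) (hk : k < m + n + n + 1),
      (words clauses pos1 pos2 neg)[k]'(by omega) =
      if h1 : k < m then
        List.intersperse (PLetter.dollar : PLetter n m)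
          ((List.range (clauses ⟨k, h1⟩).length).map fun j => PLetter.lit ⟨k, h1⟩ j)
      else if h2 : k < m + n then
        [PLetter.var ⟨k - m, by omega⟩ 0,
         PLetter.lit (pos1 ⟨k - m, by omega⟩).1 (pos1 ⟨k - m, by omega⟩).2,
         PLetter.lit (neg ⟨k - m, by omega⟩).1 (neg ⟨k - m, by omega⟩).2,
         PLetter.var ⟨k - m, by omega⟩ 1]
      else if h3 : k < m + n + n then
        [PLetter.var ⟨k - m - n, by omega⟩ 2,
         PLetter.lit (pos2 ⟨k - m - n, by omega⟩).1 (pos2 ⟨k - m - n, by omega⟩).2,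
         PLetter.lit (neg ⟨k - m - n, by omega⟩).1 (neg ⟨k - m - n, by omega⟩).2,
         PLetter.var ⟨k - m - n, by omega⟩ 3]
      else [PLetter.dollar, PLetter.dollar] := by
    intro k hk
    unfold words
    exact get4 _ _ _ _ k hk
  -- pairwise structure
  unfold PrefixFree at hpf
  rw [List.pairwise_flatten] at hpf
  obtain ⟨hin, hcr⟩ := hpf
  have hin' : ∀ (k : ℕ) (hk : k < m + n + n + 1), List.Pairwise Rel (Ps[k]'(by omega)) :=
    fun k hk => hin _ (List.getElem_mem _)
  have hcr' : ∀ (k1 k2 : ℕ) (h1 : k1 < m + n + n + 1) (h2 : k2 < m + n + n + 1),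
      k1 ≠ k2 → ∀ x ∈ Ps[k1]'(by omega), ∀ y ∈ Ps[k2]'(by omega), ¬ x <+: y := by
    intro k1 k2 h1 h2 hne x hx y hy
    have hg := List.pairwise_iff_getElem.mp hcr
    rcases Nat.lt_or_ge k1 k2 with h | h
    · exact (hg k1 k2 (by omega) (by omega) h x hx y hy).1
    · exact (hg k2 k1 (by omega) (by omega) (by omega) y hy x hx).2
  -- the dollar string partition
  have hDp : IsPartition 2 [(PLetter.dollar : PLetter n m), .dollar]
      (Ps[m + n + n]'(by omega)) := by
    have h := hpart (m + n + n) (by omega)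
    rwa [hget (m + n + n) (by omega), dif_neg (by omega), dif_neg (by omega),
      dif_neg (by omega)] at h
  have hD : Ps[m + n + n]'(by omega) = [[(PLetter.dollar : PLetter n m), .dollar]] := by
    rcases part2 hDp with hP | hP
    · exfalso
      have := hin' (m + n + n) (by omega)
      rw [hP] at this
      exact ((List.pairwise_cons.mp this).1 [PLetter.dollar] (by simp)).1 List.prefix_rfl
    · exact hP
  -- no singleton dollar piece anywhere else
  have hND : ∀ (k : ℕ) (hk : k < m + n + n),
      [(PLetter.dollar : PLetter n m)] ∉ Ps[k]'(by omega) := by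
    intro k hk hmem
    exact hcr' k (m + n + n) (by omega) (by omega) (by omega) _ hmem
      [(PLetter.dollar : PLetter n m), .dollar] (by rw [hD]; simp)
      (by simp [List.cons_prefix_cons])
  -- each clause partition selects a singleton literal
  have hsingle : ∀ i : Fin m, ∃ j, ∃ hj : j < (clauses i).length,
      [(PLetter.lit i j : PLetter n m)] ∈ Ps[(i : ℕ)]'(by omega) := by
    intro i
    have h := hpart i (by omega)
    rw [hget i (by omega), dif_pos i.isLt] at h
    simp only [Fin.eta] at h
    rcases hlen i with hL | hL <;> rw [hL] at h ⊢
    · rw [show List.intersperse (PLetter.dollar : PLetter n m)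
          ((List.range 2).map fun j => PLetter.lit i j) =
          [PLetter.lit i 0, .dollar, PLetter.lit i 1] by simp [List.range_succ]] at h
      rcases part3 h with hP | hP | hP
      · exact absurd (by rw [hP]; simp) (hND i (by omega))
      · exact ⟨0, by omega, by rw [hP]; simp⟩
      · exact ⟨1, by omega, by rw [hP]; simp⟩
    · rw [show List.intersperse (PLetter.dollar : PLetter n m)
          ((List.range 3).map fun j => PLetter.lit i j) =
          [PLetter.lit i 0, .dollar, PLetter.lit i 1, .dollar, PLetter.lit i 2] by
            simp [List.range_succ]] at h
      rcases part5 h with hP | hP | hP | hP | hP | hP | hP | hP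
      · exact absurd (by rw [hP]; simp) (hND i (by omega))
      · exact absurd (by rw [hP]; simp) (hND i (by omega))
      · exact absurd (by rw [hP]; simp) (hND i (by omega))
      · exact ⟨0, by omega, by rw [hP]; simp⟩
      · exact ⟨0, by omega, by rw [hP]; simp⟩
      · exact absurd (by rw [hP]; simp) (hND i (by omega))
      · exact ⟨1, by omega, by rw [hP]; simp⟩
      · exact ⟨2, by omega, by rw [hP]; simp⟩
  -- enforcer partitions
  have hE1 : ∀ v : Fin n, IsPartition 2
      [PLetter.var v 0, PLetter.lit (pos1 v).1 (pos1 v).2,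
       PLetter.lit (neg v).1 (neg v).2, PLetter.var v 1] (Ps[m + (v : ℕ)]'(by omega)) := by
    intro v
    have h := hpart (m + v) (by omega)
    rw [hget (m + v) (by omega), dif_neg (by omega), dif_pos (by omega)] at h
    have hv : (⟨m + (v : ℕ) - m, by omega⟩ : Fin n) = v := by ext; simp
    rwa [hv] at h
  have hE2 : ∀ v : Fin n, IsPartition 2
      [PLetter.var v 2, PLetter.lit (pos2 v).1 (pos2 v).2,
       PLetter.lit (neg v).1 (neg v).2, PLetter.var v 3]
      (Ps[m + n + (v : ℕ)]'(by omega)) := by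
    intro v
    have h := hpart (m + n + v) (by omega)
    rw [hget (m + n + v) (by omega), dif_neg (by omega), dif_neg (by omega),
      dif_pos (by omega)] at h
    have hv : (⟨m + n + (v : ℕ) - m - n, by omega⟩ : Fin n) = v := by ext; simp; omega
    rwa [hv] at h
  -- the assignment
  refine ⟨fun v => decide (¬ ∃ k : Fin m,
    [(PLetter.lit (neg v).1 (neg v).2 : PLetter n m)] ∈ Ps[(k : ℕ)]'(by omega)), ?_⟩
  intro i
  obtain ⟨j, hj, hmem⟩ := hsingle i
  refine ⟨(clauses i)[j]'hj, List.getElem_mem _, ?_⟩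
  rcases hp : (clauses i)[j]'hj with ⟨v, b⟩
  try rw [hp]
  have hq : (clauses i)[j]? = some (v, b) := by rw [List.getElem?_eq_getElem hj, hp]
  have hocc' := hocc v b i j hq
  cases b with
  | false =>
    have hij : (i, j) = neg v := by
      rcases hocc' with h | h | h
      · exfalso
        have h2 := hpos1 v
        rw [← h] at h2
        rw [hq] at h2
        simp at h2
      · exfalso
        have h2 := hpos2 v
        rw [← h] at h2
        rw [hq] at h2
        simp at h2
      · exact h
    obtain ⟨h1, h2⟩ := Prod.mk.injEq .. ▸ hij
    simp only [decide_eq_false_iff_not, not_not]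
    exact ⟨i, by rw [← h1, ← h2]; exact hmem⟩
  | true =>
    simp only [decide_eq_true_eq]
    rintro ⟨k, hk⟩
    have hij : (i, j) = pos1 v ∨ (i, j) = pos2 v := by
      rcases hocc' with h | h | h
      · exact Or.inl h
      · exact Or.inr h
      · exfalso
        have h2 := hneg v
        rw [← h] at h2
        rw [hq] at h2
        simp at h2
    rcases hij with hij | hij
    · obtain ⟨h1, h2⟩ := Prod.mk.injEq .. ▸ hij
      have hE := hE1 v
      rw [← h1, ← h2] at hE
      rcases part4 hE with hP | hP | hP | hP | hP
      · exact hcr' k (m + v) (by omega) (by omega) (by omega) _ hk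
          [PLetter.lit (neg v).1 (neg v).2] (by rw [hP]; simp) List.prefix_rfl
      · exact hcr' k (m + v) (by omega) (by omega) (by omega) _ hk
          [PLetter.lit (neg v).1 (neg v).2, PLetter.var v 1] (by rw [hP]; simp)
          (by simp [List.cons_prefix_cons])
      · exact hcr' i (m + v) (by omega) (by omega) (by omega) _ hmem
          [PLetter.lit i j, PLetter.lit (neg v).1 (neg v).2] (by rw [hP]; simp)
          (by simp [List.cons_prefix_cons])
      · exact hcr' k (m + v) (by omega) (by omega) (by omega) _ hk
          [PLetter.lit (neg v).1 (neg v).2] (by rw [hP]; simp) List.prefix_rfl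
      · exact hcr' k (m + v) (by omega) (by omega) (by omega) _ hk
          [PLetter.lit (neg v).1 (neg v).2, PLetter.var v 1] (by rw [hP]; simp)
          (by simp [List.cons_prefix_cons])
    · obtain ⟨h1, h2⟩ := Prod.mk.injEq .. ▸ hij
      have hE := hE2 v
      rw [← h1, ← h2] at hE
      rcases part4 hE with hP | hP | hP | hP | hP
      · exact hcr' k (m + n + v) (by omega) (by omega) (by omega) _ hk
          [PLetter.lit (neg v).1 (neg v).2] (by rw [hP]; simp) List.prefix_rfl
      · exact hcr' k (m + n + v) (by omega) (by omega) (by omega) _ hk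
          [PLetter.lit (neg v).1 (neg v).2, PLetter.var v 3] (by rw [hP]; simp)
          (by simp [List.cons_prefix_cons])
      · exact hcr' i (m + n + v) (by omega) (by omega) (by omega) _ hmem
          [PLetter.lit i j, PLetter.lit (neg v).1 (neg v).2] (by rw [hP]; simp)
          (by simp [List.cons_prefix_cons])
      · exact hcr' k (m + n + v) (by omega) (by omega) (by omega) _ hk
          [PLetter.lit (neg v).1 (neg v).2] (by rw [hP]; simp) List.prefix_rfl
      · exact hcr' k (m + n + v) (by omega) (by omega) (by omega) _ hk
          [PLetter.lit (neg v).1 (neg v).2, PLetter.var v 3] (by rw [hP]; simp)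
          (by simp [List.cons_prefix_cons])


end PartAux

/-- A 3SAT(3) instance (clauses of two or three literals; each variable occurs
twice positive, at `pos1 v` and `pos2 v`, and once negated, at `neg v`) is
satisfiable iff the multiset consisting of the clause strings
`ĉ_i^1 $ ĉ_i^2 ($ ĉ_i^3)`, the two enforcer strings
`x̂_v^1 ĉ_i^p ĉ_k^r x̂_v^2` and `x̂_v^3 ĉ_j^q ĉ_k^r x̂_v^4` per variable, and the
forbidden string `$$` has a prefix-free `2`-partition. -/
theorem stmt_18 (n m : ℕ) (clauses : Fin m → List (Fin n × Bool))
    (hlen : ∀ i, (clauses i).length = 2 ∨ (clauses i).length = 3)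
    (pos1 pos2 neg : Fin n → Fin m × ℕ)
    (hpos1 : ∀ v, (clauses (pos1 v).1)[(pos1 v).2]? = some (v, true))
    (hpos2 : ∀ v, (clauses (pos2 v).1)[(pos2 v).2]? = some (v, true))
    (hneg : ∀ v, (clauses (neg v).1)[(neg v).2]? = some (v, false))
    (hdist : ∀ v, pos1 v ≠ pos2 v)
    (hocc : ∀ (v : Fin n) (b : Bool) (i : Fin m) (j : ℕ),
      (clauses i)[j]? = some (v, b) →
        (i, j) = pos1 v ∨ (i, j) = pos2 v ∨ (i, j) = neg v) :
    (∃ τ : Fin n → Bool, ∀ i, ∃ p ∈ clauses i, τ p.1 = p.2) ↔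
    (∃ Ps, IsMultiPartition 2
      ((List.ofFn fun i : Fin m =>
          List.intersperse (PLetter.dollar : PLetter n m)
            ((List.range (clauses i).length).map fun j => PLetter.lit i j)) ++
       (List.ofFn fun v : Fin n =>
          [PLetter.var v 0, PLetter.lit (pos1 v).1 (pos1 v).2,
           PLetter.lit (neg v).1 (neg v).2, PLetter.var v 1]) ++
       (List.ofFn fun v : Fin n =>
          [PLetter.var v 2, PLetter.lit (pos2 v).1 (pos2 v).2,
           PLetter.lit (neg v).1 (neg v).2, PLetter.var v 3]) ++
       [[PLetter.dollar, PLetter.dollar]]) Ps ∧ PrefixFree Ps.flatten) := by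
  constructor
  · rintro ⟨τ, hτ⟩
    exact PartAux.forward clauses hlen pos1 pos2 neg hpos1 hpos2 hneg hdist τ hτ
  · rintro ⟨Ps, hmp, hpf⟩
    exact PartAux.backward clauses hlen pos1 pos2 neg hpos1 hpos2 hneg hocc Ps hmp hpf
end
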